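/- arXiv:1201.3704 — 10 statements merged into one kernel-verified Lean document; each statement's English description precedes it below -/
import Mathlib

section
/- Assume the Popov matrix Π = [[Q, S],[Sᵀ, R]] is positive semidefinite. If X is a symmetric positive semidefinite solution of GDARE(Σ), then ker R_X ⊆ ker S_X (equivalently S_X G_X = 0); that is, X is a solution of CGDARE(Σ). -/
open Matrix

theorem stmt_3 (n m : ℕ)
    (A : Matrix (Fin n) (Fin n) ℝ) (B : Matrix (Fin n) (Fin m) ℝ)
    (Q : Matrix (Fin n) (Fin n) ℝ) (S : Matrix (Fin n) (Fin m) ℝ)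
    (R : Matrix (Fin m) (Fin m) ℝ)
    (hQ : Qᵀ = Q) (hR : Rᵀ = R)
    (hPi : (Matrix.fromBlocks Q S Sᵀ R).PosSemidef)
    (X : Matrix (Fin n) (Fin n) ℝ) (hX : Xᵀ = X) (hXpsd : X.PosSemidef)
    (RXd : Matrix (Fin m) (Fin m) ℝ)
    (pen1 : (R + Bᵀ * X * B) * RXd * (R + Bᵀ * X * B) = R + Bᵀ * X * B)
    (pen2 : RXd * (R + Bᵀ * X * B) * RXd = RXd)
    (pen3 : ((R + Bᵀ * X * B) * RXd)ᵀ = (R + Bᵀ * X * B) * RXd)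
    (pen4 : (RXd * (R + Bᵀ * X * B))ᵀ = RXd * (R + Bᵀ * X * B))
    (hGDARE : X = Aᵀ * X * A - (Aᵀ * X * B + S) * RXd * (Aᵀ * X * B + S)ᵀ + Q) :
    (∀ v : Fin m → ℝ, (R + Bᵀ * X * B).mulVec v = 0 → (Aᵀ * X * B + S).mulVec v = 0)
    ∧ (Aᵀ * X * B + S) * (1 - RXd * (R + Bᵀ * X * B)) = 0 := by
  have key : ∀ v : Fin m → ℝ, (R + Bᵀ * X * B).mulVec v = 0 →
      (Aᵀ * X * B + S).mulVec v = 0 := by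
    intro v hv
    -- quadratic form vanishes
    have hquad : v ⬝ᵥ (R + Bᵀ * X * B) *ᵥ v = 0 := by
      rw [hv, dotProduct_zero]
    have hsplit : v ⬝ᵥ (R + Bᵀ * X * B) *ᵥ v
        = v ⬝ᵥ R *ᵥ v + (B *ᵥ v) ⬝ᵥ X *ᵥ (B *ᵥ v) := by
      rw [add_mulVec, dotProduct_add]
      congr 1
      rw [← mulVec_mulVec, ← mulVec_mulVec, dotProduct_mulVec, vecMul_transpose]
    -- the embedded vector
    set w : (Fin n) ⊕ (Fin m) → ℝ := Sum.elim 0 v with hw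
    have hPiw : w ⬝ᵥ (Matrix.fromBlocks Q S Sᵀ R) *ᵥ w = v ⬝ᵥ R *ᵥ v := by
      rw [hw, fromBlocks_mulVec]
      simp [sumElim_dotProduct_sumElim]
    have hRv : 0 ≤ v ⬝ᵥ R *ᵥ v := by
      have := hPi.dotProduct_mulVec_nonneg w
      simpa [hPiw] using this
    have hXv : 0 ≤ (B *ᵥ v) ⬝ᵥ X *ᵥ (B *ᵥ v) := by
      have := hXpsd.dotProduct_mulVec_nonneg (B *ᵥ v)
      simpa using this
    have hRv0 : v ⬝ᵥ R *ᵥ v = 0 := by nlinarith [hsplit, hquad]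
    have hXv0 : (B *ᵥ v) ⬝ᵥ X *ᵥ (B *ᵥ v) = 0 := by nlinarith [hsplit, hquad]
    -- X (Bv) = 0
    have hXBv : X *ᵥ (B *ᵥ v) = 0 := by
      have := (hXpsd.dotProduct_mulVec_zero_iff (B *ᵥ v)).mp (by simpa using hXv0)
      exact this
    -- Π w = 0, hence S v = 0
    have hPiw0 : (Matrix.fromBlocks Q S Sᵀ R) *ᵥ w = 0 := by
      apply (hPi.dotProduct_mulVec_zero_iff w).mp
      simpa [hPiw] using hRv0
    have hSv : S *ᵥ v = 0 := by
      ext i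
      have := congrFun hPiw0 (Sum.inl i)
      rw [fromBlocks_mulVec] at this
      simpa [hw] using this
    rw [add_mulVec, ← mulVec_mulVec, ← mulVec_mulVec, hXBv, mulVec_zero, hSv, add_zero]
  refine ⟨key, ?_⟩
  have hRXG : (R + Bᵀ * X * B) * (1 - RXd * (R + Bᵀ * X * B)) = 0 := by
    rw [Matrix.mul_sub, Matrix.mul_one, ← Matrix.mul_assoc, pen1, sub_self]
  ext i j
  have hcol : (R + Bᵀ * X * B) *ᵥ ((1 - RXd * (R + Bᵀ * X * B)) *ᵥ Pi.single j 1) = 0 := by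
    rw [mulVec_mulVec, hRXG, zero_mulVec]
  have := congrFun (key _ hcol) i
  rw [mulVec_mulVec] at this
  simpa using this
end

section
/- Let A, Q, X ∈ ℝ^{n×n} with Q = Qᵀ positive semidefinite and X = Xᵀ a solution of the Stein equation X = AᵀXA + Q. Then ker X is A-invariant and ker X ⊆ ker Q; that is, for every x ∈ ℝⁿ with X x = 0 one has X (A x) = 0 and Q x = 0. -/
open Matrix Polynomial
open scoped ComplexOrder

namespace SteinAux

variable {n : ℕ}

/-- complexification of a real matrix -/
noncomputable def cmap (M : Matrix (Fin n) (Fin n) ℝ) : Matrix (Fin n) (Fin n) ℂ :=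
  M.map Complex.ofRealHom

lemma cmap_mulVec (M : Matrix (Fin n) (Fin n) ℝ) (v : Fin n → ℝ) :
    (cmap M) *ᵥ (fun i => (v i : ℂ)) = fun i => ((M *ᵥ v) i : ℂ) := by
  ext i
  simp [cmap, Matrix.mulVec, dotProduct]

lemma cmap_mul (M N : Matrix (Fin n) (Fin n) ℝ) : cmap (M * N) = cmap M * cmap N := by
  ext i j
  simp [cmap, Matrix.mul_apply]

lemma cmap_add (M N : Matrix (Fin n) (Fin n) ℝ) : cmap (M + N) = cmap M + cmap N := by
  ext i j
  simp [cmap]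

lemma cmap_conjTranspose (M : Matrix (Fin n) (Fin n) ℝ) : (cmap M)ᴴ = cmap Mᵀ := by
  ext i j
  simp [cmap, Matrix.conjTranspose_apply]

lemma cmap_posSemidef {Q : Matrix (Fin n) (Fin n) ℝ} (hQ : Q.PosSemidef) :
    (cmap Q).PosSemidef := by
  obtain ⟨B, hB⟩ : ∃ B : Matrix (Fin n) (Fin n) ℝ, Q = Bᴴ * B := by
    classical
    open scoped MatrixOrder in
    obtain ⟨S, hS, -, hSS⟩ := CFC.exists_sqrt_of_isSelfAdjoint_of_quasispectrumRestricts
      (hQ.isHermitian : IsSelfAdjoint Q)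
      (QuasispectrumRestricts.nnreal_of_nonneg (Matrix.nonneg_iff_posSemidef.mpr hQ))
    have hH : Sᴴ = S := hS
    exact ⟨S, by rw [← hSS, hH]⟩
  have h : cmap Q = (cmap B)ᴴ * cmap B := by
    rw [hB, cmap_mul, cmap_conjTranspose]
    rfl
  rw [h]
  exact Matrix.posSemidef_conjTranspose_mul_self _

/-- the rational parametrization of the unit circle -/
noncomputable def circ (t : ℝ) : ℂ := (1 - t * Complex.I) / (1 + t * Complex.I)

lemma circ_denom_ne (t : ℝ) : (1 + (t : ℂ) * Complex.I) ≠ 0 := by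
  intro h
  have := congrArg Complex.re h
  simp at this

lemma circ_injective : Function.Injective circ := by
  intro s t hst
  unfold circ at hst
  rw [div_eq_div_iff (circ_denom_ne s) (circ_denom_ne t)] at hst
  have h2 : ((s : ℂ) - t) * (2 * Complex.I) = 0 := by linear_combination -hst
  rcases mul_eq_zero.mp h2 with h3 | h3
  · have : (s : ℂ) = t := by linear_combination h3
    exact_mod_cast this
  · exfalso
    have : Complex.I = 0 := by linear_combination h3 / 2
    exact Complex.I_ne_zero this

lemma circ_unit (t : ℝ) : (starRingEnd ℂ) (circ t) * circ t = 1 := by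
  rw [mul_comm, Complex.mul_conj]
  have h1 : Complex.normSq (circ t) = 1 := by
    unfold circ
    rw [Complex.normSq_div]
    have h2 : Complex.normSq (1 - (t : ℂ) * Complex.I) = 1 + t * t := by
      simp [Complex.normSq_apply]
    have h3 : Complex.normSq (1 + (t : ℂ) * Complex.I) = 1 + t * t := by
      simp [Complex.normSq_apply]
    rw [h2, h3, div_self]
    nlinarith [sq_nonneg t]
  rw [h1]
  norm_num

/-- There exists `z` on the unit circle such that `1 - z • M` and `z • 1 - N` are invertible. -/
lemma exists_good (M N : Matrix (Fin n) (Fin n) ℂ) :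
    ∃ z : ℂ, (starRingEnd ℂ) z * z = 1 ∧ IsUnit (1 - z • M) ∧
      IsUnit (z • (1 : Matrix (Fin n) (Fin n) ℂ) - N) := by
  classical
  set p1 : ℂ[X] := ((1 : Matrix (Fin n) (Fin n) ℂ[X]) - (X : ℂ[X]) • M.map C).det with hp1
  set p2 : ℂ[X] := N.charpoly with hp2
  have heval1 : ∀ z : ℂ, p1.eval z = (1 - z • M).det := by
    intro z
    have h := (Polynomial.evalRingHom z).map_det
      ((1 : Matrix (Fin n) (Fin n) ℂ[X]) - (X : ℂ[X]) • M.map C)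
    have hmap : ((1 : Matrix (Fin n) (Fin n) ℂ[X]) - (X : ℂ[X]) • M.map C).map
        (Polynomial.evalRingHom z) = 1 - z • M := by
      ext i j
      by_cases hij : i = j <;>
        · simp [Matrix.map_apply, Matrix.one_apply, Matrix.smul_apply, hij, smul_eq_mul]
          try ring
    rw [RingHom.mapMatrix_apply, hmap] at h
    simpa [hp1] using h
  have heval2 : ∀ z : ℂ, p2.eval z = (z • (1 : Matrix (Fin n) (Fin n) ℂ) - N).det := by
    intro z
    have h := (Polynomial.evalRingHom z).map_det (charmatrix N)
    have hmap : (charmatrix N).map (Polynomial.evalRingHom z) =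
        z • (1 : Matrix (Fin n) (Fin n) ℂ) - N := by
      ext i j
      by_cases hij : i = j <;>
        · simp [Matrix.map_apply, charmatrix_apply, Matrix.smul_apply, Matrix.one_apply,
            Matrix.diagonal_apply, hij, smul_eq_mul]
          try ring
    rw [RingHom.mapMatrix_apply, hmap] at h
    simpa [hp2, Matrix.charpoly] using h
  have hne1 : p1 ≠ 0 := by
    intro h
    have h0 := heval1 0
    rw [h] at h0
    simp at h0
  have hne2 : p2 ≠ 0 := N.charpoly_monic.ne_zero
  have hfin : ({z : ℂ | p1.IsRoot z} ∪ {z : ℂ | p2.IsRoot z}).Finite :=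
    (Polynomial.finite_setOf_isRoot hne1).union (Polynomial.finite_setOf_isRoot hne2)
  have hinf : (Set.range circ).Infinite :=
    Set.infinite_range_of_injective circ_injective
  obtain ⟨z, hzr, hzbad⟩ := (hinf.diff hfin).nonempty
  obtain ⟨t, rfl⟩ := hzr
  refine ⟨circ t, circ_unit t, ?_, ?_⟩
  · rw [Matrix.isUnit_iff_isUnit_det, isUnit_iff_ne_zero]
    intro h
    exact hzbad (Set.mem_union_left _ (by simp [Polynomial.IsRoot, heval1, h]))
  · rw [Matrix.isUnit_iff_isUnit_det, isUnit_iff_ne_zero]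
    intro h
    exact hzbad (Set.mem_union_right _ (by simp [Polynomial.IsRoot, heval2, h]))

/-- Key complex lemma: the kernel of `X` is `A`-invariant. -/
lemma key (A Q X : Matrix (Fin n) (Fin n) ℂ)
    (hQ : Q.PosSemidef) (hX : Xᴴ = X)
    (hStein : X = Aᴴ * X * A + Q) :
    ∀ x : Fin n → ℂ, X *ᵥ x = 0 → X *ᵥ (A *ᵥ x) = 0 := by
  classical
  obtain ⟨z, hz, hU1, hU2⟩ := exists_good A Aᴴ
  set G : Matrix (Fin n) (Fin n) ℂ := 1 - z • A with hG
  have hGdet : IsUnit G.det := (Matrix.isUnit_iff_isUnit_det _).mp hU1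
  set B : Matrix (Fin n) (Fin n) ℂ := G⁻¹ with hB
  have hGB : G * B = 1 := Matrix.mul_nonsing_inv G hGdet
  have hdet2 : IsUnit (z • (1 : Matrix (Fin n) (Fin n) ℂ) - Aᴴ).det :=
    (Matrix.isUnit_iff_isUnit_det _).mp hU2
  -- the key step: B maps ker X into ker X, and moreover X (A (B v)) = 0
  have step : ∀ v : Fin n → ℂ, X *ᵥ v = 0 →
      X *ᵥ (B *ᵥ v) = 0 ∧ X *ᵥ (A *ᵥ (B *ᵥ v)) = 0 := by
    intro v hv
    set w : Fin n → ℂ := B *ᵥ v with hw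
    have hGw : G *ᵥ w = v := by
      rw [hw, Matrix.mulVec_mulVec, hGB, Matrix.one_mulVec]
    have hAw : z • (A *ᵥ w) = w - v := by
      have h1 : (1 - z • A) *ᵥ w = v := by rw [← hG]; exact hGw
      rw [Matrix.sub_mulVec, Matrix.one_mulVec, Matrix.smul_mulVec] at h1
      rw [← h1]; abel
    set u : Fin n → ℂ := A *ᵥ w with hu
    have hvXw : star v ⬝ᵥ X *ᵥ w = 0 := by
      rw [Matrix.dotProduct_mulVec, ← hX, ← Matrix.star_mulVec, hv]
      simp
    have hQw0 : star w ⬝ᵥ Q *ᵥ w = 0 := by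
      have hQeq : Q *ᵥ w = X *ᵥ w - Aᴴ *ᵥ (X *ᵥ u) := by
        have hXeq : X *ᵥ w = Aᴴ *ᵥ (X *ᵥ u) + Q *ᵥ w := by
          conv_lhs => rw [hStein]
          rw [Matrix.add_mulVec, hu, ← Matrix.mulVec_mulVec, ← Matrix.mulVec_mulVec]
        rw [hXeq]; abel
      rw [hQeq, dotProduct_sub]
      have hterm : star w ⬝ᵥ Aᴴ *ᵥ (X *ᵥ u) = star u ⬝ᵥ X *ᵥ u := by
        rw [Matrix.dotProduct_mulVec, ← Matrix.star_mulVec, ← hu]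
      rw [hterm]
      have hzu : star (z • u) ⬝ᵥ X *ᵥ (z • u) = star u ⬝ᵥ X *ᵥ u := by
        rw [star_smul, Matrix.mulVec_smul, smul_dotProduct, dotProduct_smul,
          smul_smul]
        simp only [smul_eq_mul, Complex.star_def]
        rw [hz, one_mul]
      rw [hAw] at hzu
      have hexp : star (w - v) ⬝ᵥ X *ᵥ (w - v) = star w ⬝ᵥ X *ᵥ w := by
        simp only [star_sub, Matrix.mulVec_sub, sub_dotProduct, dotProduct_sub,
          hv, hvXw, dotProduct_zero]
        ring
      rw [hexp] at hzu
      rw [hzu]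
      ring
    have hQw : Q *ᵥ w = 0 := (hQ.dotProduct_mulVec_zero_iff w).mp hQw0
    have hXw : X *ᵥ w = Aᴴ *ᵥ (X *ᵥ u) := by
      conv_lhs => rw [hStein]
      rw [Matrix.add_mulVec, hQw, add_zero, hu, ← Matrix.mulVec_mulVec, ← Matrix.mulVec_mulVec]
    have hzXu : z • (X *ᵥ u) = X *ᵥ w := by
      rw [← Matrix.mulVec_smul, hAw, Matrix.mulVec_sub, hv, sub_zero]
    have hker : (z • (1 : Matrix (Fin n) (Fin n) ℂ) - Aᴴ) *ᵥ (X *ᵥ w) = 0 := by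
      rw [Matrix.sub_mulVec, Matrix.smul_mulVec, Matrix.one_mulVec]
      have heig : Aᴴ *ᵥ (X *ᵥ w) = z • (X *ᵥ w) := by
        calc Aᴴ *ᵥ (X *ᵥ w) = Aᴴ *ᵥ (z • (X *ᵥ u)) := by rw [hzXu]
          _ = z • (Aᴴ *ᵥ (X *ᵥ u)) := by rw [Matrix.mulVec_smul]
          _ = z • (X *ᵥ w) := by rw [← hXw]
      rw [heig, sub_self]
    have hXw0 : X *ᵥ w = 0 := by
      have h2 : ((z • (1 : Matrix (Fin n) (Fin n) ℂ) - Aᴴ)⁻¹ *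
          (z • (1 : Matrix (Fin n) (Fin n) ℂ) - Aᴴ)) *ᵥ (X *ᵥ w) = 0 := by
        rw [← Matrix.mulVec_mulVec, hker, Matrix.mulVec_zero]
      rwa [Matrix.nonsing_inv_mul _ hdet2, Matrix.one_mulVec] at h2
    refine ⟨hXw0, ?_⟩
    have hz0 : z ≠ 0 := by
      intro h; rw [h] at hz; simp at hz
    have hzero : z • (X *ᵥ u) = 0 := by rw [hzXu, hXw0]
    rcases smul_eq_zero.mp hzero with h | h
    · exact absurd h hz0
    · exact h
  -- finite-dimensionality: B restricts to a bijection of ker X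
  intro x hx
  set K : Submodule ℂ (Fin n → ℂ) := LinearMap.ker X.mulVecLin with hK
  have hrestrict : ∀ v ∈ K, B.mulVecLin v ∈ K := by
    intro v hv
    have hv' : X *ᵥ v = 0 := by simpa [hK, LinearMap.mem_ker] using hv
    have := (step v hv').1
    simpa [hK, LinearMap.mem_ker] using this
  set φ : K →ₗ[ℂ] K := (B.mulVecLin).restrict hrestrict with hφ
  have hBunit : IsUnit B := by
    rw [hB]
    exact (Matrix.isUnit_nonsing_inv_iff).mpr hU1
  have hBinj : Function.Injective B.mulVec :=
    Matrix.mulVec_injective_iff_isUnit.mpr hBunit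
  have hφinj : Function.Injective φ := by
    intro a b hab
    apply Subtype.ext
    have h1 : B *ᵥ (a : Fin n → ℂ) = B *ᵥ (b : Fin n → ℂ) := by
      have := congrArg (Subtype.val) hab
      simpa [hφ, LinearMap.restrict_apply] using this
    exact hBinj h1
  have hφsurj : Function.Surjective φ := LinearMap.injective_iff_surjective.mp hφinj
  have hxK : x ∈ K := by simpa [hK, LinearMap.mem_ker] using hx
  obtain ⟨⟨v, hvK⟩, hφv⟩ := hφsurj ⟨x, hxK⟩
  have hBv : B *ᵥ v = x := by
    have := congrArg (Subtype.val) hφv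
    simpa [hφ, LinearMap.restrict_apply] using this
  have hv' : X *ᵥ v = 0 := by simpa [hK, LinearMap.mem_ker] using hvK
  have := (step v hv').2
  rwa [hBv] at this

end SteinAux

theorem stmt_4 (n : ℕ)
    (A Q X : Matrix (Fin n) (Fin n) ℝ)
    (hQ : Q.PosSemidef) (hX : Xᵀ = X)
    (hStein : X = Aᵀ * X * A + Q) :
    ∀ x : Fin n → ℝ, X.mulVec x = 0 →
      X.mulVec (A.mulVec x) = 0 ∧ Q.mulVec x = 0 := by
  intro x hx
  have hXA : X.mulVec (A.mulVec x) = 0 := by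
    have hQc := SteinAux.cmap_posSemidef hQ
    have hXc : (SteinAux.cmap X)ᴴ = SteinAux.cmap X := by
      rw [SteinAux.cmap_conjTranspose, hX]
    have hSc : SteinAux.cmap X =
        (SteinAux.cmap A)ᴴ * SteinAux.cmap X * SteinAux.cmap A + SteinAux.cmap Q := by
      rw [SteinAux.cmap_conjTranspose, ← SteinAux.cmap_mul, ← SteinAux.cmap_mul,
        ← SteinAux.cmap_add, ← hStein]
    have hxc : SteinAux.cmap X *ᵥ (fun i => ((x i : ℂ))) = 0 := by
      rw [SteinAux.cmap_mulVec, hx]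
      ext i
      simp
    have hkey := SteinAux.key _ _ _ hQc hXc hSc (fun i => ((x i : ℂ))) hxc
    rw [SteinAux.cmap_mulVec, SteinAux.cmap_mulVec] at hkey
    ext i
    have h := congrFun hkey i
    simp only [Pi.zero_apply] at h ⊢
    exact_mod_cast h
  refine ⟨hXA, ?_⟩
  have hQeq : Q = X - Aᵀ * X * A := eq_sub_of_add_eq' hStein.symm
  rw [hQeq, Matrix.sub_mulVec, hx, ← Matrix.mulVec_mulVec, ← Matrix.mulVec_mulVec, hXA]
  simp
end

section
/- Let A, F, X ∈ ℝ^{n×n} and B ∈ ℝ^{n×m} satisfy Aᵀ X F = X and Bᵀ X F = 0. Then Bᵀ (Aᵀ)^k X = 0 for all k ≥ 0; that is, the range of X is contained in the unobservable subspace of the pair (Aᵀ, Bᵀ). -/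
open Matrix

lemma key_range {n : ℕ} (A F X : Matrix (Fin n) (Fin n) ℝ)
    (h1 : Aᵀ * X * F = X) :
    LinearMap.range (X * F).mulVecLin = LinearMap.range X.mulVecLin := by
  have hle : LinearMap.range (X * F).mulVecLin ≤ LinearMap.range X.mulVecLin := by
    rw [Matrix.mulVecLin_mul]
    exact LinearMap.range_comp_le_range _ _
  have hx : Aᵀ * (X * F) = X := by rw [← Matrix.mul_assoc, h1]
  have hrank : X.rank ≤ (X * F).rank := by
    conv_lhs => rw [← hx]
    exact Matrix.rank_mul_le_right _ _
  exact Submodule.eq_of_le_of_finrank_le hle hrank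

lemma key {n p : ℕ} (A F X : Matrix (Fin n) (Fin n) ℝ)
    (h1 : Aᵀ * X * F = X) (M : Matrix (Fin p) (Fin n) ℝ) (hM : M * X * F = 0) :
    M * X = 0 := by
  have hMXF : M * (X * F) = 0 := by rw [← Matrix.mul_assoc, hM]
  have hz : ∀ v : Fin n → ℝ, (M * X).mulVec v = 0 := by
    intro v
    have hmem : X.mulVec v ∈ LinearMap.range X.mulVecLin := ⟨v, rfl⟩
    rw [← key_range A F X h1] at hmem
    obtain ⟨w, hw⟩ := hmem
    simp only [Matrix.mulVecLin_apply] at hw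
    rw [← Matrix.mulVec_mulVec, ← hw, Matrix.mulVec_mulVec, hMXF,
      Matrix.zero_mulVec]
  ext i j
  have := congrFun (hz (Pi.single j 1)) i
  simpa [Matrix.mulVec_single] using this

theorem stmt_6 (n m : ℕ)
    (A F X : Matrix (Fin n) (Fin n) ℝ) (B : Matrix (Fin n) (Fin m) ℝ)
    (h1 : Aᵀ * X * F = X) (h2 : Bᵀ * X * F = 0) :
    ∀ k : ℕ, Bᵀ * (Aᵀ) ^ k * X = 0 := by
  intro k
  induction k with
  | zero => simpa using key A F X h1 Bᵀ h2
  | succ k ih =>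
    apply key A F X h1
    calc Bᵀ * Aᵀ ^ (k + 1) * X * F
        = Bᵀ * Aᵀ ^ k * (Aᵀ * X * F) := by
          simp only [pow_succ, Matrix.mul_assoc]
      _ = 0 := by rw [h1, ih]
end

section
/- Let C ∈ ℝ^{p×n} and D ∈ ℝ^{p×m} be such that Q = CᵀC, S = CᵀD and R = DᵀD. If X is a symmetric solution of GDARE(Σ), then ker X is an output-nulling subspace of the quadruple (A, B, C, D) and −K_X is a friend of ker X: for every x ∈ ℝⁿ with X x = 0 one has X ((A − B K_X) x) = 0 and (C − D K_X) x = 0. -/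
open Matrix

lemma pinv_symm {k : ℕ} (R Y : Matrix (Fin k) (Fin k) ℝ) (hR : Rᵀ = R)
    (p1 : R * Y * R = R) (p2 : Y * R * Y = Y)
    (p3 : (R * Y)ᵀ = R * Y) (p4 : (Y * R)ᵀ = Y * R) : Yᵀ = Y := by
  have e1 : R * Yᵀ = Y * R := by
    calc R * Yᵀ = Rᵀ * Yᵀ := by rw [hR]
    _ = (Y * R)ᵀ := by rw [transpose_mul]
    _ = Y * R := p4
  have e2 : Yᵀ * R = R * Y := by
    calc Yᵀ * R = Yᵀ * Rᵀ := by rw [hR]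
    _ = (R * Y)ᵀ := by rw [transpose_mul]
    _ = R * Y := p3
  have h : (R * Yᵀ * R)ᵀ = R := by
    rw [transpose_mul, transpose_mul, transpose_transpose, hR, ← mul_assoc, p1]
  have zp1 : R * Yᵀ * R = R := by
    rw [← transpose_transpose (R * Yᵀ * R), h, hR]
  have zp2 : Yᵀ * R * Yᵀ = Yᵀ := by
    have h2 := congrArg transpose p2
    rw [transpose_mul, transpose_mul, hR, ← mul_assoc] at h2
    exact h2
  have a1 : Y * Yᵀ * R = Y := by
    rw [mul_assoc, e2, ← mul_assoc, p2]
  have b1 : R * Y * Yᵀ = Yᵀ := by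
    rw [← e2]; exact zp2
  have c1 : Y = Y * Y * R := by
    calc Y = Y * Yᵀ * R := a1.symm
    _ = Y * Yᵀ * (R * Y * R) := by rw [p1]
    _ = (Y * Yᵀ * R) * (Y * R) := by noncomm_ring
    _ = Y * (Y * R) := by rw [a1]
    _ = Y * Y * R := by rw [← mul_assoc]
  have c2 : Yᵀ = Y * Y * R := by
    calc Yᵀ = R * Y * Yᵀ := b1.symm
    _ = (R * Yᵀ * R) * (Y * Yᵀ) := by rw [zp1, ← mul_assoc]
    _ = (R * Yᵀ) * (R * Y * Yᵀ) := by noncomm_ring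
    _ = (R * Yᵀ) * Yᵀ := by rw [b1]
    _ = (Y * R) * Yᵀ := by rw [e1]
    _ = Y * (R * Yᵀ) := by rw [mul_assoc]
    _ = Y * (Y * R) := by rw [e1]
    _ = Y * Y * R := by rw [← mul_assoc]
  rw [c2]; exact c1.symm

lemma dps_nonneg {n : ℕ} (v : Fin n → ℝ) : 0 ≤ v ⬝ᵥ v :=
  Finset.sum_nonneg fun i _ => mul_self_nonneg _

lemma stein_aux {n p : ℕ} (X F : Matrix (Fin n) (Fin n) ℝ)
    (G : Matrix (Fin p) (Fin n) ℝ) (hX : Xᵀ = X)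
    (hS : X = Fᵀ * X * F + Gᵀ * G) (x : Fin n → ℝ) (hx : X *ᵥ x = 0) :
    X *ᵥ (F *ᵥ x) = 0 ∧ G *ᵥ x = 0 := by
  classical
  have hsym : ∀ z w : Fin n → ℝ, z ⬝ᵥ (X *ᵥ w) = w ⬝ᵥ (X *ᵥ z) := by
    intro z w
    rw [Matrix.dotProduct_mulVec]
    conv_lhs => rw [← hX, Matrix.vecMul_transpose]
    rw [dotProduct_comm]
  have hbil : ∀ z w : Fin n → ℝ,
      z ⬝ᵥ (X *ᵥ w) = (F *ᵥ z) ⬝ᵥ (X *ᵥ (F *ᵥ w)) + (G *ᵥ z) ⬝ᵥ (G *ᵥ w) := by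
    intro z w
    conv_lhs => rw [hS]
    rw [Matrix.add_mulVec, dotProduct_add]
    congr 1
    · rw [← Matrix.mulVec_mulVec, ← Matrix.mulVec_mulVec, Matrix.dotProduct_mulVec,
        Matrix.vecMul_transpose]
    · rw [← Matrix.mulVec_mulVec, Matrix.dotProduct_mulVec, Matrix.vecMul_transpose]
  -- maximal negative-definite configuration
  obtain ⟨r, V, hV, hnP⟩ :
      ∃ (r : ℕ) (V : Matrix (Fin n) (Fin r) ℝ),
        (∀ c : Fin r → ℝ, c ≠ 0 → (V *ᵥ c) ⬝ᵥ (X *ᵥ (V *ᵥ c)) < 0) ∧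
        ∀ W : Matrix (Fin n) (Fin (r+1)) ℝ, ∃ c : Fin (r+1) → ℝ, c ≠ 0 ∧
          0 ≤ (W *ᵥ c) ⬝ᵥ (X *ᵥ (W *ᵥ c)) := by
    by_contra hcon
    push_neg at hcon
    have hall : ∀ r : ℕ, ∃ V : Matrix (Fin n) (Fin r) ℝ,
        ∀ c : Fin r → ℝ, c ≠ 0 → (V *ᵥ c) ⬝ᵥ (X *ᵥ (V *ᵥ c)) < 0 := by
      intro r
      induction r with
      | zero => exact ⟨0, fun c hc => absurd (Subsingleton.elim c 0) hc⟩
      | succ k ih =>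
        obtain ⟨V, hV⟩ := ih
        obtain ⟨W, hW⟩ := hcon k V hV
        exact ⟨W, fun c hc => hW c hc⟩
    obtain ⟨W, hW⟩ := hall (n+1)
    have hdep : ¬ LinearIndependent ℝ (fun j : Fin (n+1) => Wᵀ j) := by
      intro hli
      have h1 := hli.fintype_card_le_finrank
      rw [Module.finrank_fin_fun, Fintype.card_fin] at h1
      omega
    obtain ⟨g, hg0, j, hgj⟩ := Fintype.not_linearIndependent_iff.mp hdep
    have hgne : g ≠ 0 := fun h => hgj (by simp [h])
    have hWg : W *ᵥ g = 0 := by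
      funext i
      have h2 := congrFun hg0 i
      simp only [Finset.sum_apply, Pi.smul_apply, Pi.zero_apply, smul_eq_mul,
        Matrix.transpose_apply] at h2
      simpa [Matrix.mulVec, dotProduct, mul_comm] using h2
    have h3 := hW g hgne
    rw [hWg] at h3
    simp at h3
  -- quadratic Stein identity
  have hq : ∀ z : Fin n → ℝ, (F *ᵥ z) ⬝ᵥ (X *ᵥ (F *ᵥ z))
      = z ⬝ᵥ (X *ᵥ z) - (G *ᵥ z) ⬝ᵥ (G *ᵥ z) := fun z => by
    have h := hbil z z; linarith
  have hzx : ∀ z : Fin n → ℝ, z ⬝ᵥ (X *ᵥ x) = 0 := fun z => by rw [hx]; simp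
  have hxz : ∀ z : Fin n → ℝ, x ⬝ᵥ (X *ᵥ z) = 0 := fun z => by rw [hsym]; exact hzx z
  -- augmented matrix mulVec
  have haug : ∀ (u : Fin n → ℝ) (M : Matrix (Fin n) (Fin r) ℝ) (c : Fin (r+1) → ℝ),
      (Matrix.of fun i j => Fin.lastCases (u i) (fun k => M i k) j) *ᵥ c
        = M *ᵥ (fun k => c k.castSucc) + c (Fin.last r) • u := by
    intro u M c
    funext i
    simp only [Matrix.mulVec, dotProduct, Matrix.of_apply, Pi.add_apply, Pi.smul_apply,
      smul_eq_mul]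
    rw [Fin.sum_univ_castSucc]
    simp only [Fin.lastCases_castSucc, Fin.lastCases_last]
    ring
  -- Step 1 : G *ᵥ x = 0
  have hGx : G *ᵥ x = 0 := by
    obtain ⟨c, hc0, hge⟩ :=
      hnP (F * (Matrix.of fun i j => Fin.lastCases (x i) (fun k => V i k) j :
          Matrix (Fin n) (Fin (r+1)) ℝ))
    set V1 : Matrix (Fin n) (Fin (r+1)) ℝ :=
      Matrix.of fun i j => Fin.lastCases (x i) (fun k => V i k) j with hV1def
    set c1 : Fin r → ℝ := fun k => c k.castSucc with hc1def
    set t : ℝ := c (Fin.last r) with htdef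
    have hsplit : V1 *ᵥ c = V *ᵥ c1 + t • x := haug x V c
    have hqsplit : (V1 *ᵥ c) ⬝ᵥ (X *ᵥ (V1 *ᵥ c)) = (V *ᵥ c1) ⬝ᵥ (X *ᵥ (V *ᵥ c1)) := by
      rw [hsplit, Matrix.mulVec_add, Matrix.mulVec_smul, hx]
      simp only [smul_zero, add_zero, add_dotProduct, smul_dotProduct,
        dotProduct_add, dotProduct_smul, smul_eq_mul, hxz]
      ring
    have hWc : (F * V1) *ᵥ c = F *ᵥ (V1 *ᵥ c) := (Matrix.mulVec_mulVec _ _ _).symm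
    have hqW : ((F * V1) *ᵥ c) ⬝ᵥ (X *ᵥ ((F * V1) *ᵥ c))
        = (V *ᵥ c1) ⬝ᵥ (X *ᵥ (V *ᵥ c1)) - (G *ᵥ (V1 *ᵥ c)) ⬝ᵥ (G *ᵥ (V1 *ᵥ c)) := by
      rw [hWc, hq (V1 *ᵥ c), hqsplit]
    have hnn := dps_nonneg (G *ᵥ (V1 *ᵥ c))
    have hc1 : c1 = 0 := by
      by_contra hc1ne
      have h5 := hV c1 hc1ne
      rw [hqW] at hge
      linarith
    have ht : t ≠ 0 := by
      intro h
      apply hc0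
      funext j
      refine Fin.lastCases ?_ ?_ j
      · exact h
      · intro k; exact congrFun hc1 k
    have hV10 : V1 *ᵥ c = t • x := by rw [hsplit, hc1]; simp
    rw [hqW, hV10, hc1] at hge
    simp only [Matrix.mulVec_zero, dotProduct_zero, zero_sub, Matrix.mulVec_smul,
      smul_dotProduct, dotProduct_smul, smul_eq_mul, le_neg] at hge
    have h6 : (G *ᵥ x) ⬝ᵥ (G *ᵥ x) = 0 := by
      have h7 := dps_nonneg (G *ᵥ x)
      have h8 : 0 < t * t := mul_self_pos.mpr ht
      have h9 : (G *ᵥ x) ⬝ᵥ (G *ᵥ x) ≤ 0 := by nlinarith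
      exact le_antisymm h9 h7
    exact dotProduct_self_eq_zero.mp h6
  refine ⟨?_, hGx⟩
  by_contra hg
  set y : Fin n → ℝ := F *ᵥ x with hydef
  set g : Fin n → ℝ := X *ᵥ y with hgdef
  have hFzg : ∀ z : Fin n → ℝ, (F *ᵥ z) ⬝ᵥ g = 0 := by
    intro z
    have h := hbil z x
    rw [hzx z, hGx, dotProduct_zero] at h
    rw [hgdef, hydef]
    linarith
  have hqy : y ⬝ᵥ g = 0 := by
    have h := hbil x x
    rw [hzx x, hGx, dotProduct_zero] at h
    rw [hgdef, hydef]
    linarith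
  set FV : Matrix (Fin n) (Fin r) ℝ := F * V with hFVdef
  have hFVc : ∀ c : Fin r → ℝ, FV *ᵥ c = F *ᵥ (V *ᵥ c) := fun c =>
    (Matrix.mulVec_mulVec _ _ _).symm
  have hFVq : ∀ c : Fin r → ℝ, c ≠ 0 → (FV *ᵥ c) ⬝ᵥ (X *ᵥ (FV *ᵥ c)) < 0 := by
    intro c hc
    have h1 := hq (V *ᵥ c)
    have h2 := hV c hc
    have h3 := dps_nonneg (G *ᵥ (V *ᵥ c))
    rw [hFVc c]
    linarith
  have hdt : ∀ (c : Fin r → ℝ) (u : Fin n → ℝ), (FV *ᵥ c) ⬝ᵥ u = c ⬝ᵥ (FVᵀ *ᵥ u) := by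
    intro c u
    rw [dotProduct_comm, Matrix.dotProduct_mulVec, Matrix.mulVec_transpose,
      dotProduct_comm]
  -- N and its invertibility (as a linear map)
  set N : Matrix (Fin r) (Fin r) ℝ := FVᵀ * X * FV with hNdef
  have hNc : ∀ c : Fin r → ℝ, N *ᵥ c = FVᵀ *ᵥ (X *ᵥ (FV *ᵥ c)) := by
    intro c
    rw [hNdef, Matrix.mulVec_mulVec, Matrix.mulVec_mulVec]
  have hNinj : Function.Injective N.mulVecLin := by
    rw [← LinearMap.ker_eq_bot, LinearMap.ker_eq_bot']
    intro c hc
    by_contra hcne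
    have h1 := hFVq c hcne
    have h2 : N *ᵥ c = 0 := hc
    rw [hdt c (X *ᵥ (FV *ᵥ c)), ← hNc c, h2, dotProduct_zero] at h1
    exact lt_irrefl _ h1
  have hNsurj : Function.Surjective N.mulVecLin :=
    (LinearMap.injective_iff_surjective).mp hNinj
  obtain ⟨c₀, hc₀⟩ := hNsurj (FVᵀ *ᵥ (X *ᵥ g))
  have hc₀' : N *ᵥ c₀ = FVᵀ *ᵥ (X *ᵥ g) := hc₀
  set d : Fin n → ℝ := g - FV *ᵥ c₀ with hddef
  have f1 : ∀ c : Fin r → ℝ, (FV *ᵥ c) ⬝ᵥ (X *ᵥ d) = 0 := by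
    intro c
    rw [hdt, hddef, Matrix.mulVec_sub, Matrix.mulVec_sub, ← hNc, hc₀', sub_self,
      dotProduct_zero]
  have f2 : y ⬝ᵥ (X *ᵥ d) = g ⬝ᵥ g := by
    rw [hddef, Matrix.mulVec_sub, dotProduct_sub]
    have h1 : y ⬝ᵥ (X *ᵥ g) = g ⬝ᵥ g := by
      rw [hsym y g]
    have h2 : y ⬝ᵥ (X *ᵥ (FV *ᵥ c₀)) = 0 := by
      rw [hsym]
      rw [show X *ᵥ y = g from rfl]
      rw [hFVc c₀]
      exact hFzg (V *ᵥ c₀)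
    rw [h1, h2, sub_zero]
  have hε : 0 < g ⬝ᵥ g := by
    rcases lt_or_eq_of_le (dps_nonneg g) with h | h
    · exact h
    · exact absurd (dotProduct_self_eq_zero.mp h.symm) hg
  set ε : ℝ := g ⬝ᵥ g with hεdef
  set β : ℝ := d ⬝ᵥ (X *ᵥ d) with hβdef
  set t : ℝ := ε / (|β| + 1) with htdef
  have hβ1 : (0:ℝ) < |β| + 1 := by positivity
  have ht : 0 < t := div_pos hε hβ1
  have htβ : t * (|β| + 1) = ε := div_mul_cancel₀ ε (ne_of_gt hβ1)
  set z : Fin n → ℝ := y + (-t) • d with hzdef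
  have f4 : ∀ c : Fin r → ℝ, (FV *ᵥ c) ⬝ᵥ (X *ᵥ z) = 0 := by
    intro c
    rw [hzdef, Matrix.mulVec_add, Matrix.mulVec_smul, dotProduct_add,
      dotProduct_smul]
    rw [show X *ᵥ y = g from rfl]
    rw [hFVc c, hFzg (V *ᵥ c), ← hFVc c, f1 c]
    simp
  have f5 : z ⬝ᵥ (X *ᵥ z) < 0 := by
    have hdy : d ⬝ᵥ (X *ᵥ y) = ε := by rw [hsym]; exact f2
    have hexp : z ⬝ᵥ (X *ᵥ z) = -2 * t * ε + t ^ 2 * β := by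
      rw [hzdef, Matrix.mulVec_add, Matrix.mulVec_smul]
      rw [dotProduct_add, add_dotProduct, add_dotProduct,
        dotProduct_smul, smul_dotProduct, smul_dotProduct,
        dotProduct_smul]
      rw [show X *ᵥ y = g from rfl]
      rw [hqy, f2, hdy, ← hβdef]
      simp only [smul_eq_mul]
      ring
    rw [hexp]
    nlinarith [le_abs_self β, mul_pos ht hε, sq_nonneg t, mul_pos ht ht]
  -- final contradiction
  obtain ⟨c, hc0, hge⟩ :=
    hnP (Matrix.of fun i j => Fin.lastCases (z i) (fun k => FV i k) j)
  set V2 : Matrix (Fin n) (Fin (r+1)) ℝ :=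
    Matrix.of fun i j => Fin.lastCases (z i) (fun k => FV i k) j with hV2def
  set c1 : Fin r → ℝ := fun k => c k.castSucc with hc1def
  set s : ℝ := c (Fin.last r) with hsdef
  have hsplit : V2 *ᵥ c = FV *ᵥ c1 + s • z := haug z FV c
  have hcross : z ⬝ᵥ (X *ᵥ (FV *ᵥ c1)) = 0 := by rw [hsym]; exact f4 c1
  have hqsplit : (V2 *ᵥ c) ⬝ᵥ (X *ᵥ (V2 *ᵥ c))
      = (FV *ᵥ c1) ⬝ᵥ (X *ᵥ (FV *ᵥ c1)) + s ^ 2 * (z ⬝ᵥ (X *ᵥ z)) := by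
    rw [hsplit, Matrix.mulVec_add, Matrix.mulVec_smul]
    rw [dotProduct_add, add_dotProduct, add_dotProduct,
      dotProduct_smul, smul_dotProduct, smul_dotProduct,
      dotProduct_smul]
    rw [f4 c1, hcross]
    simp only [smul_eq_mul]
    ring
  by_cases hc1 : c1 = 0
  · have hs : s ≠ 0 := by
      intro h
      apply hc0
      funext j
      refine Fin.lastCases ?_ ?_ j
      · exact h
      · intro k; exact congrFun hc1 k
    have h3 : 0 < s * s := mul_self_pos.mpr hs
    rw [hqsplit, hc1] at hge
    simp only [Matrix.mulVec_zero, dotProduct_zero, zero_add] at hge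
    rw [pow_two] at hge
    nlinarith [f5, h3]
  · have h1 := hFVq c1 hc1
    have h2 : s ^ 2 * (z ⬝ᵥ (X *ᵥ z)) ≤ 0 :=
      mul_nonpos_iff.mpr (Or.inl ⟨sq_nonneg s, f5.le⟩)
    rw [hqsplit] at hge
    linarith

lemma expand_lemma {n m p : ℕ} (A X : Matrix (Fin n) (Fin n) ℝ) (B : Matrix (Fin n) (Fin m) ℝ)
    (C : Matrix (Fin p) (Fin n) ℝ) (D : Matrix (Fin p) (Fin m) ℝ)
    (K : Matrix (Fin m) (Fin n) ℝ) :
    (A - B * K)ᵀ * X * (A - B * K) + (C - D * K)ᵀ * (C - D * K)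
      = Aᵀ * X * A + Cᵀ * C - (Aᵀ * X * B + Cᵀ * D) * K - Kᵀ * (Bᵀ * X * A + Dᵀ * C)
        + Kᵀ * ((Dᵀ * D + Bᵀ * X * B) * K) := by
  rw [Matrix.transpose_sub, Matrix.transpose_sub, Matrix.transpose_mul, Matrix.transpose_mul]
  simp only [Matrix.sub_mul, Matrix.mul_sub, Matrix.add_mul, Matrix.mul_add, Matrix.mul_assoc]
  abel

theorem stmt_9 (n m p : ℕ)
    (A : Matrix (Fin n) (Fin n) ℝ) (B : Matrix (Fin n) (Fin m) ℝ)
    (C : Matrix (Fin p) (Fin n) ℝ) (D : Matrix (Fin p) (Fin m) ℝ)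
    (X : Matrix (Fin n) (Fin n) ℝ) (hX : Xᵀ = X)
    (RXd : Matrix (Fin m) (Fin m) ℝ)
    (pen1 : (Dᵀ * D + Bᵀ * X * B) * RXd * (Dᵀ * D + Bᵀ * X * B) = Dᵀ * D + Bᵀ * X * B)
    (pen2 : RXd * (Dᵀ * D + Bᵀ * X * B) * RXd = RXd)
    (pen3 : ((Dᵀ * D + Bᵀ * X * B) * RXd)ᵀ = (Dᵀ * D + Bᵀ * X * B) * RXd)
    (pen4 : (RXd * (Dᵀ * D + Bᵀ * X * B))ᵀ = RXd * (Dᵀ * D + Bᵀ * X * B))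
    (hGDARE : X = Aᵀ * X * A
        - (Aᵀ * X * B + Cᵀ * D) * RXd * (Aᵀ * X * B + Cᵀ * D)ᵀ + Cᵀ * C) :
    ∀ x : Fin n → ℝ, X.mulVec x = 0 →
      X.mulVec ((A - B * (RXd * (Aᵀ * X * B + Cᵀ * D)ᵀ)).mulVec x) = 0
      ∧ (C - D * (RXd * (Aᵀ * X * B + Cᵀ * D)ᵀ)).mulVec x = 0 := by
  intro x hx
  have hRt : (Dᵀ * D + Bᵀ * X * B)ᵀ = Dᵀ * D + Bᵀ * X * B := by
    simp [Matrix.transpose_add, Matrix.transpose_mul, Matrix.transpose_transpose, hX,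
      Matrix.mul_assoc]
  have hYt : RXdᵀ = RXd := pinv_symm _ RXd hRt pen1 pen2 pen3 pen4
  have hT : (Aᵀ * X * B + Cᵀ * D)ᵀ = Bᵀ * X * A + Dᵀ * C := by
    simp [Matrix.transpose_add, Matrix.transpose_mul, Matrix.transpose_transpose, hX,
      Matrix.mul_assoc]
  have hKt : (RXd * (Aᵀ * X * B + Cᵀ * D)ᵀ)ᵀ = (Aᵀ * X * B + Cᵀ * D) * RXd := by
    rw [Matrix.transpose_mul, Matrix.transpose_transpose, hYt]
  have key2 : (RXd * (Aᵀ * X * B + Cᵀ * D)ᵀ)ᵀ * (Bᵀ * X * A + Dᵀ * C)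
      = (Aᵀ * X * B + Cᵀ * D) * (RXd * (Aᵀ * X * B + Cᵀ * D)ᵀ) := by
    rw [hKt, ← hT, Matrix.mul_assoc]
  have key3 : (RXd * (Aᵀ * X * B + Cᵀ * D)ᵀ)ᵀ
        * ((Dᵀ * D + Bᵀ * X * B) * (RXd * (Aᵀ * X * B + Cᵀ * D)ᵀ))
      = (Aᵀ * X * B + Cᵀ * D) * (RXd * (Aᵀ * X * B + Cᵀ * D)ᵀ) := by
    rw [hKt]
    calc (Aᵀ * X * B + Cᵀ * D) * RXd
          * ((Dᵀ * D + Bᵀ * X * B) * (RXd * (Aᵀ * X * B + Cᵀ * D)ᵀ))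
        = (Aᵀ * X * B + Cᵀ * D) * (RXd * (Dᵀ * D + Bᵀ * X * B) * RXd)
            * (Aᵀ * X * B + Cᵀ * D)ᵀ := by
          simp only [Matrix.mul_assoc]
    _ = (Aᵀ * X * B + Cᵀ * D) * (RXd * (Aᵀ * X * B + Cᵀ * D)ᵀ) := by
          rw [pen2, Matrix.mul_assoc]
  have hfin : X = (A - B * (RXd * (Aᵀ * X * B + Cᵀ * D)ᵀ))ᵀ * X
        * (A - B * (RXd * (Aᵀ * X * B + Cᵀ * D)ᵀ))
      + (C - D * (RXd * (Aᵀ * X * B + Cᵀ * D)ᵀ))ᵀ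
        * (C - D * (RXd * (Aᵀ * X * B + Cᵀ * D)ᵀ)) := by
    rw [expand_lemma A X B C D (RXd * (Aᵀ * X * B + Cᵀ * D)ᵀ), key2, key3]
    conv_lhs => rw [hGDARE]
    rw [show (Aᵀ * X * B + Cᵀ * D) * RXd * (Aᵀ * X * B + Cᵀ * D)ᵀ
        = (Aᵀ * X * B + Cᵀ * D) * (RXd * (Aᵀ * X * B + Cᵀ * D)ᵀ) from Matrix.mul_assoc _ _ _]
    abel
  exact stein_aux X (A - B * (RXd * (Aᵀ * X * B + Cᵀ * D)ᵀ))
    (C - D * (RXd * (Aᵀ * X * B + Cᵀ * D)ᵀ)) hX hfin x hx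
end

section
/- Assume the Popov matrix Π = [[Q, S],[Sᵀ, R]] is positive semidefinite. If X is a symmetric solution of CGDARE(Σ), then ker R_X ⊆ ker R; equivalently, R G_X = 0. -/
open Matrix

lemma pinv_symm_s10 {m : ℕ} (M D : Matrix (Fin m) (Fin m) ℝ) (hM : Mᵀ = M)
    (p1 : M * D * M = M) (p2 : D * M * D = D)
    (p3 : (M * D)ᵀ = M * D) (p4 : (D * M)ᵀ = D * M) : Dᵀ = D := by
  set E := Dᵀ with hE
  have e1 : M * E * M = M := by
    have h := congrArg Matrix.transpose p1
    rw [Matrix.transpose_mul, Matrix.transpose_mul, hM] at h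
    rw [hE, Matrix.mul_assoc]; exact h
  have e2 : E * M * E = E := by
    have h := congrArg Matrix.transpose p2
    rw [Matrix.transpose_mul, Matrix.transpose_mul, hM] at h
    rw [hE, Matrix.mul_assoc]; exact h
  have h1 : M * E = D * M := by
    have h := congrArg Matrix.transpose p4
    rw [Matrix.transpose_transpose, Matrix.transpose_mul, hM] at h
    exact h.symm
  have h2 : E * M = M * D := by
    have h := congrArg Matrix.transpose p3
    rw [Matrix.transpose_transpose, Matrix.transpose_mul, hM] at h
    exact h.symm
  have e3 : (M * E)ᵀ = M * E := by rw [h1, p4]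
  have e4 : (E * M)ᵀ = E * M := by rw [h2, p3]
  have s1 : M * D = M * E := by
    calc M * D = (M * D)ᵀ := p3.symm
      _ = ((M * E * M) * D)ᵀ := by rw [e1]
      _ = ((M * E) * (M * D))ᵀ := by rw [Matrix.mul_assoc (M*E) M D]
      _ = (M * D)ᵀ * (M * E)ᵀ := by rw [Matrix.transpose_mul]
      _ = (M * D) * (M * E) := by rw [p3, e3]
      _ = (M * D * M) * E := by rw [Matrix.mul_assoc, Matrix.mul_assoc, Matrix.mul_assoc]
      _ = M * E := by rw [p1]
  have s2 : D * M = E * M := by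
    calc D * M = (D * M)ᵀ := p4.symm
      _ = (D * (M * E * M))ᵀ := by rw [e1]
      _ = ((D * M) * (E * M))ᵀ := by rw [Matrix.mul_assoc, Matrix.mul_assoc]
      _ = (E * M)ᵀ * (D * M)ᵀ := by rw [Matrix.transpose_mul]
      _ = (E * M) * (D * M) := by rw [p4, e4]
      _ = E * (M * D * M) := by rw [Matrix.mul_assoc, Matrix.mul_assoc]
      _ = E * M := by rw [p1]
  have hDE : D = E := by
    calc D = D * M * D := p2.symm
      _ = (E * M) * D := by rw [s2]
      _ = E * (M * D) := by rw [Matrix.mul_assoc]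
      _ = E * (M * E) := by rw [s1]
      _ = E * M * E := by rw [Matrix.mul_assoc]
      _ = E := e2
  exact hDE.symm

lemma hdp {k l : ℕ} (M : Matrix (Fin k) (Fin l) ℝ) (a : Fin l → ℝ) (b : Fin k → ℝ) :
    (M *ᵥ a) ⬝ᵥ b = a ⬝ᵥ (Mᵀ *ᵥ b) := by
  rw [dotProduct_comm, Matrix.dotProduct_mulVec, ← Matrix.mulVec_transpose]
  exact dotProduct_comm _ _

lemma sumM_mulVec {k l : ℕ} (s : Finset ℕ) (f : ℕ → Matrix (Fin k) (Fin l) ℝ) (w : Fin l → ℝ) :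
    (∑ i ∈ s, f i) *ᵥ w = ∑ i ∈ s, f i *ᵥ w := by
  induction s using Finset.cons_induction with
  | empty => simp
  | cons a s ha ih => rw [Finset.sum_cons, Finset.sum_cons, Matrix.add_mulVec, ih]

lemma mulVec_sumv {k l : ℕ} (M : Matrix (Fin k) (Fin l) ℝ) (s : Finset ℕ) (f : ℕ → (Fin l → ℝ)) :
    M *ᵥ (∑ i ∈ s, f i) = ∑ i ∈ s, M *ᵥ f i := by
  induction s using Finset.cons_induction with
  | empty => simp
  | cons a s ha ih => rw [Finset.sum_cons, Finset.sum_cons, Matrix.mulVec_add, ih]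

theorem stmt_10 (n m : ℕ)
    (A : Matrix (Fin n) (Fin n) ℝ) (B : Matrix (Fin n) (Fin m) ℝ)
    (Q : Matrix (Fin n) (Fin n) ℝ) (S : Matrix (Fin n) (Fin m) ℝ)
    (R : Matrix (Fin m) (Fin m) ℝ)
    (hQ : Qᵀ = Q) (hR : Rᵀ = R)
    (hPi : (Matrix.fromBlocks Q S Sᵀ R).PosSemidef)
    (X : Matrix (Fin n) (Fin n) ℝ) (hX : Xᵀ = X)
    (RXd : Matrix (Fin m) (Fin m) ℝ)
    (pen1 : (R + Bᵀ * X * B) * RXd * (R + Bᵀ * X * B) = R + Bᵀ * X * B)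
    (pen2 : RXd * (R + Bᵀ * X * B) * RXd = RXd)
    (pen3 : ((R + Bᵀ * X * B) * RXd)ᵀ = (R + Bᵀ * X * B) * RXd)
    (pen4 : (RXd * (R + Bᵀ * X * B))ᵀ = RXd * (R + Bᵀ * X * B))
    (hGDARE : X = Aᵀ * X * A - (Aᵀ * X * B + S) * RXd * (Aᵀ * X * B + S)ᵀ + Q)
    (hker : ∀ v : Fin m → ℝ, (R + Bᵀ * X * B).mulVec v = 0 → (Aᵀ * X * B + S).mulVec v = 0) :
    (∀ v : Fin m → ℝ, (R + Bᵀ * X * B).mulVec v = 0 → R.mulVec v = 0)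
    ∧ R * (1 - RXd * (R + Bᵀ * X * B)) = 0 := by
  set RX := R + Bᵀ * X * B with hRXdef
  set SX := Aᵀ * X * B + S with hSXdef
  have hRXs : RXᵀ = RX := by
    rw [hRXdef]
    simp [Matrix.transpose_add, Matrix.transpose_mul, hR, hX, Matrix.mul_assoc]
  have hDs : RXdᵀ = RXd := pinv_symm_s10 RX RXd hRXs pen1 pen2 pen3 pen4
  -- columns of (1 - RXd * RX) are in ker RX
  have hcol : ∀ z : Fin m → ℝ, RX *ᵥ ((1 - RXd * RX) *ᵥ z) = 0 := by
    intro z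
    rw [Matrix.mulVec_mulVec, Matrix.mul_sub, Matrix.mul_one, ← Matrix.mul_assoc, pen1]
    simp
  have hSXG : SX * (1 - RXd * RX) = 0 := by
    ext i j
    have h := hker _ (hcol (Pi.single j 1))
    have h2 := congrFun h i
    rw [Matrix.mulVec_mulVec, Matrix.mulVec_single] at h2
    simpa [Matrix.mul_apply] using h2
  have hSXr : SX * (RXd * RX) = SX := by
    have h3 := hSXG
    rw [Matrix.mul_sub, Matrix.mul_one] at h3
    exact (sub_eq_zero.mp h3).symm
  set K := RXd * SXᵀ with hKdef
  have hKT : Kᵀ = SX * RXd := by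
    rw [hKdef, Matrix.transpose_mul, Matrix.transpose_transpose, hDs]
  have hQid : Q = X - Aᵀ * X * A + Kᵀ * (RX * K) := by
    have h1 : Kᵀ * (RX * K) = SX * RXd * SXᵀ := by
      rw [hKT, hKdef]
      calc SX * RXd * (RX * (RXd * SXᵀ))
          = SX * ((RXd * RX * RXd) * SXᵀ) := by simp only [Matrix.mul_assoc]
        _ = SX * (RXd * SXᵀ) := by rw [pen2]
        _ = SX * RXd * SXᵀ := by rw [Matrix.mul_assoc]
    rw [h1]
    calc Q = (Aᵀ * X * A - SX * RXd * SXᵀ + Q) - Aᵀ * X * A + SX * RXd * SXᵀ := by abel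
      _ = X - Aᵀ * X * A + SX * RXd * SXᵀ := by rw [← hGDARE]
  have hSid : S = Kᵀ * RX - Aᵀ * X * B := by
    have h1 : Kᵀ * RX = SX := by rw [hKT, Matrix.mul_assoc, hSXr]
    rw [h1, hSXdef]; abel
  have hSTid : Sᵀ = RX * K - Bᵀ * (X * A) := by
    calc Sᵀ = (Kᵀ * RX - Aᵀ * X * B)ᵀ := by rw [← hSid]
      _ = RX * K - Bᵀ * (X * A) := by
          simp only [Matrix.transpose_sub, Matrix.transpose_mul, Matrix.transpose_transpose,
            hRXs, hX]
  have hRid : R = RX - Bᵀ * X * B := by rw [hRXdef]; abel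
  have hiden : ∀ (x : Fin n → ℝ) (u : Fin m → ℝ),
      0 ≤ x ⬝ᵥ (X *ᵥ x) - (A *ᵥ x + B *ᵥ u) ⬝ᵥ (X *ᵥ (A *ᵥ x + B *ᵥ u))
        + (u + K *ᵥ x) ⬝ᵥ (RX *ᵥ (u + K *ᵥ x)) := by
    intro x u
    have hz := hPi.dotProduct_mulVec_nonneg (Sum.elim x u)
    have hstar : star (Sum.elim x u) = Sum.elim x u := by
      funext i; cases i <;> simp
    rw [hstar] at hz
    have hexp : Sum.elim x u ⬝ᵥ ((Matrix.fromBlocks Q S Sᵀ R) *ᵥ Sum.elim x u)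
        = x ⬝ᵥ (Q *ᵥ x + S *ᵥ u) + u ⬝ᵥ (Sᵀ *ᵥ x + R *ᵥ u) := by
      rw [Matrix.fromBlocks_mulVec]
      simp only [Sum.elim_comp_inl, Sum.elim_comp_inr]
      exact sumElim_dotProduct_sumElim _ _ _ _
    rw [hexp] at hz
    have heq : x ⬝ᵥ (Q *ᵥ x + S *ᵥ u) + u ⬝ᵥ (Sᵀ *ᵥ x + R *ᵥ u)
        = x ⬝ᵥ (X *ᵥ x) - (A *ᵥ x + B *ᵥ u) ⬝ᵥ (X *ᵥ (A *ᵥ x + B *ᵥ u))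
          + (u + K *ᵥ x) ⬝ᵥ (RX *ᵥ (u + K *ᵥ x)) := by
      rw [hQid, hRid, hSTid, hSid]
      simp only [Matrix.sub_mulVec, Matrix.add_mulVec, Matrix.mulVec_add,
        dotProduct_add, add_dotProduct, dotProduct_sub, sub_dotProduct,
        hdp, Matrix.mulVec_mulVec, Matrix.transpose_mul, Matrix.transpose_transpose,
        Matrix.mul_assoc, hX, hRXs, hDs]
      ring
    rw [heq] at hz
    exact hz
  have part1 : ∀ v : Fin m → ℝ, RX *ᵥ v = 0 → R *ᵥ v = 0 := by
    intro v hv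
    set w := B *ᵥ v with hw
    set AK := A - B * K with hAKdef
    have key2 : ∀ (x : Fin n → ℝ) (t : ℝ),
        (AK *ᵥ x + t • w) ⬝ᵥ (X *ᵥ (AK *ᵥ x + t • w)) ≤ x ⬝ᵥ (X *ᵥ x) := by
      intro x t
      have h := hiden x (t • v - K *ᵥ x)
      have h1 : (t • v - K *ᵥ x) + K *ᵥ x = t • v := by abel
      have h2 : A *ᵥ x + B *ᵥ (t • v - K *ᵥ x) = AK *ᵥ x + t • w := by
        rw [hAKdef, Matrix.sub_mulVec, Matrix.mulVec_sub, Matrix.mulVec_smul,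
          Matrix.mulVec_mulVec, hw]
        abel
      have h3 : (t • v) ⬝ᵥ (RX *ᵥ (t • v)) = 0 := by
        rw [Matrix.mulVec_smul, hv, smul_zero, dotProduct_zero]
      rw [h1, h2, h3] at h
      linarith
    have L : ∀ d : ℕ, ∀ a : ℕ → ℝ,
        ((AK ^ d *ᵥ w) + ∑ j ∈ Finset.range d, a j • (AK ^ j *ᵥ w)) ⬝ᵥ
          (X *ᵥ ((AK ^ d *ᵥ w) + ∑ j ∈ Finset.range d, a j • (AK ^ j *ᵥ w))) ≤ w ⬝ᵥ (X *ᵥ w) := by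
      intro d
      induction d with
      | zero => intro a; simp
      | succ d ih =>
        intro a
        have e0 : AK *ᵥ (AK ^ d *ᵥ w) = AK ^ (d+1) *ᵥ w := by
          rw [Matrix.mulVec_mulVec, ← pow_succ']
        have e1 : ∀ j, AK *ᵥ (a (j+1) • (AK ^ j *ᵥ w)) = a (j+1) • (AK ^ (j+1) *ᵥ w) := by
          intro j; rw [Matrix.mulVec_smul, Matrix.mulVec_mulVec, ← pow_succ']
        have hident : (AK ^ (d+1) *ᵥ w) + ∑ j ∈ Finset.range (d+1), a j • (AK ^ j *ᵥ w)
            = AK *ᵥ ((AK ^ d *ᵥ w) + ∑ j ∈ Finset.range d, a (j+1) • (AK ^ j *ᵥ w))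
              + a 0 • w := by
          rw [Matrix.mulVec_add, mulVec_sumv,
            Finset.sum_range_succ' (fun j => a j • (AK ^ j *ᵥ w)) d]
          simp only [e0, e1, pow_zero, Matrix.one_mulVec]
          abel
        rw [hident]
        exact le_trans (key2 _ (a 0)) (ih (fun j => a (j+1)))
    have hp0 : 0 ≤ w ⬝ᵥ (X *ᵥ w) := by
      rcases Nat.eq_zero_or_pos n with hn | hn
      · subst hn
        simp [dotProduct]
      · have hch := Matrix.aeval_self_charpoly AK
        have hdeg : (Matrix.charpoly AK).natDegree = n := by
          rw [Matrix.charpoly_natDegree_eq_dim, Fintype.card_fin]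
        have hcn : (Matrix.charpoly AK).coeff n = 1 := by
          have := (Matrix.charpoly_monic AK).coeff_natDegree
          rwa [hdeg] at this
        rw [Polynomial.aeval_eq_sum_range, hdeg, Finset.sum_range_succ, hcn, one_smul] at hch
        have hv0 : (AK ^ n *ᵥ w) + ∑ j ∈ Finset.range n,
            (Matrix.charpoly AK).coeff j • (AK ^ j *ᵥ w) = (0 : Fin n → ℝ) := by
          have h := congrArg (fun M : Matrix (Fin n) (Fin n) ℝ => M *ᵥ w) hch
          simp only [Matrix.add_mulVec, sumM_mulVec, Matrix.smul_mulVec,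
            Matrix.zero_mulVec] at h
          rw [add_comm] at h
          exact h
        have hL := L n (Matrix.charpoly AK).coeff
        rw [hv0] at hL
        simpa using hL
    have hform : star (Sum.elim (0 : Fin n → ℝ) v) ⬝ᵥ
        ((Matrix.fromBlocks Q S Sᵀ R) *ᵥ Sum.elim (0 : Fin n → ℝ) v) = v ⬝ᵥ (R *ᵥ v) := by
      have hstar : star (Sum.elim (0 : Fin n → ℝ) v) = Sum.elim (0 : Fin n → ℝ) v := by
        funext i; cases i <;> simp
      rw [hstar, Matrix.fromBlocks_mulVec]
      simp only [Sum.elim_comp_inl, Sum.elim_comp_inr, Matrix.mulVec_zero, zero_add]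
      rw [sumElim_dotProduct_sumElim]
      simp
    have hRpos : 0 ≤ v ⬝ᵥ (R *ᵥ v) := hform ▸ hPi.dotProduct_mulVec_nonneg (Sum.elim (0 : Fin n → ℝ) v)
    have hq1 : v ⬝ᵥ (RX *ᵥ v) = 0 := by rw [hv, dotProduct_zero]
    have hsplit : v ⬝ᵥ (RX *ᵥ v) = v ⬝ᵥ (R *ᵥ v) + w ⬝ᵥ (X *ᵥ w) := by
      rw [hRXdef, hw]
      simp only [Matrix.add_mulVec, dotProduct_add, hdp, Matrix.mulVec_mulVec,
        Matrix.mul_assoc]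
    have hsum : v ⬝ᵥ (R *ᵥ v) + w ⬝ᵥ (X *ᵥ w) = 0 := by rw [← hsplit]; exact hq1
    have hvRv : v ⬝ᵥ (R *ᵥ v) = 0 := by linarith
    have hzero : (Matrix.fromBlocks Q S Sᵀ R) *ᵥ (Sum.elim (0 : Fin n → ℝ) v) = 0 :=
      (hPi.dotProduct_mulVec_zero_iff (Sum.elim (0 : Fin n → ℝ) v)).mp (hform.trans hvRv)
    funext i
    have h := congrFun hzero (Sum.inr i)
    rw [Matrix.fromBlocks_mulVec] at hzero
    have h2 := congrFun hzero (Sum.inr i)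
    simpa using h2
  refine ⟨part1, ?_⟩
  ext i j
  have h := part1 ((1 - RXd * RX) *ᵥ Pi.single j 1) (hcol _)
  have h2 := congrFun h i
  rw [Matrix.mulVec_mulVec, Matrix.mulVec_single] at h2
  simpa [Matrix.mul_apply] using h2
end

section
/- Let C ∈ ℝ^{p×n} and D ∈ ℝ^{p×m} be such that Q = CᵀC, S = CᵀD and R = DᵀD. If X is a symmetric solution of CGDARE(Σ), then the reachable subspace ℛ₀ of the pair (A_X, B G_X) is contained in ker C_X, where C_X = C − D K_X; that is, C_X A_X^k B G_X = 0 for every k ≥ 0. -/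
open Matrix

private lemma bil2 {a b c : ℕ} (M : Matrix (Fin b) (Fin a) ℝ)
    (N : Matrix (Fin b) (Fin c) ℝ) (x : Fin a → ℝ) (v : Fin c → ℝ) :
    (M *ᵥ x) ⬝ᵥ (N *ᵥ v) = x ⬝ᵥ ((Mᵀ * N) *ᵥ v) := by
  symm
  rw [← mulVec_mulVec, dotProduct_mulVec, vecMul_transpose]

private lemma bil3 {a b c : ℕ} (M : Matrix (Fin b) (Fin a) ℝ) (P : Matrix (Fin b) (Fin b) ℝ)
    (N : Matrix (Fin b) (Fin c) ℝ) (x : Fin a → ℝ) (v : Fin c → ℝ) :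
    (M *ᵥ x) ⬝ᵥ (P *ᵥ (N *ᵥ v)) = x ⬝ᵥ ((Mᵀ * P * N) *ᵥ v) := by
  rw [mulVec_mulVec, bil2, Matrix.mul_assoc]

private lemma star_id {n m p : ℕ} (AX : Matrix (Fin n) (Fin n) ℝ)
    (W : Matrix (Fin n) (Fin m) ℝ) (CX : Matrix (Fin p) (Fin n) ℝ)
    (DG : Matrix (Fin p) (Fin m) ℝ) (X : Matrix (Fin n) (Fin n) ℝ)
    (hI : AXᵀ * X * AX + CXᵀ * CX = X)
    (hIIa : AXᵀ * X * W + CXᵀ * DG = 0)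
    (hIIb : Wᵀ * X * AX + DGᵀ * CX = 0)
    (hIII : Wᵀ * X * W + DGᵀ * DG = 0)
    (x : Fin n → ℝ) (v : Fin m → ℝ) :
    (AX *ᵥ x + W *ᵥ v) ⬝ᵥ (X *ᵥ (AX *ᵥ x + W *ᵥ v))
      = x ⬝ᵥ (X *ᵥ x)
        - (CX *ᵥ x + DG *ᵥ v) ⬝ᵥ (CX *ᵥ x + DG *ᵥ v) := by
  have expand :
      (AX *ᵥ x + W *ᵥ v) ⬝ᵥ (X *ᵥ (AX *ᵥ x + W *ᵥ v))
        + (CX *ᵥ x + DG *ᵥ v) ⬝ᵥ (CX *ᵥ x + DG *ᵥ v)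
      = (x ⬝ᵥ ((AXᵀ * X * AX + CXᵀ * CX) *ᵥ x))
        + (x ⬝ᵥ ((AXᵀ * X * W + CXᵀ * DG) *ᵥ v))
        + (v ⬝ᵥ ((Wᵀ * X * AX + DGᵀ * CX) *ᵥ x))
        + (v ⬝ᵥ ((Wᵀ * X * W + DGᵀ * DG) *ᵥ v)) := by
    simp only [mulVec_add, dotProduct_add, add_dotProduct, bil3, bil2,
      Matrix.add_mulVec, dotProduct_add, mulVec_mulVec, Matrix.mul_assoc]
    ring
  rw [hI, hIIa, hIIb, hIII] at expand
  simp only [Matrix.zero_mulVec, dotProduct_zero] at expand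
  linarith [expand]

private lemma dot_self_nonneg' {k : ℕ} (v : Fin k → ℝ) : 0 ≤ v ⬝ᵥ v :=
  Finset.sum_nonneg fun _ _ => mul_self_nonneg _

private lemma main_core {n m p : ℕ} (AX : Matrix (Fin n) (Fin n) ℝ)
    (W : Matrix (Fin n) (Fin m) ℝ) (CX : Matrix (Fin p) (Fin n) ℝ)
    (DG : Matrix (Fin p) (Fin m) ℝ) (X : Matrix (Fin n) (Fin n) ℝ)
    (hI : AXᵀ * X * AX + CXᵀ * CX = X)
    (hIIa : AXᵀ * X * W + CXᵀ * DG = 0)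
    (hIIb : Wᵀ * X * AX + DGᵀ * CX = 0)
    (hIII : Wᵀ * X * W + DGᵀ * DG = 0) :
    ∀ (k : ℕ) (v : Fin m → ℝ), CX *ᵥ ((AX ^ k) *ᵥ (W *ᵥ v)) = 0 := by
  set q : (Fin n → ℝ) → ℝ := fun y => y ⬝ᵥ (X *ᵥ y) with hq
  have hq0 : q 0 = 0 := by simp [hq]
  have hstar : ∀ (x : Fin n → ℝ) (v : Fin m → ℝ),
      q (AX *ᵥ x + W *ᵥ v)
        = q x - (CX *ᵥ x + DG *ᵥ v) ⬝ᵥ (CX *ᵥ x + DG *ᵥ v) :=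
    fun x v => star_id AX W CX DG X hI hIIa hIIb hIII x v
  have hstep : ∀ (x : Fin n → ℝ) (v : Fin m → ℝ), q (AX *ᵥ x + W *ᵥ v) ≤ q x := by
    intro x v
    rw [hstar]
    have := dot_self_nonneg' (CX *ᵥ x + DG *ᵥ v)
    linarith
  set R : ℕ → Submodule ℝ (Fin n → ℝ) :=
    fun T => Nat.rec ⊥ (fun _ S => S.map AX.mulVecLin ⊔ LinearMap.range W.mulVecLin) T
    with hR
  have hRsucc : ∀ T, R (T + 1) = (R T).map AX.mulVecLin ⊔ LinearMap.range W.mulVecLin :=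
    fun T => rfl
  have hmono : Monotone R := by
    apply monotone_nat_of_le_succ
    intro T
    induction T with
    | zero => exact bot_le
    | succ T ih =>
      rw [hRsucc T, hRsucc (T + 1)]
      exact sup_le_sup_right (Submodule.map_mono ih) _
  have hmem1 : ∀ (k : ℕ) (v : Fin m → ℝ), (AX ^ k) *ᵥ (W *ᵥ v) ∈ R (k + 1) := by
    intro k v
    induction k with
    | zero =>
      rw [pow_zero, one_mulVec, hRsucc 0]
      exact Submodule.mem_sup_right ⟨v, rfl⟩
    | succ k ih =>
      rw [hRsucc (k + 1), pow_succ', ← mulVec_mulVec]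
      exact Submodule.mem_sup_left (Submodule.mem_map_of_mem ih)
  have hMONO : ∀ (T : ℕ) (x : Fin n → ℝ) (r : Fin n → ℝ), r ∈ R T →
      q ((AX ^ T) *ᵥ x + r) ≤ q x := by
    intro T
    induction T with
    | zero =>
      intro x r hr
      rw [hR] at hr
      simp only [Submodule.mem_bot] at hr
      subst hr
      rw [pow_zero, one_mulVec, add_zero]
    | succ T ih =>
      intro x r hr
      rw [hRsucc T] at hr
      obtain ⟨a, ha, b, hb, rfl⟩ := Submodule.mem_sup.mp hr
      obtain ⟨s, hs, rfl⟩ := Submodule.mem_map.mp ha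
      obtain ⟨v, rfl⟩ := hb
      have key : (AX ^ (T + 1)) *ᵥ x + (AX.mulVecLin s + W.mulVecLin v)
          = AX *ᵥ ((AX ^ T) *ᵥ x + s) + W *ᵥ v := by
        simp only [mulVecLin_apply, pow_succ', ← mulVec_mulVec, mulVec_add]
        abel
      rw [key]
      exact le_trans (hstep _ v) (ih x s hs)
  obtain ⟨N, hN⟩ := monotone_stabilizes_iff_noetherian.mpr inferInstance ⟨R, hmono⟩
  have hN' : ∀ M, N ≤ M → R N = R M := fun M h => hN M h
  have hq_zero : ∀ (k : ℕ) (v : Fin m → ℝ), q ((AX ^ k) *ᵥ (W *ᵥ v)) = 0 := by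
    intro k v
    set w : Fin n → ℝ := (AX ^ k) *ᵥ (W *ᵥ v) with hw
    have hle : q w ≤ 0 := by
      have h := hMONO (k + 1) 0 w (hmem1 k v)
      rwa [mulVec_zero, zero_add, hq0] at h
    have hge : 0 ≤ q w := by
      have hmem : (AX ^ N) *ᵥ w ∈ R N := by
        have e : (AX ^ N) *ᵥ w = (AX ^ (N + k)) *ᵥ (W *ᵥ v) := by
          rw [hw, mulVec_mulVec, ← pow_add]
        rw [e]
        have := hmem1 (N + k) v
        rwa [← hN' (N + k + 1) (by omega)] at this
      have h := hMONO N w (-(AX ^ N *ᵥ w)) (neg_mem hmem)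
      rwa [add_neg_cancel, hq0] at h
    linarith
  intro k v
  have h1 : q ((AX ^ k) *ᵥ (W *ᵥ v)) = 0 := hq_zero k v
  have h2 : q (AX *ᵥ ((AX ^ k) *ᵥ (W *ᵥ v))) = 0 := by
    have := hq_zero (k + 1) v
    rwa [pow_succ', ← mulVec_mulVec] at this
  have h3 := hstar ((AX ^ k) *ᵥ (W *ᵥ v)) 0
  rw [mulVec_zero, add_zero, mulVec_zero, add_zero, h1, h2] at h3
  have h4 : (CX *ᵥ ((AX ^ k) *ᵥ (W *ᵥ v))) ⬝ᵥ (CX *ᵥ ((AX ^ k) *ᵥ (W *ᵥ v))) = 0 := by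
    linarith
  exact dotProduct_self_eq_zero.mp h4

theorem stmt_11 (n m p : ℕ)
    (A : Matrix (Fin n) (Fin n) ℝ) (B : Matrix (Fin n) (Fin m) ℝ)
    (C : Matrix (Fin p) (Fin n) ℝ) (D : Matrix (Fin p) (Fin m) ℝ)
    (X : Matrix (Fin n) (Fin n) ℝ) (hX : Xᵀ = X)
    (RXd : Matrix (Fin m) (Fin m) ℝ)
    (pen1 : (Dᵀ * D + Bᵀ * X * B) * RXd * (Dᵀ * D + Bᵀ * X * B) = Dᵀ * D + Bᵀ * X * B)
    (pen2 : RXd * (Dᵀ * D + Bᵀ * X * B) * RXd = RXd)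
    (pen3 : ((Dᵀ * D + Bᵀ * X * B) * RXd)ᵀ = (Dᵀ * D + Bᵀ * X * B) * RXd)
    (pen4 : (RXd * (Dᵀ * D + Bᵀ * X * B))ᵀ = RXd * (Dᵀ * D + Bᵀ * X * B))
    (hGDARE : X = Aᵀ * X * A
        - (Aᵀ * X * B + Cᵀ * D) * RXd * (Aᵀ * X * B + Cᵀ * D)ᵀ + Cᵀ * C)
    (hker : ∀ v : Fin m → ℝ, (Dᵀ * D + Bᵀ * X * B).mulVec v = 0 →
        (Aᵀ * X * B + Cᵀ * D).mulVec v = 0) :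
    ∀ k : ℕ,
      (C - D * (RXd * (Aᵀ * X * B + Cᵀ * D)ᵀ))
        * (A - B * (RXd * (Aᵀ * X * B + Cᵀ * D)ᵀ)) ^ k
        * (B * (1 - RXd * (Dᵀ * D + Bᵀ * X * B))) = 0 := by
  set R1 : Matrix (Fin m) (Fin m) ℝ := Dᵀ * D + Bᵀ * X * B with hR1
  set S1 : Matrix (Fin n) (Fin m) ℝ := Aᵀ * X * B + Cᵀ * D with hS1
  set K : Matrix (Fin m) (Fin n) ℝ := RXd * S1ᵀ with hK
  set G : Matrix (Fin m) (Fin m) ℝ := 1 - RXd * R1 with hG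
  set AX : Matrix (Fin n) (Fin n) ℝ := A - B * K with hAX
  set CX : Matrix (Fin p) (Fin n) ℝ := C - D * K with hCX
  set W : Matrix (Fin n) (Fin m) ℝ := B * G with hW
  set DG : Matrix (Fin p) (Fin m) ℝ := D * G with hDG
  -- basic symmetry facts
  have hR1T : R1ᵀ = R1 := by
    rw [hR1]; simp [transpose_add, transpose_mul, Matrix.mul_assoc, hX]
  have hS1T : S1ᵀ = Bᵀ * X * A + Dᵀ * C := by
    rw [hS1]; simp [transpose_add, transpose_mul, Matrix.mul_assoc, hX]
  -- R1 * G = 0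
  have hRG : R1 * G = 0 := by
    rw [hG, Matrix.mul_sub, Matrix.mul_one, ← Matrix.mul_assoc, pen1, sub_self]
  -- S1 * G = 0 (via the kernel condition)
  have hSG : S1 * G = 0 := by
    ext i j
    have hcol : R1.mulVec (fun l => G l j) = 0 := by
      ext i'
      have h := congrFun (congrFun hRG i') j
      simpa [Matrix.mul_apply, Matrix.mulVec, dotProduct] using h
    have h2 := congrFun (hker _ hcol) i
    simpa [Matrix.mul_apply, Matrix.mulVec, dotProduct] using h2
  have hF4 : S1 * (RXd * R1) = S1 := by
    have h := hSG
    rw [hG, Matrix.mul_sub, Matrix.mul_one, sub_eq_zero] at h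
    exact h.symm
  have hF5 : R1 * (RXdᵀ * S1ᵀ) = S1ᵀ := by
    have h := congrArg transpose hF4
    simpa [transpose_mul, hR1T, Matrix.mul_assoc] using h
  have hL1 : R1 * (RXd * S1ᵀ) = S1ᵀ := by
    calc R1 * (RXd * S1ᵀ) = R1 * (RXd * (R1 * (RXdᵀ * S1ᵀ))) := by rw [hF5]
    _ = (R1 * RXd * R1) * (RXdᵀ * S1ᵀ) := by simp only [Matrix.mul_assoc]
    _ = R1 * (RXdᵀ * S1ᵀ) := by rw [pen1]
    _ = S1ᵀ := hF5
  have hKR2 : S1 * RXdᵀ * R1 = S1 := by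
    have h := congrArg transpose hL1
    simpa [transpose_mul, hR1T, Matrix.mul_assoc] using h
  have hKT : Kᵀ = S1 * RXdᵀ := by
    rw [hK]; simp [transpose_mul]
  have hKR : Kᵀ * R1 = S1 := by rw [hKT]; exact hKR2
  have hKS : Kᵀ * S1ᵀ = S1 * RXd * S1ᵀ := by
    rw [hKT]
    calc S1 * RXdᵀ * S1ᵀ = S1 * RXdᵀ * (R1 * (RXd * S1ᵀ)) := by rw [hL1]
    _ = (S1 * RXdᵀ * R1) * (RXd * S1ᵀ) := by simp only [Matrix.mul_assoc]
    _ = S1 * (RXd * S1ᵀ) := by rw [hKR2]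
    _ = S1 * RXd * S1ᵀ := by rw [Matrix.mul_assoc]
  -- identity (II): AXᵀ * X * B + CXᵀ * D = 0
  have hII : AXᵀ * X * B + CXᵀ * D = 0 := by
    have e : AXᵀ * X * B + CXᵀ * D
        = (Aᵀ * X * B + Cᵀ * D) - Kᵀ * (Dᵀ * D + Bᵀ * X * B) := by
      rw [hAX, hCX]
      simp only [transpose_sub, transpose_mul, Matrix.sub_mul, Matrix.mul_add,
        Matrix.mul_assoc]
      abel
    rw [e, ← hR1, ← hS1, hKR, sub_self]
  -- identity (I): AXᵀ * X * AX + CXᵀ * CX = X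
  have hI : AXᵀ * X * AX + CXᵀ * CX = X := by
    have step1 : AXᵀ * X * AX + CXᵀ * CX
        = (AXᵀ * X * A + CXᵀ * C) - (AXᵀ * X * B + CXᵀ * D) * K := by
      rw [hAX, hCX]
      simp only [Matrix.mul_sub, Matrix.sub_mul, Matrix.add_mul, Matrix.mul_assoc]
      abel
    have step2 : AXᵀ * X * A + CXᵀ * C
        = (Aᵀ * X * A + Cᵀ * C) - Kᵀ * (Bᵀ * X * A + Dᵀ * C) := by
      rw [hAX, hCX]
      simp only [transpose_sub, transpose_mul, Matrix.sub_mul, Matrix.mul_add,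
        Matrix.mul_assoc]
      abel
    rw [step1, hII, Matrix.zero_mul, sub_zero, step2, ← hS1T, hKS]
    conv_rhs => rw [hGDARE]
    abel
  -- identities (IIa), (IIb), (III)
  have hIIa : AXᵀ * X * W + CXᵀ * DG = 0 := by
    have h := congrArg (fun M => M * G) hII
    simp only [Matrix.add_mul, Matrix.zero_mul, Matrix.mul_assoc] at h
    rw [hW, hDG]
    simp only [Matrix.mul_assoc]
    exact h
  have hIIb : Wᵀ * X * AX + DGᵀ * CX = 0 := by
    have h := congrArg transpose hIIa
    simpa [transpose_add, transpose_mul, hX, Matrix.mul_assoc] using h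
  have hIII : Wᵀ * X * W + DGᵀ * DG = 0 := by
    have e : Wᵀ * X * W + DGᵀ * DG = Gᵀ * ((Dᵀ * D + Bᵀ * X * B) * G) := by
      rw [hW, hDG]
      simp only [transpose_mul, Matrix.mul_add, Matrix.add_mul, Matrix.mul_assoc]
      abel
    rw [e, ← hR1, hRG, Matrix.mul_zero]
  -- conclude
  intro k
  ext i j
  have h := main_core AX W CX DG X hI hIIa hIIb hIII k (Pi.single j 1)
  rw [mulVec_mulVec, mulVec_mulVec] at h
  have h2 := congrFun h i
  simp only [mulVec_single, mul_one, Pi.zero_apply, Matrix.zero_apply] at h2 ⊢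
  simpa using h2
end

section
/- Assume the Popov matrix Π = [[Q, S],[Sᵀ, R]] is positive semidefinite. If X is a symmetric solution of CGDARE(Σ), then ker R_X ⊆ ker (X B); that is, every v ∈ ℝ^m with R_X v = 0 satisfies X B v = 0 (equivalently, X B G_X = 0). -/
open Matrix

private lemma dot_shift {p q : ℕ} (M : Matrix (Fin p) (Fin q) ℝ) (a : Fin q → ℝ) (b : Fin p → ℝ) :
    (M *ᵥ a) ⬝ᵥ b = a ⬝ᵥ (Mᵀ *ᵥ b) := by
  rw [Matrix.dotProduct_mulVec, Matrix.vecMul_transpose]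

private lemma mp_unique {k : ℕ} (M Y Z : Matrix (Fin k) (Fin k) ℝ)
    (y1 : M * Y * M = M) (y2 : Y * M * Y = Y) (y3 : (M * Y)ᵀ = M * Y) (y4 : (Y * M)ᵀ = Y * M)
    (z1 : M * Z * M = M) (z2 : Z * M * Z = Z) (z3 : (M * Z)ᵀ = M * Z) (z4 : (Z * M)ᵀ = Z * M) :
    Y = Z := by
  have hMY : M * Y = M * Z := by
    calc M * Y = (M * Y)ᵀ := y3.symm
    _ = Yᵀ * Mᵀ := by rw [Matrix.transpose_mul]
    _ = Yᵀ * (M * Z * M)ᵀ := by rw [z1]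
    _ = Yᵀ * (Mᵀ * (M * Z)ᵀ) := by rw [Matrix.transpose_mul (M * Z) M]
    _ = (Yᵀ * Mᵀ) * (M * Z)ᵀ := by rw [mul_assoc]
    _ = (M * Y)ᵀ * (M * Z)ᵀ := by rw [← Matrix.transpose_mul M Y]
    _ = (M * Y) * (M * Z) := by rw [y3, z3]
    _ = ((M * Y) * M) * Z := by rw [mul_assoc (M * Y) M Z]
    _ = M * Z := by rw [y1]
  have hYM : Y * M = Z * M := by
    calc Y * M = (Y * M)ᵀ := y4.symm
    _ = Mᵀ * Yᵀ := by rw [Matrix.transpose_mul]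
    _ = (M * Z * M)ᵀ * Yᵀ := by rw [z1]
    _ = (Mᵀ * (M * Z)ᵀ) * Yᵀ := by rw [Matrix.transpose_mul (M * Z) M]
    _ = (Mᵀ * (Zᵀ * Mᵀ)) * Yᵀ := by rw [Matrix.transpose_mul M Z]
    _ = ((Mᵀ * Zᵀ) * Mᵀ) * Yᵀ := by rw [mul_assoc Mᵀ Zᵀ Mᵀ]
    _ = ((Z * M)ᵀ * Mᵀ) * Yᵀ := by rw [← Matrix.transpose_mul Z M]
    _ = ((Z * M) * Mᵀ) * Yᵀ := by rw [z4]
    _ = (Z * M) * (Mᵀ * Yᵀ) := by rw [mul_assoc]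
    _ = (Z * M) * (Y * M)ᵀ := by rw [← Matrix.transpose_mul Y M]
    _ = (Z * M) * (Y * M) := by rw [y4]
    _ = Z * ((M * Y) * M) := by rw [mul_assoc Z M (Y * M), ← mul_assoc M Y M]
    _ = Z * M := by rw [y1]
  calc Y = Y * M * Y := y2.symm
  _ = Y * (M * Z) := by rw [mul_assoc, hMY]
  _ = (Y * M) * Z := by rw [mul_assoc]
  _ = (Z * M) * Z := by rw [hYM]
  _ = Z := z2

private lemma quad_trick (D c : ℝ) (h : ∀ ε : ℝ, 0 ≤ ε ^ 2 * D + 2 * ε * c) : c = 0 := by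
  by_contra hc
  have habs : (0 : ℝ) < |D| + 1 := by positivity
  have h1 := h (-(c / (|D| + 1)))
  have hD : D ≤ |D| := le_abs_self D
  have hc2 : 0 < c ^ 2 := by positivity
  have key : (0 : ℝ) ≤ c ^ 2 * D - 2 * c ^ 2 * (|D| + 1) := by
    calc (0 : ℝ) = (|D| + 1) ^ 2 * 0 := by ring
    _ ≤ (|D| + 1) ^ 2 * ((-(c / (|D| + 1))) ^ 2 * D + 2 * (-(c / (|D| + 1))) * c) :=
      mul_le_mul_of_nonneg_left h1 (sq_nonneg _)
    _ = c ^ 2 * D - 2 * c ^ 2 * (|D| + 1) := by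
      field_simp
      ring
  nlinarith [key, hc2, hD, mul_le_mul_of_nonneg_left hD (le_of_lt hc2), abs_nonneg D]

theorem stmt_12 (n m : ℕ)
    (A : Matrix (Fin n) (Fin n) ℝ) (B : Matrix (Fin n) (Fin m) ℝ)
    (Q : Matrix (Fin n) (Fin n) ℝ) (S : Matrix (Fin n) (Fin m) ℝ)
    (R : Matrix (Fin m) (Fin m) ℝ)
    (hQ : Qᵀ = Q) (hR : Rᵀ = R)
    (hPi : (Matrix.fromBlocks Q S Sᵀ R).PosSemidef)
    (X : Matrix (Fin n) (Fin n) ℝ) (hX : Xᵀ = X)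
    (RXd : Matrix (Fin m) (Fin m) ℝ)
    (pen1 : (R + Bᵀ * X * B) * RXd * (R + Bᵀ * X * B) = R + Bᵀ * X * B)
    (pen2 : RXd * (R + Bᵀ * X * B) * RXd = RXd)
    (pen3 : ((R + Bᵀ * X * B) * RXd)ᵀ = (R + Bᵀ * X * B) * RXd)
    (pen4 : (RXd * (R + Bᵀ * X * B))ᵀ = RXd * (R + Bᵀ * X * B))
    (hGDARE : X = Aᵀ * X * A - (Aᵀ * X * B + S) * RXd * (Aᵀ * X * B + S)ᵀ + Q)
    (hker : ∀ v : Fin m → ℝ, (R + Bᵀ * X * B).mulVec v = 0 → (Aᵀ * X * B + S).mulVec v = 0) :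
    (∀ v : Fin m → ℝ, (R + Bᵀ * X * B).mulVec v = 0 → (X * B).mulVec v = 0)
    ∧ X * B * (1 - RXd * (R + Bᵀ * X * B)) = 0 := by
  set RX : Matrix (Fin m) (Fin m) ℝ := R + Bᵀ * X * B with hRXdef
  set SX : Matrix (Fin n) (Fin m) ℝ := Aᵀ * X * B + S with hSXdef
  have hRXs : RXᵀ = RX := by
    rw [hRXdef, Matrix.transpose_add, Matrix.transpose_mul, Matrix.transpose_mul,
      Matrix.transpose_transpose, hX, hR, ← Matrix.mul_assoc]
  have hSXT : SXᵀ = Bᵀ * X * A + Sᵀ := by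
    rw [hSXdef, Matrix.transpose_add, Matrix.transpose_mul, Matrix.transpose_mul,
      Matrix.transpose_transpose, hX, ← Matrix.mul_assoc]
  have hRXdsym : RXdᵀ = RXd := by
    have e4 : RX * RXdᵀ = RXd * RX := by
      conv_lhs => rw [← hRXs]
      rw [← Matrix.transpose_mul RXd RX, pen4]
    have e3 : RXdᵀ * RX = RX * RXd := by
      conv_lhs => rw [← hRXs]
      rw [← Matrix.transpose_mul RX RXd, pen3]
    have y1 : RX * RXdᵀ * RX = RX := by
      have h := congrArg Matrix.transpose pen1
      rw [Matrix.transpose_mul, Matrix.transpose_mul, hRXs] at h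
      rw [← Matrix.mul_assoc] at h
      exact h
    have y2 : RXdᵀ * RX * RXdᵀ = RXdᵀ := by
      have h := congrArg Matrix.transpose pen2
      rw [Matrix.transpose_mul, Matrix.transpose_mul, hRXs] at h
      rw [← Matrix.mul_assoc] at h
      exact h
    have y3 : (RX * RXdᵀ)ᵀ = RX * RXdᵀ := by
      rw [Matrix.transpose_mul, Matrix.transpose_transpose, hRXs, e4]
    have y4 : (RXdᵀ * RX)ᵀ = RXdᵀ * RX := by
      rw [Matrix.transpose_mul, Matrix.transpose_transpose, hRXs, e3]
    exact mp_unique RX RXdᵀ RXd y1 y2 y3 y4 pen1 pen2 pen3 pen4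
  have main : ∀ v : Fin m → ℝ, RX *ᵥ v = 0 → (X * B) *ᵥ v = 0 := by
    intro v hv1
    have hv2 : SX *ᵥ v = 0 := hker v hv1
    set w : Fin n → ℝ := B *ᵥ v with hw
    set F : Matrix (Fin n) (Fin n) ℝ := A - B * RXd * SXᵀ with hF
    have hstep : ∀ (z : Fin n → ℝ) (α : ℝ),
        (F *ᵥ z + α • w) ⬝ᵥ (X *ᵥ (F *ᵥ z + α • w)) ≤ z ⬝ᵥ (X *ᵥ z) := by
      intro z α
      set s : Fin m → ℝ := SXᵀ *ᵥ z with hs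
      set u : Fin m → ℝ := α • v - RXd *ᵥ s with hu
      have hvec : F *ᵥ z + α • w = A *ᵥ z + B *ᵥ u := by
        rw [hu, Matrix.mulVec_sub, Matrix.mulVec_smul, hF, Matrix.sub_mulVec, hw,
          Matrix.mulVec_mulVec, Matrix.mulVec_mulVec]
        abel
      have hpos : 0 ≤ z ⬝ᵥ (Q *ᵥ z) + z ⬝ᵥ (S *ᵥ u) + (u ⬝ᵥ (Sᵀ *ᵥ z) + u ⬝ᵥ (R *ᵥ u)) := by
        have h0 := (Matrix.posSemidef_iff_dotProduct_mulVec.mp hPi).2 (Sum.elim z u)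
        rw [show star (Sum.elim z u) = Sum.elim z u from star_trivial _] at h0
        rw [Matrix.fromBlocks_mulVec, Sum.elim_comp_inl, Sum.elim_comp_inr] at h0
        rw [sumElim_dotProduct_sumElim, dotProduct_add,
          dotProduct_add] at h0
        linarith
      have hsv : s ⬝ᵥ v = 0 := by
        rw [hs, dot_shift, Matrix.transpose_transpose, hv2, dotProduct_zero]
      have hsu : s ⬝ᵥ u = -(s ⬝ᵥ (RXd *ᵥ s)) := by
        rw [hu, dotProduct_sub, dotProduct_smul, hsv, smul_zero, zero_sub]
      have hRXu : RX *ᵥ u = -((RX * RXd) *ᵥ s) := by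
        rw [hu, Matrix.mulVec_sub, Matrix.mulVec_smul, hv1, smul_zero, zero_sub,
          Matrix.mulVec_mulVec]
      have huRXu : u ⬝ᵥ (RX *ᵥ u) = s ⬝ᵥ (RXd *ᵥ s) := by
        rw [hRXu, dotProduct_neg, hu, sub_dotProduct, smul_dotProduct]
        have t1 : v ⬝ᵥ ((RX * RXd) *ᵥ s) = 0 := by
          have h : ((RX * RXd)ᵀ *ᵥ v) ⬝ᵥ s = v ⬝ᵥ ((RX * RXd) *ᵥ s) := by
            rw [dot_shift, Matrix.transpose_transpose]
          rw [← h, Matrix.transpose_mul, hRXdsym, hRXs, ← Matrix.mulVec_mulVec, hv1,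
            Matrix.mulVec_zero, zero_dotProduct]
        have t2 : (RXd *ᵥ s) ⬝ᵥ ((RX * RXd) *ᵥ s) = s ⬝ᵥ (RXd *ᵥ s) := by
          rw [dot_shift, hRXdsym, Matrix.mulVec_mulVec, ← Matrix.mul_assoc, pen2]
        rw [t1, t2]
        simp
      have hus : u ⬝ᵥ s = -(s ⬝ᵥ (RXd *ᵥ s)) := by
        rw [dotProduct_comm, hsu]
      have gQ : Aᵀ * X * A + Q = X + SX * (RXd * SXᵀ) := by
        have h9 : X + SX * (RXd * SXᵀ) = (Aᵀ * X * A - SX * RXd * SXᵀ + Q) + SX * (RXd * SXᵀ) := by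
          rw [← hGDARE]
        rw [h9, ← Matrix.mul_assoc]
        abel
      have hzSX : ∀ c : Fin m → ℝ, z ⬝ᵥ (SX *ᵥ c) = s ⬝ᵥ c := by
        intro c
        rw [hs, dot_shift SXᵀ z c, Matrix.transpose_transpose]
      have expand : (A *ᵥ z + B *ᵥ u) ⬝ᵥ (X *ᵥ (A *ᵥ z + B *ᵥ u)) =
          z ⬝ᵥ ((Aᵀ * X * A) *ᵥ z) + z ⬝ᵥ ((Aᵀ * X * B) *ᵥ u)
            + (u ⬝ᵥ ((Bᵀ * X * A) *ᵥ z) + u ⬝ᵥ ((Bᵀ * X * B) *ᵥ u)) := by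
        simp only [Matrix.mulVec_add, dotProduct_add, add_dotProduct, dot_shift,
          Matrix.mulVec_mulVec]
        simp only [← Matrix.mul_assoc]
        ring
      have c1 : z ⬝ᵥ ((Aᵀ * X * A) *ᵥ z)
          = z ⬝ᵥ (X *ᵥ z) + s ⬝ᵥ (RXd *ᵥ s) - z ⬝ᵥ (Q *ᵥ z) := by
        have e1 : z ⬝ᵥ (((Aᵀ * X * A) + Q) *ᵥ z) = z ⬝ᵥ ((X + SX * (RXd * SXᵀ)) *ᵥ z) := by
          rw [gQ]
        rw [Matrix.add_mulVec, dotProduct_add, Matrix.add_mulVec, dotProduct_add]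
          at e1
        have e2 : z ⬝ᵥ ((SX * (RXd * SXᵀ)) *ᵥ z) = s ⬝ᵥ (RXd *ᵥ s) := by
          rw [← Matrix.mulVec_mulVec, hzSX, ← Matrix.mulVec_mulVec, ← hs]
        rw [e2] at e1
        linarith
      have c2 : z ⬝ᵥ ((Aᵀ * X * B) *ᵥ u) = s ⬝ᵥ u - z ⬝ᵥ (S *ᵥ u) := by
        have e1 : z ⬝ᵥ (SX *ᵥ u) = z ⬝ᵥ ((Aᵀ * X * B) *ᵥ u) + z ⬝ᵥ (S *ᵥ u) := by
          rw [hSXdef, Matrix.add_mulVec, dotProduct_add]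
        have e2 := hzSX u
        linarith
      have c3 : u ⬝ᵥ ((Bᵀ * X * A) *ᵥ z) = u ⬝ᵥ s - u ⬝ᵥ (Sᵀ *ᵥ z) := by
        have e1 : u ⬝ᵥ (SXᵀ *ᵥ z) = u ⬝ᵥ ((Bᵀ * X * A) *ᵥ z) + u ⬝ᵥ (Sᵀ *ᵥ z) := by
          rw [hSXT, Matrix.add_mulVec, dotProduct_add]
        rw [← hs] at e1
        linarith
      have c4 : u ⬝ᵥ ((Bᵀ * X * B) *ᵥ u) = u ⬝ᵥ (RX *ᵥ u) - u ⬝ᵥ (R *ᵥ u) := by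
        have e1 : u ⬝ᵥ (RX *ᵥ u) = u ⬝ᵥ (R *ᵥ u) + u ⬝ᵥ ((Bᵀ * X * B) *ᵥ u) := by
          rw [hRXdef, Matrix.add_mulVec, dotProduct_add]
        linarith
      have key : (A *ᵥ z + B *ᵥ u) ⬝ᵥ (X *ᵥ (A *ᵥ z + B *ᵥ u))
          = z ⬝ᵥ (X *ᵥ z)
            - (z ⬝ᵥ (Q *ᵥ z) + z ⬝ᵥ (S *ᵥ u) + (u ⬝ᵥ (Sᵀ *ᵥ z) + u ⬝ᵥ (R *ᵥ u))) := by
        rw [expand, c1, c2, c3, c4, hsu, hus, huRXu]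
        ring
      rw [hvec, key]
      linarith
    -- iterated trajectory inequality
    have hL1 : ∀ (N : ℕ) (c : ℕ → ℝ) (z : Fin n → ℝ),
        ((F ^ N) *ᵥ z + ∑ j ∈ Finset.range N, c j • ((F ^ j) *ᵥ w)) ⬝ᵥ
          (X *ᵥ ((F ^ N) *ᵥ z + ∑ j ∈ Finset.range N, c j • ((F ^ j) *ᵥ w)))
        ≤ z ⬝ᵥ (X *ᵥ z) := by
      intro N
      induction N with
      | zero =>
        intro c z
        simp [Matrix.one_mulVec]
      | succ N ih =>
        intro c z
        have hsum : F *ᵥ (∑ j ∈ Finset.range N, c (j + 1) • ((F ^ j) *ᵥ w))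
            = ∑ j ∈ Finset.range N, c (j + 1) • ((F ^ (j + 1)) *ᵥ w) := by
          rw [← Matrix.mulVecLin_apply, map_sum]
          refine Finset.sum_congr rfl fun j _ => ?_
          simp only [_root_.map_smul, Matrix.mulVecLin_apply, Matrix.mulVec_mulVec, ← pow_succ']
        have hrw : (F ^ (N + 1)) *ᵥ z + ∑ j ∈ Finset.range (N + 1), c j • ((F ^ j) *ᵥ w)
            = F *ᵥ ((F ^ N) *ᵥ z + ∑ j ∈ Finset.range N, c (j + 1) • ((F ^ j) *ᵥ w))
              + c 0 • w := by
          rw [Matrix.mulVec_add, hsum, Matrix.mulVec_mulVec, ← pow_succ']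
          rw [Finset.sum_range_succ' (fun j => c j • ((F ^ j) *ᵥ w)) N]
          simp [Matrix.one_mulVec]
          abel
        rw [hrw]
        exact le_trans (hstep _ (c 0)) (ih (fun j => c (j + 1)) z)
    -- linear dependence gives a steering relation
    have hL2 : ∃ (k : ℕ) (d : ℕ → ℝ),
        (F ^ k) *ᵥ w = ∑ j ∈ Finset.range k, d j • ((F ^ j) *ᵥ w) := by
      have hdep : ¬ LinearIndependent ℝ (fun i : Fin (n + 1) => (F ^ (i : ℕ)) *ᵥ w) := by
        intro h
        have hcard := h.fintype_card_le_finrank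
        rw [Module.finrank_fintype_fun_eq_card, Fintype.card_fin, Fintype.card_fin] at hcard
        omega
      obtain ⟨cf, hcf, i0, hi0⟩ := Fintype.not_linearIndependent_iff.mp hdep
      classical
      set c' : ℕ → ℝ := fun j => if h : j < n + 1 then cf ⟨j, h⟩ else 0 with hc'
      have hsum0 : ∑ j ∈ Finset.range (n + 1), c' j • ((F ^ j) *ᵥ w) = 0 := by
        rw [← Fin.sum_univ_eq_sum_range (fun j => c' j • ((F ^ j) *ᵥ w)) (n + 1)]
        rw [← hcf]
        refine Finset.sum_congr rfl fun i _ => ?_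
        simp [hc', i.is_lt, not_lt.mpr i.is_le]
      have hne : ∃ j < n + 1, c' j ≠ 0 := by
        refine ⟨i0, i0.is_lt, ?_⟩
        simp [hc', i0.is_lt, i0.is_le]
        exact hi0
      -- general extraction lemma, by induction
      have extract : ∀ (N : ℕ) (c : ℕ → ℝ),
          (∑ j ∈ Finset.range N, c j • ((F ^ j) *ᵥ w) = 0) →
          (∀ j < N, c j = 0) ∨
            ∃ (k : ℕ) (d : ℕ → ℝ), (F ^ k) *ᵥ w = ∑ j ∈ Finset.range k, d j • ((F ^ j) *ᵥ w) := by
        intro N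
        induction N with
        | zero => intro c _; exact Or.inl (fun j hj => absurd hj (Nat.not_lt_zero j))
        | succ N ih =>
          intro c hc0
          rw [Finset.sum_range_succ] at hc0
          by_cases hcN : c N = 0
          · rw [hcN, zero_smul, add_zero] at hc0
            rcases ih c hc0 with h | h
            · left
              intro j hj
              rcases Nat.lt_succ_iff_lt_or_eq.mp hj with h' | h'
              · exact h j h'
              · rw [h']; exact hcN
            · exact Or.inr h
          · right
            refine ⟨N, fun j => -(c j) / c N, ?_⟩
            have h4 : c N • ((F ^ N) *ᵥ w)
                = -(∑ j ∈ Finset.range N, c j • ((F ^ j) *ᵥ w)) :=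
              eq_neg_of_add_eq_zero_right hc0
            have h2 : (F ^ N) *ᵥ w
                = (c N)⁻¹ • -(∑ j ∈ Finset.range N, c j • ((F ^ j) *ᵥ w)) := by
              have h3 : (c N)⁻¹ • (c N • ((F ^ N) *ᵥ w)) = (F ^ N) *ᵥ w := by
                rw [smul_smul, inv_mul_cancel₀ hcN, one_smul]
              rw [← h3, h4]
            rw [h2, ← Finset.sum_neg_distrib, Finset.smul_sum]
            refine Finset.sum_congr rfl fun j _ => ?_
            rw [← neg_smul, smul_smul]
            congr 1
            field_simp
      rcases extract (n + 1) c' hsum0 with h | h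
      · obtain ⟨j, hj, hjne⟩ := hne
        exact absurd (h j hj) hjne
      · exact h
    -- conclude X *ᵥ w = 0
    have hw0 : w ⬝ᵥ (X *ᵥ w) ≤ 0 := by
      have h := hL1 1 (fun _ => 1) 0
      simpa [Matrix.one_mulVec, Matrix.mulVec_zero] using h
    obtain ⟨k, d, hkd⟩ := hL2
    have hXw : X *ᵥ w = 0 := by
      have hall : ∀ ξ : Fin n → ℝ, ξ ⬝ᵥ (X *ᵥ w) = 0 := by
        intro ξ
        have hsym : w ⬝ᵥ (X *ᵥ ξ) = ξ ⬝ᵥ (X *ᵥ w) := by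
          have h := dot_shift X w ξ
          rw [hX] at h
          rw [← h, dotProduct_comm]
        have master : ∀ ε : ℝ,
            0 ≤ ε ^ 2 * (ξ ⬝ᵥ (X *ᵥ ξ) - ((F ^ k) *ᵥ ξ) ⬝ᵥ (X *ᵥ ((F ^ k) *ᵥ ξ)))
              + 2 * ε * (ξ ⬝ᵥ (X *ᵥ w)) := by
          intro ε
          have h := hL1 k (fun j => -(d j)) (ε • ξ + w)
          have hv : (F ^ k) *ᵥ (ε • ξ + w) + ∑ j ∈ Finset.range k, (-(d j)) • ((F ^ j) *ᵥ w)
              = ε • ((F ^ k) *ᵥ ξ) := by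
            rw [Matrix.mulVec_add, Matrix.mulVec_smul, hkd]
            simp only [neg_smul, Finset.sum_neg_distrib]
            abel
          rw [hv] at h
          simp only [Matrix.mulVec_add, Matrix.mulVec_smul, dotProduct_add,
            add_dotProduct, dotProduct_smul, smul_dotProduct,
            smul_eq_mul] at h
          rw [hsym] at h
          nlinarith [hw0, h]
        have := quad_trick _ _ master
        exact this
      funext i
      have h := hall (Pi.single i 1)
      rwa [single_dotProduct, one_mul] at h
    rw [← Matrix.mulVec_mulVec]
    exact hXw
  refine ⟨main, ?_⟩
  ext i j
  have hcol : RX *ᵥ ((1 - RXd * RX) *ᵥ Pi.single j 1) = 0 := by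
    rw [Matrix.mulVec_mulVec]
    have hz : RX * (1 - RXd * RX) = 0 := by
      rw [Matrix.mul_sub, mul_one, ← Matrix.mul_assoc, pen1, sub_self]
    rw [hz, Matrix.zero_mulVec]
  have h := main _ hcol
  rw [Matrix.mulVec_mulVec] at h
  have h3 := congrFun h i
  rw [Matrix.mulVec_single] at h3
  simpa [Matrix.mul_assoc] using h3
end

section
/- Assume the Popov matrix Π = [[Q, S],[Sᵀ, R]] is positive semidefinite. If X is a symmetric solution of CGDARE(Σ), then X annihilates the reachable subspace ℛ₀ of the pair (A_X, B G_X); that is, X A_X^k B G_X = 0 for every k ≥ 0. -/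
open Matrix

namespace Stmt13Aux

lemma dpmv {a b : Type*} [Fintype a] [Fintype b] (M : Matrix a b ℝ) (x : b → ℝ) (y : a → ℝ) :
    (M *ᵥ x) ⬝ᵥ y = x ⬝ᵥ (Mᵀ *ᵥ y) := by
  rw [dotProduct_mulVec, vecMul_transpose, dotProduct_comm]

lemma psd_nonneg {ι : Type*} [Fintype ι] {P : Matrix ι ι ℝ} (hP : P.PosSemidef)
    (z : ι → ℝ) : 0 ≤ z ⬝ᵥ (P *ᵥ z) := by simpa using hP.dotProduct_mulVec_nonneg z

lemma psd_ker {ι : Type*} [Fintype ι] {P : Matrix ι ι ℝ} (hP : P.PosSemidef)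
    (z : ι → ℝ) (hz : z ⬝ᵥ (P *ᵥ z) = 0) : P *ᵥ z = 0 := by
  exact (hP.dotProduct_mulVec_zero_iff z).mp (by simpa using hz)

lemma mp_symm {p : Type*} [Fintype p] [DecidableEq p] (Rx P : Matrix p p ℝ)
    (hRx : Rxᵀ = Rx)
    (pen1 : Rx * P * Rx = Rx) (pen2 : P * Rx * P = P)
    (pen3 : (Rx * P)ᵀ = Rx * P) (pen4 : (P * Rx)ᵀ = P * Rx) :
    Pᵀ = P := by
  set T := Pᵀ with hT
  have t1 : Rx * T * Rx = Rx := by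
    have := congrArg Matrix.transpose pen1
    simpa [Matrix.transpose_mul, hRx, Matrix.mul_assoc] using this
  have t2 : T * Rx * T = T := by
    have := congrArg Matrix.transpose pen2
    simpa [Matrix.transpose_mul, hRx, Matrix.mul_assoc] using this
  have t3 : Rx * T = P * Rx := by
    have h : (P * Rx)ᵀ = Rx * T := by rw [Matrix.transpose_mul, hRx]
    rw [← h, pen4]
  have t4 : T * Rx = Rx * P := by
    have h : (Rx * P)ᵀ = T * Rx := by rw [Matrix.transpose_mul, hRx]
    rw [← h, pen3]
  have sAH : (Rx * T)ᵀ = Rx * T := by rw [t3, pen4, ← t3]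
  have sHA : (T * Rx)ᵀ = T * Rx := by rw [t4, pen3, ← t4]
  have e1 : Rx * P = Rx * T := by
    calc Rx * P = (Rx * T * Rx) * P := by rw [t1]
      _ = (Rx * T) * (Rx * P) := by rw [Matrix.mul_assoc]
      _ = (Rx * T)ᵀ * (Rx * P)ᵀ := by rw [sAH, pen3]
      _ = ((Rx * P) * (Rx * T))ᵀ := by rw [← Matrix.transpose_mul]
      _ = ((Rx * P * Rx) * T)ᵀ := by rw [Matrix.mul_assoc, Matrix.mul_assoc, Matrix.mul_assoc]
      _ = (Rx * T)ᵀ := by rw [pen1]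
      _ = Rx * T := sAH
  have e2 : P * Rx = T * Rx := by
    calc P * Rx = P * (Rx * T * Rx) := by rw [t1]
      _ = (P * Rx) * (T * Rx) := by simp only [Matrix.mul_assoc]
      _ = (P * Rx)ᵀ * (T * Rx)ᵀ := by rw [pen4, sHA]
      _ = ((T * Rx) * (P * Rx))ᵀ := by rw [← Matrix.transpose_mul]
      _ = (T * (Rx * P * Rx))ᵀ := by simp only [Matrix.mul_assoc]
      _ = (T * Rx)ᵀ := by rw [pen1]
      _ = T * Rx := sHA
  calc Pᵀ = T := rfl
    _ = T * Rx * T := t2.symm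
    _ = (T * Rx) * P := by
        rw [Matrix.mul_assoc, Matrix.mul_assoc, ← e1, ← Matrix.mul_assoc, ← e2, Matrix.mul_assoc]
    _ = (P * Rx) * P := by rw [← e2]
    _ = P := pen2

variable {n m : ℕ}

lemma sum_mulVec' {a b : Type*} [Fintype b] {ι : Type*} (s : Finset ι)
    (f : ι → Matrix a b ℝ) (y : b → ℝ) : (∑ i ∈ s, f i) *ᵥ y = ∑ i ∈ s, f i *ᵥ y := by
  classical
  induction s using Finset.induction_on with
  | empty => simp [zero_mulVec]
  | insert _ _ h ih => rw [Finset.sum_insert h, Finset.sum_insert h, add_mulVec, ih]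

lemma mulVec_sum' {a b : Type*} [Fintype b] {ι : Type*} (s : Finset ι)
    (M : Matrix a b ℝ) (f : ι → b → ℝ) : M *ᵥ (∑ i ∈ s, f i) = ∑ i ∈ s, M *ᵥ f i := by
  rw [← mulVecLin_apply, map_sum]; simp

def traj (F : Matrix (Fin n) (Fin n) ℝ) (H : Matrix (Fin n) (Fin m) ℝ)
    (a : Fin n → ℝ) (w : ℕ → Fin m → ℝ) : ℕ → Fin n → ℝ
  | 0 => a
  | t+1 => F *ᵥ traj F H a w t + H *ᵥ w t

lemma traj_shift (F : Matrix (Fin n) (Fin n) ℝ) (H : Matrix (Fin n) (Fin m) ℝ)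
    (a : Fin n → ℝ) (w : ℕ → Fin m → ℝ) :
    ∀ t, traj F H a w (t+1) = traj F H (F *ᵥ a + H *ᵥ w 0) (fun s => w (s+1)) t := by
  intro t
  induction t with
  | zero => rfl
  | succ t ih => show F *ᵥ traj F H a w (t+1) + H *ᵥ w (t+1) = _; rw [ih]; rfl

lemma pow_reduce (F : Matrix (Fin n) (Fin n) ℝ) (y : Fin n → ℝ) :
    ∀ M : ℕ, ∃ c : Fin n → ℝ, F ^ M *ᵥ y = ∑ i : Fin n, c i • (F ^ (i : ℕ) *ᵥ y) := by
  have hcoeff : F.charpoly.coeff n = 1 := by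
    have h := (Matrix.charpoly_monic F).coeff_natDegree
    rwa [Matrix.charpoly_natDegree_eq_dim, Fintype.card_fin] at h
  have key : F ^ n = -∑ i : Fin n, F.charpoly.coeff i • F ^ (i : ℕ) := by
    have h0 := Matrix.aeval_self_charpoly F
    rw [Polynomial.aeval_eq_sum_range, Matrix.charpoly_natDegree_eq_dim, Fintype.card_fin,
      Finset.sum_range_succ, hcoeff, one_smul, Finset.sum_range] at h0
    linear_combination (norm := abel) h0
  intro M
  induction M using Nat.strong_induction_on with
  | _ M IH =>
    by_cases h : M < n
    · refine ⟨Pi.single ⟨M, h⟩ 1, ?_⟩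
      rw [Finset.sum_eq_single (⟨M, h⟩ : Fin n)]
      · simp
      · intro b _ hb; simp [Pi.single_apply, hb]
      · intro hb; simp at hb
    · push_neg at h
      have hM : F ^ M *ᵥ y = -∑ i : Fin n, F.charpoly.coeff i • (F ^ (M - n + (i : ℕ)) *ᵥ y) := by
        have hsplit : F ^ M = F ^ (M - n) * F ^ n := by rw [← pow_add]; congr 1; omega
        have h1 : F ^ n *ᵥ y = -∑ i : Fin n, F.charpoly.coeff i • (F ^ (i : ℕ) *ᵥ y) := by
          rw [key, neg_mulVec, sum_mulVec']
          simp only [smul_mulVec]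
        calc F ^ M *ᵥ y = F ^ (M - n) *ᵥ (F ^ n *ᵥ y) := by rw [mulVec_mulVec, ← hsplit]
          _ = -∑ i : Fin n, F.charpoly.coeff i • (F ^ (M - n + (i : ℕ)) *ᵥ y) := by
              rw [h1, mulVec_neg, mulVec_sum']
              congr 1
              refine Finset.sum_congr rfl fun i _ => ?_
              rw [mulVec_smul, mulVec_mulVec, ← pow_add]
      choose cc hcc using fun i : Fin n => IH (M - n + (i : ℕ)) (by omega)
      refine ⟨fun j => -∑ i : Fin n, F.charpoly.coeff i * cc i j, ?_⟩
      rw [hM]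
      simp only [hcc, Finset.smul_sum, smul_smul, neg_smul, Finset.sum_smul,
        ← Finset.sum_neg_distrib]
      exact Finset.sum_comm

lemma steer (F : Matrix (Fin n) (Fin n) ℝ) (H : Matrix (Fin n) (Fin m) ℝ) (v : Fin m → ℝ) :
    ∀ N (a : Fin n → ℝ),
      (∃ c : Fin N → ℝ, F ^ N *ᵥ a = ∑ i : Fin N, c i • (F ^ (i : ℕ) *ᵥ (H *ᵥ v))) →
      ∃ w : ℕ → Fin m → ℝ, traj F H a w N = 0 := by
  intro N
  induction N with
  | zero =>
    rintro a ⟨c, hc⟩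
    refine ⟨fun _ => 0, ?_⟩
    simpa [traj] using hc
  | succ N ih =>
    rintro a ⟨c, hc⟩
    set d := c (Fin.last N) with hd
    have step : F ^ N *ᵥ (F *ᵥ a + H *ᵥ ((-d) • v)) =
        ∑ i : Fin N, c i.castSucc • (F ^ (i : ℕ) *ᵥ (H *ᵥ v)) := by
      rw [mulVec_add, mulVec_mulVec, ← pow_succ, hc, Fin.sum_univ_castSucc,
        mulVec_smul, mulVec_smul]
      simp only [Fin.val_last, neg_smul]
      abel
    obtain ⟨w', hw'⟩ := ih (F *ᵥ a + H *ᵥ ((-d) • v)) ⟨fun i => c i.castSucc, step⟩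
    refine ⟨fun s => if s = 0 then (-d) • v else w' (s - 1), ?_⟩
    rw [traj_shift]
    simp only [if_pos rfl]
    have hfun : (fun s => if s + 1 = 0 then (-d) • v else w' (s + 1 - 1)) = w' := by
      funext s; simp
    rw [hfun]
    exact hw'

end Stmt13Aux

open Stmt13Aux

theorem stmt_13 (n m : ℕ)
    (A : Matrix (Fin n) (Fin n) ℝ) (B : Matrix (Fin n) (Fin m) ℝ)
    (Q : Matrix (Fin n) (Fin n) ℝ) (S : Matrix (Fin n) (Fin m) ℝ)
    (R : Matrix (Fin m) (Fin m) ℝ)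
    (hQ : Qᵀ = Q) (hR : Rᵀ = R)
    (hPi : (Matrix.fromBlocks Q S Sᵀ R).PosSemidef)
    (X : Matrix (Fin n) (Fin n) ℝ) (hX : Xᵀ = X)
    (RXd : Matrix (Fin m) (Fin m) ℝ)
    (pen1 : (R + Bᵀ * X * B) * RXd * (R + Bᵀ * X * B) = R + Bᵀ * X * B)
    (pen2 : RXd * (R + Bᵀ * X * B) * RXd = RXd)
    (pen3 : ((R + Bᵀ * X * B) * RXd)ᵀ = (R + Bᵀ * X * B) * RXd)
    (pen4 : (RXd * (R + Bᵀ * X * B))ᵀ = RXd * (R + Bᵀ * X * B))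
    (hGDARE : X = Aᵀ * X * A - (Aᵀ * X * B + S) * RXd * (Aᵀ * X * B + S)ᵀ + Q)
    (hker : ∀ v : Fin m → ℝ, (R + Bᵀ * X * B).mulVec v = 0 → (Aᵀ * X * B + S).mulVec v = 0) :
    ∀ k : ℕ,
      X * (A - B * (RXd * (Aᵀ * X * B + S)ᵀ)) ^ k
        * (B * (1 - RXd * (R + Bᵀ * X * B))) = 0 := by
  intro k
  set SX : Matrix (Fin n) (Fin m) ℝ := Aᵀ * X * B + S with hSXdef
  set RX : Matrix (Fin m) (Fin m) ℝ := R + Bᵀ * X * B with hRXdef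
  set K : Matrix (Fin m) (Fin n) ℝ := RXd * SXᵀ with hKdef
  set G1 : Matrix (Fin m) (Fin m) ℝ := 1 - RXd * RX with hG1def
  set F : Matrix (Fin n) (Fin n) ℝ := A - B * K with hFdef
  set H : Matrix (Fin n) (Fin m) ℝ := B * G1 with hHdef
  -- symmetry facts
  have hRXs : RXᵀ = RX := by
    rw [hRXdef]
    rw [Matrix.transpose_add, Matrix.transpose_mul, Matrix.transpose_mul,
      Matrix.transpose_transpose, hR, hX, Matrix.mul_assoc]
  have hRXds : RXdᵀ = RXd := mp_symm RX RXd hRXs pen1 pen2 pen3 pen4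
  -- basic matrix identities
  have hRXG : RX * G1 = 0 := by
    rw [hG1def, Matrix.mul_sub, Matrix.mul_one, ← Matrix.mul_assoc, pen1, sub_self]
  have hSXG : SX * G1 = 0 := by
    have hcol : ∀ w : Fin m → ℝ, (SX * G1) *ᵥ w = 0 := by
      intro w
      rw [← mulVec_mulVec]
      apply hker
      rw [mulVec_mulVec, hRXG, zero_mulVec]
    ext i j
    have h := congrFun (hcol (Pi.single j 1)) i
    rw [mulVec_single] at h
    simpa using h
  have hSXRR : SX * (RXd * RX) = SX := by
    have h := hSXG
    rw [hG1def, Matrix.mul_sub, Matrix.mul_one, sub_eq_zero] at h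
    exact h.symm
  have hGK : RX * K = SXᵀ := by
    have h := congrArg Matrix.transpose hSXRR
    rw [Matrix.transpose_mul, Matrix.transpose_mul, hRXds, hRXs] at h
    show RX * (RXd * SXᵀ) = SXᵀ
    rw [← Matrix.mul_assoc]
    exact h
  have hKRX : Kᵀ * RX = SX := by
    show (RXd * SXᵀ)ᵀ * RX = SX
    rw [Matrix.transpose_mul, Matrix.transpose_transpose, hRXds, Matrix.mul_assoc, hSXRR]
  -- GDARE rewritten
  have hM4 : Aᵀ * (X * A) = X - Q + SX * K := by
    show Aᵀ * (X * A) = X - Q + SX * (RXd * SXᵀ)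
    simp only [← Matrix.mul_assoc]
    linear_combination (norm := abel) -hGDARE
  have hM5 : Aᵀ * (X * B) = SX - S := by
    simp only [← Matrix.mul_assoc]
    rw [hSXdef]; abel
  have hM6 : Bᵀ * (X * A) = SXᵀ - Sᵀ := by
    have h := congrArg Matrix.transpose hM5
    simp only [Matrix.transpose_sub, Matrix.transpose_mul, Matrix.transpose_transpose, hX] at h
    simp only [← Matrix.mul_assoc] at h ⊢
    exact h
  have hM7 : Bᵀ * (X * B) = RX - R := by
    simp only [← Matrix.mul_assoc]
    rw [hRXdef]; abel
  -- closed loop input and quadratic forms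
  set uu : (Fin n → ℝ) → (Fin m → ℝ) → (Fin m → ℝ) := fun x w => G1 *ᵥ w - K *ᵥ x with huu
  set f : (Fin n → ℝ) → ℝ := fun z => z ⬝ᵥ (X *ᵥ z) with hf
  set piQ : (Fin n → ℝ) → (Fin m → ℝ) → ℝ :=
    fun x u => x ⬝ᵥ (Q *ᵥ x + S *ᵥ u) + u ⬝ᵥ (Sᵀ *ᵥ x + R *ᵥ u) with hpiQ
  have hf0 : f 0 = (0 : ℝ) := by
    show (0 : Fin n → ℝ) ⬝ᵥ (X *ᵥ (0 : Fin n → ℝ)) = (0 : ℝ)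
    rw [mulVec_zero, dotProduct_zero]
  have hV0 : ∀ x w, A *ᵥ x + B *ᵥ (uu x w) = F *ᵥ x + H *ᵥ w := by
    intro x w
    show A *ᵥ x + B *ᵥ (G1 *ᵥ w - K *ᵥ x) = (A - B * K) *ᵥ x + (B * G1) *ᵥ w
    rw [mulVec_sub, mulVec_mulVec, mulVec_mulVec, sub_mulVec]
    abel
  have hKxu : ∀ x w, K *ᵥ x + uu x w = G1 *ᵥ w := by
    intro x w
    show K *ᵥ x + (G1 *ᵥ w - K *ᵥ x) = G1 *ᵥ w
    abel
  have hV4 : ∀ x w, Aᵀ *ᵥ (X *ᵥ (A *ᵥ x + B *ᵥ (uu x w)))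
      = X *ᵥ x - (Q *ᵥ x + S *ᵥ (uu x w)) := by
    intro x w
    have h1 : X *ᵥ (A *ᵥ x + B *ᵥ (uu x w)) = (X * A) *ᵥ x + (X * B) *ᵥ (uu x w) := by
      rw [mulVec_add, mulVec_mulVec, mulVec_mulVec]
    rw [h1, mulVec_add, mulVec_mulVec, mulVec_mulVec, hM4, hM5]
    have h2 : SX *ᵥ (K *ᵥ x) + SX *ᵥ (uu x w) = 0 := by
      rw [← mulVec_add, hKxu x w, mulVec_mulVec, hSXG, zero_mulVec]
    simp only [add_mulVec, sub_mulVec, ← mulVec_mulVec]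
    linear_combination (norm := abel) h2
  have hV5 : ∀ x w, Bᵀ *ᵥ (X *ᵥ (A *ᵥ x + B *ᵥ (uu x w)))
      = -(Sᵀ *ᵥ x + R *ᵥ (uu x w)) := by
    intro x w
    have h1 : X *ᵥ (A *ᵥ x + B *ᵥ (uu x w)) = (X * A) *ᵥ x + (X * B) *ᵥ (uu x w) := by
      rw [mulVec_add, mulVec_mulVec, mulVec_mulVec]
    rw [h1, mulVec_add, mulVec_mulVec, mulVec_mulVec, hM6, hM7]
    have h2 : SXᵀ *ᵥ x + RX *ᵥ (uu x w) = 0 := by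
      have h3 : RX *ᵥ (uu x w) = RX *ᵥ (G1 *ᵥ w) - RX *ᵥ (K *ᵥ x) := by
        show RX *ᵥ (G1 *ᵥ w - K *ᵥ x) = _
        rw [mulVec_sub]
      rw [h3, mulVec_mulVec, mulVec_mulVec, hRXG, hGK, zero_mulVec]
      abel
    simp only [sub_mulVec]
    linear_combination (norm := abel) h2
  have hV1 : ∀ x w, piQ x (uu x w) = f x - f (A *ᵥ x + B *ᵥ (uu x w)) := by
    intro x w
    have e : f (A *ᵥ x + B *ᵥ (uu x w))
        = x ⬝ᵥ (X *ᵥ x - (Q *ᵥ x + S *ᵥ (uu x w)))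
          + (uu x w) ⬝ᵥ (-(Sᵀ *ᵥ x + R *ᵥ (uu x w))) := by
      show (A *ᵥ x + B *ᵥ (uu x w)) ⬝ᵥ (X *ᵥ (A *ᵥ x + B *ᵥ (uu x w))) = _
      rw [add_dotProduct, dpmv, dpmv, hV4 x w, hV5 x w]
    rw [e]
    show x ⬝ᵥ (Q *ᵥ x + S *ᵥ (uu x w)) + (uu x w) ⬝ᵥ (Sᵀ *ᵥ x + R *ᵥ (uu x w))
      = x ⬝ᵥ (X *ᵥ x) - (x ⬝ᵥ (X *ᵥ x - (Q *ᵥ x + S *ᵥ (uu x w)))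
          + (uu x w) ⬝ᵥ (-(Sᵀ *ᵥ x + R *ᵥ (uu x w))))
    rw [dotProduct_sub, dotProduct_neg]
    ring
  -- Pi quadratic form
  have hPiQform : ∀ (x : Fin n → ℝ) (u : Fin m → ℝ),
      piQ x u = (Sum.elim x u) ⬝ᵥ ((Matrix.fromBlocks Q S Sᵀ R) *ᵥ (Sum.elim x u)) := by
    intro x u
    rw [fromBlocks_mulVec]
    rw [Sum.elim_comp_inl, Sum.elim_comp_inr]
    rw [sumElim_dotProduct_sumElim]
  have hPiQ_nonneg : ∀ x u, 0 ≤ piQ x u := by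
    intro x u
    rw [hPiQform]
    exact psd_nonneg hPi _
  have hPiQ_zero : ∀ x u, piQ x u = 0 → Q *ᵥ x + S *ᵥ u = 0 := by
    intro x u h
    rw [hPiQform] at h
    have h0 := psd_ker hPi _ h
    rw [fromBlocks_mulVec, Sum.elim_comp_inl, Sum.elim_comp_inr] at h0
    funext j
    exact congrFun h0 (Sum.inl j)
  -- Part I : f nonpositive on reachable generators
  have hmono : ∀ z, f (F *ᵥ z) ≤ f z := by
    intro z
    have h := hV1 z 0
    rw [hV0 z 0, mulVec_zero, add_zero] at h
    have h2 := hPiQ_nonneg z (uu z 0)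
    linarith
  have hbase : ∀ v : Fin m → ℝ, f (H *ᵥ v) ≤ 0 := by
    intro v
    have h := hV1 0 v
    rw [hV0 0 v, mulVec_zero, zero_add, hf0] at h
    have h2 := hPiQ_nonneg 0 (uu 0 v)
    linarith
  have hPartI : ∀ (v : Fin m → ℝ) (j : ℕ), f (F ^ j *ᵥ (H *ᵥ v)) ≤ 0 := by
    intro v j
    induction j with
    | zero => rw [pow_zero, one_mulVec]; exact hbase v
    | succ j ih =>
      have hpow : F ^ (j + 1) *ᵥ (H *ᵥ v) = F *ᵥ (F ^ j *ᵥ (H *ᵥ v)) := by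
        rw [pow_succ', ← mulVec_mulVec]
      rw [hpow]
      exact le_trans (hmono _) ih
  -- telescoping sum
  have htel : ∀ (a : Fin n → ℝ) (w : ℕ → Fin m → ℝ) (N : ℕ),
      ∑ t ∈ Finset.range N, piQ (traj F H a w t) (uu (traj F H a w t) (w t))
        = f a - f (traj F H a w N) := by
    intro a w N
    induction N with
    | zero => simp [traj]
    | succ N ih =>
      rw [Finset.sum_range_succ, ih]
      have hstep := hV1 (traj F H a w N) (w N)
      rw [hV0] at hstep
      have htr : traj F H a w (N + 1) = F *ᵥ traj F H a w N + H *ᵥ w N := rfl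
      rw [htr, hstep]
      ring
  -- final assembly
  suffices hvec : ∀ v : Fin m → ℝ, X *ᵥ (F ^ k *ᵥ (H *ᵥ v)) = 0 by
    ext i j
    have h2 : (X * F ^ k * H) *ᵥ (Pi.single j 1) = 0 := by
      rw [Matrix.mul_assoc, ← mulVec_mulVec, ← mulVec_mulVec]
      exact hvec _
    rw [mulVec_single] at h2
    have h3 := congrFun h2 i
    simpa using h3
  intro v
  obtain ⟨c, hc⟩ := pow_reduce F (H *ᵥ v) (n + k)
  have hre : F ^ n *ᵥ (F ^ k *ᵥ (H *ᵥ v)) = ∑ i : Fin n, c i • (F ^ (i : ℕ) *ᵥ (H *ᵥ v)) := by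
    rw [mulVec_mulVec, ← pow_add]
    exact hc
  obtain ⟨w, hw⟩ := steer F H v n (F ^ k *ᵥ (H *ᵥ v)) ⟨c, hre⟩
  set r : Fin n → ℝ := F ^ k *ᵥ (H *ᵥ v) with hrdef
  have hterm_nonneg : ∀ t ∈ Finset.range n,
      0 ≤ piQ (traj F H r w t) (uu (traj F H r w t) (w t)) :=
    fun t _ => hPiQ_nonneg _ _
  have hsum : ∑ t ∈ Finset.range n, piQ (traj F H r w t) (uu (traj F H r w t) (w t)) = f r := by
    rw [htel, hw, hf0, sub_zero]
  have hfr_le : f r ≤ 0 := hPartI v k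
  have hfr0 : f r = 0 := le_antisymm hfr_le (hsum ▸ Finset.sum_nonneg hterm_nonneg)
  have hzero : ∀ t ∈ Finset.range n,
      piQ (traj F H r w t) (uu (traj F H r w t) (w t)) = 0 :=
    (Finset.sum_eq_zero_iff_of_nonneg hterm_nonneg).mp (by rw [hsum, hfr0])
  have hQS : ∀ t, t < n →
      Q *ᵥ (traj F H r w t) + S *ᵥ (uu (traj F H r w t) (w t)) = 0 := by
    intro t ht
    exact hPiQ_zero _ _ (hzero t (Finset.mem_range.mpr ht))
  have hback : ∀ d, d ≤ n → X *ᵥ (traj F H r w (n - d)) = 0 := by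
    intro d
    induction d with
    | zero =>
      intro _
      rw [Nat.sub_zero, hw, mulVec_zero]
    | succ d ih =>
      intro hdn
      have hIH := ih (by omega)
      have hs1 : n - d = (n - (d + 1)) + 1 := by omega
      rw [hs1] at hIH
      have hstep := hV4 (traj F H r w (n - (d + 1))) (w (n - (d + 1)))
      rw [hV0] at hstep
      have htr : traj F H r w ((n - (d + 1)) + 1)
          = F *ᵥ traj F H r w (n - (d + 1)) + H *ᵥ w (n - (d + 1)) := rfl
      rw [← htr, hIH, mulVec_zero] at hstep
      rw [hQS (n - (d + 1)) (by omega), sub_zero] at hstep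
      exact hstep.symm
  have hfin := hback n (le_refl n)
  rw [Nat.sub_self] at hfin
  exact hfin
end

section
/- Assume the Popov matrix Π = [[Q, S],[Sᵀ, R]] is positive semidefinite. If X is a symmetric solution of CGDARE(Σ), then ker R_X = ker (X B) ∩ ker R; that is, for v ∈ ℝ^m one has R_X v = 0 if and only if X B v = 0 and R v = 0. -/
open Matrix Finset

section helpers
variable {n m : ℕ} {ι : Type*} [Fintype ι]

lemma dotShift (M : Matrix ι (Fin n) ℝ) (a : Fin n → ℝ) (y : ι → ℝ) :
    (M *ᵥ a) ⬝ᵥ y = a ⬝ᵥ (Mᵀ *ᵥ y) := by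
  rw [dotProduct_mulVec, vecMul_transpose]

lemma dotSym (X : Matrix (Fin n) (Fin n) ℝ) (hX : Xᵀ = X) (a b : Fin n → ℝ) :
    a ⬝ᵥ (X *ᵥ b) = b ⬝ᵥ (X *ᵥ a) := by
  simp only [dotProduct, mulVec, Finset.mul_sum]
  rw [Finset.sum_comm]
  refine Finset.sum_congr rfl fun j _ => Finset.sum_congr rfl fun i _ => ?_
  have h : X i j = X j i := by conv_lhs => rw [← hX, transpose_apply]
  rw [h]; ring

omit [Fintype ι] in
lemma sumDot [Fintype ι] (s : Finset ℕ) (f : ℕ → ι → ℝ) (w : ι → ℝ) :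
    (∑ j ∈ s, f j) ⬝ᵥ w = ∑ j ∈ s, (f j) ⬝ᵥ w := by
  simp only [dotProduct, Finset.sum_apply, Finset.sum_mul]
  exact Finset.sum_comm

omit [Fintype ι] in
lemma dotSum [Fintype ι] (s : Finset ℕ) (w : ι → ℝ) (f : ℕ → ι → ℝ) :
    w ⬝ᵥ (∑ j ∈ s, f j) = ∑ j ∈ s, w ⬝ᵥ (f j) := by
  simp only [dotProduct, Finset.sum_apply, Finset.mul_sum]
  exact Finset.sum_comm

lemma mulVecSum (s : Finset ℕ) (M : Matrix ι (Fin n) ℝ) (f : ℕ → Fin n → ℝ) :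
    M *ᵥ (∑ j ∈ s, f j) = ∑ j ∈ s, M *ᵥ (f j) := by
  simpa only [mulVecLin_apply] using map_sum M.mulVecLin f s

omit [Fintype ι] in
lemma dotSelfNonneg [Fintype ι] (v : ι → ℝ) : 0 ≤ v ⬝ᵥ v :=
  Finset.sum_nonneg fun i _ => mul_self_nonneg _

end helpers

lemma fitting {n : ℕ} (M : Matrix (Fin n) (Fin n) ℝ) (w : Fin n → ℝ)
    (h0 : M *ᵥ w = 0) (h1 : ∀ k : ℕ, ∃ z, w = (M ^ k) *ᵥ z) : w = 0 := by
  set f := M.mulVecLin with hf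
  have hpow : ∀ k : ℕ, (M ^ k).mulVecLin = f ^ k := by
    intro k
    induction k with
    | zero => simp [pow_zero, Matrix.mulVecLin_one]; rfl
    | succ k ih =>
        rw [pow_succ, pow_succ, Matrix.mulVecLin_mul, ih, Module.End.mul_eq_comp]
  obtain ⟨N0, hN0⟩ := Filter.eventually_atTop.mp (Module.End.eventually_disjoint_ker_pow_range_pow f)
  have hdisj := hN0 (N0 + 1) (Nat.le_succ N0)
  have hfw : f w = 0 := by simpa [hf, Matrix.mulVecLin_apply] using h0
  have hker : w ∈ LinearMap.ker (f ^ (N0 + 1)) := by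
    rw [LinearMap.mem_ker, pow_succ, Module.End.mul_apply, hfw, map_zero]
  have hrange : w ∈ LinearMap.range (f ^ (N0 + 1)) := by
    obtain ⟨z, hz⟩ := h1 (N0 + 1)
    exact ⟨z, by rw [← hpow, Matrix.mulVecLin_apply, ← hz]⟩
  exact Submodule.disjoint_def.mp hdisj w hker hrange

lemma core {n : ℕ} {ι : Type*} [Fintype ι]
    (T X : Matrix (Fin n) (Fin n) ℝ) (W : Matrix ι (Fin n) ℝ)
    (u : Fin n → ℝ) (dv : ι → ℝ)
    (hX : Xᵀ = X)
    (hId : X = Tᵀ * X * T + Wᵀ * W)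
    (h1 : Tᵀ *ᵥ (X *ᵥ u) = -(Wᵀ *ᵥ dv))
    (h2 : u ⬝ᵥ (X *ᵥ u) = -(dv ⬝ᵥ dv)) :
    X *ᵥ u = 0 := by
  classical
  by_cases hu : u = 0
  · rw [hu, mulVec_zero]
  -- the sequences
  set U : ℕ → Fin n → ℝ := fun k => (T ^ k) *ᵥ u with hU
  have hU0 : U 0 = u := by simp [hU]
  have hUsucc : ∀ k, U (k + 1) = T *ᵥ U k := by
    intro k
    simp only [hU]
    rw [mulVec_mulVec, ← pow_succ']
  set c : ℕ → ι → ℝ := fun k => Nat.casesOn k dv (fun r => W *ᵥ U r) with hc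
  have hc0 : c 0 = dv := rfl
  have hcs : ∀ r, c (r + 1) = W *ᵥ U r := fun r => rfl
  -- recursion
  have hTXT : Tᵀ * X * T = X - Wᵀ * W := by
    nth_rewrite 2 [hId]
    rw [add_sub_cancel_right]
  have hgsym : ∀ j k, U j ⬝ᵥ (X *ᵥ U k) = U k ⬝ᵥ (X *ᵥ U j) :=
    fun j k => dotSym X hX (U j) (U k)
  have hstep : ∀ j k, U (j + 1) ⬝ᵥ (X *ᵥ U (k + 1))
      = U j ⬝ᵥ (X *ᵥ U k) - (c (j + 1)) ⬝ᵥ (c (k + 1)) := by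
    intro j k
    rw [hcs, hcs, hUsucc j, hUsucc k]
    calc (T *ᵥ U j) ⬝ᵥ (X *ᵥ (T *ᵥ U k))
        = U j ⬝ᵥ (Tᵀ *ᵥ (X *ᵥ (T *ᵥ U k))) := dotShift T (U j) _
    _ = U j ⬝ᵥ ((Tᵀ * X * T) *ᵥ U k) := by rw [mulVec_mulVec, mulVec_mulVec]
    _ = U j ⬝ᵥ (X *ᵥ U k - (Wᵀ * W) *ᵥ U k) := by rw [hTXT, sub_mulVec]
    _ = U j ⬝ᵥ (X *ᵥ U k) - U j ⬝ᵥ ((Wᵀ * W) *ᵥ U k) := dotProduct_sub _ _ _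
    _ = U j ⬝ᵥ (X *ᵥ U k) - (W *ᵥ U j) ⬝ᵥ (W *ᵥ U k) := by
          rw [← mulVec_mulVec (U k) Wᵀ W, ← dotShift W (U j) (W *ᵥ U k)]
  have hseed : ∀ k, U 0 ⬝ᵥ (X *ᵥ U k) = -(c 0 ⬝ᵥ c k) := by
    intro k
    cases k with
    | zero => rw [hc0, hU0]; exact h2
    | succ k =>
        rw [hcs, hc0]
        calc U 0 ⬝ᵥ (X *ᵥ U (k + 1)) = U (k + 1) ⬝ᵥ (X *ᵥ U 0) := hgsym 0 (k + 1)
        _ = (T *ᵥ U k) ⬝ᵥ (X *ᵥ u) := by rw [hUsucc, hU0]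
        _ = U k ⬝ᵥ (Tᵀ *ᵥ (X *ᵥ u)) := dotShift T (U k) _
        _ = U k ⬝ᵥ (-(Wᵀ *ᵥ dv)) := by rw [h1]
        _ = -(U k ⬝ᵥ (Wᵀ *ᵥ dv)) := dotProduct_neg _ _
        _ = -((W *ᵥ U k) ⬝ᵥ dv) := congrArg Neg.neg (dotShift W (U k) dv).symm
        _ = -(dv ⬝ᵥ (W *ᵥ U k)) := by rw [dotProduct_comm]
  -- closed form
  have hclosed : ∀ j k, U j ⬝ᵥ (X *ᵥ U k)
      = -(∑ i ∈ Finset.range (min j k + 1), (c (j - i)) ⬝ᵥ (c (k - i))) := by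
    intro j
    induction j with
    | zero =>
        intro k
        rw [Nat.zero_min, Finset.sum_range_one]
        simpa using hseed k
    | succ j ih =>
        intro k
        cases k with
        | zero =>
            rw [Nat.min_zero, Finset.sum_range_one]
            rw [hgsym, hseed, dotProduct_comm]
            simp
        | succ k =>
            rw [hstep j k, ih k, Nat.succ_min_succ]
            conv_rhs => rw [Finset.sum_range_succ']
            simp only [Nat.succ_sub_succ, Nat.sub_zero]
            ring
  -- linear dependence of u, Tu, ..., T^n u
  have hnotli : ¬ LinearIndependent ℝ (fun i : Fin (n + 1) => U (i : ℕ)) := by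
    intro hli
    have hcard := hli.fintype_card_le_finrank
    rw [Module.finrank_fin_fun, Fintype.card_fin] at hcard
    omega
  obtain ⟨g, hgsum, i₀, hgi₀⟩ := Fintype.not_linearIndependent_iff.mp hnotli
  set g' : ℕ → ℝ := fun k => if h : k < n + 1 then g ⟨k, h⟩ else 0 with hg'
  have hg'coe : ∀ i : Fin (n + 1), g' (i : ℕ) = g i := by
    intro i
    simp only [hg', i.isLt, dif_pos, Fin.eta]
  set G : Finset ℕ := (Finset.range (n + 1)).filter (fun k => g' k ≠ 0) with hG
  have hGne : G.Nonempty := by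
    refine ⟨(i₀ : ℕ), ?_⟩
    rw [hG]
    exact Finset.mem_filter.mpr ⟨Finset.mem_range.mpr i₀.isLt, by rw [hg'coe i₀]; exact hgi₀⟩
  set e : ℕ := G.max' hGne with he
  have heG : e ∈ G := G.max'_mem hGne
  have helt : e < n + 1 := by
    have := heG; rw [hG] at this
    exact Finset.mem_range.mp (Finset.mem_filter.mp this).1
  have hg'e : g' e ≠ 0 := by
    have := heG; rw [hG] at this
    exact (Finset.mem_filter.mp this).2
  have hg'gt : ∀ j, e < j → g' j = 0 := by
    intro j hj
    by_cases hjlt : j < n + 1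
    · by_contra hne
      have hjG : j ∈ G := by
        rw [hG]; exact Finset.mem_filter.mpr ⟨Finset.mem_range.mpr hjlt, hne⟩
      have hle := G.le_max' j hjG
      rw [← he] at hle
      omega
    · simp only [hg']; rw [dif_neg hjlt]
  -- the basic linear relation
  have hrel : ∑ j ∈ Finset.range (e + 1), g' j • U j = 0 := by
    have hfull : ∑ j ∈ Finset.range (n + 1), g' j • U j = 0 := by
      rw [← Fin.sum_univ_eq_sum_range (fun j => g' j • U j) (n + 1)]
      rw [← hgsum]
      exact Finset.sum_congr rfl fun i _ => by rw [hg'coe i]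
    have hsub : Finset.range (e + 1) ⊆ Finset.range (n + 1) :=
      Finset.range_subset_range.mpr (by omega)
    have hvan : ∀ j ∈ Finset.range (n + 1), j ∉ Finset.range (e + 1) → g' j • U j = 0 := by
      intro j _ hjnot
      have : e < j := by
        simp only [Finset.mem_range] at hjnot; omega
      rw [hg'gt j this, zero_smul]
    exact (Finset.sum_subset hsub hvan).trans hfull
  have hUadd : ∀ (j q : ℕ), (T ^ q) *ᵥ U j = U (j + q) := by
    intro j q
    simp only [hU]
    rw [mulVec_mulVec, ← pow_add, Nat.add_comm]
  have hrelshift : ∀ q, ∑ j ∈ Finset.range (e + 1), g' j • U (j + q) = 0 := by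
    intro q
    calc ∑ j ∈ Finset.range (e + 1), g' j • U (j + q)
        = ∑ j ∈ Finset.range (e + 1), (T ^ q) *ᵥ (g' j • U j) := by
          refine Finset.sum_congr rfl fun j _ => ?_
          rw [mulVec_smul, hUadd]
    _ = (T ^ q) *ᵥ (∑ j ∈ Finset.range (e + 1), g' j • U j) := (mulVecSum _ _ _).symm
    _ = 0 := by rw [hrel, mulVec_zero]
  -- the quadratic form of the relation vanishes
  have hqsum : ∑ j ∈ Finset.range (e + 1), ∑ k ∈ Finset.range (e + 1),
      (g' j * g' k) * (U j ⬝ᵥ (X *ᵥ U k)) = 0 := by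
    have hexp : (∑ j ∈ Finset.range (e + 1), g' j • U j) ⬝ᵥ
        (X *ᵥ (∑ k ∈ Finset.range (e + 1), g' k • U k))
        = ∑ j ∈ Finset.range (e + 1), ∑ k ∈ Finset.range (e + 1),
            (g' j * g' k) * (U j ⬝ᵥ (X *ᵥ U k)) := by
      rw [mulVecSum, sumDot]
      refine Finset.sum_congr rfl fun j _ => ?_
      rw [dotSum]
      refine Finset.sum_congr rfl fun k _ => ?_
      rw [mulVec_smul, smul_dotProduct, dotProduct_smul, smul_eq_mul, smul_eq_mul]
      ring
    rw [← hexp, hrel, mulVec_zero, dotProduct_zero]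
  -- sum-of-squares identity
  have hkey : ∀ j ∈ Finset.range (e + 1), ∀ k ∈ Finset.range (e + 1),
      ∑ i ∈ Finset.range (e + 1),
        (if i ≤ j then g' j • c (j - i) else 0) ⬝ᵥ (if i ≤ k then g' k • c (k - i) else 0)
      = (g' j * g' k) * (∑ i ∈ Finset.range (min j k + 1), (c (j - i)) ⬝ᵥ (c (k - i))) := by
    intro j hj k hk
    have hsub : Finset.range (min j k + 1) ⊆ Finset.range (e + 1) := by
      apply Finset.range_subset_range.mpr
      simp only [Finset.mem_range] at hj hk
      omega
    have hvan : ∀ i ∈ Finset.range (e + 1), i ∉ Finset.range (min j k + 1) →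
        (if i ≤ j then g' j • c (j - i) else 0) ⬝ᵥ (if i ≤ k then g' k • c (k - i) else 0) = 0 := by
      intro i _ hinot
      have hmin : min j k < i := by
        simp only [Finset.mem_range] at hinot; omega
      rcases Nat.lt_or_ge j i with hji | hji
      · rw [if_neg (by omega), zero_dotProduct]
      · rw [if_neg (by omega : ¬ i ≤ k), dotProduct_zero]
    rw [← Finset.sum_subset hsub hvan, Finset.mul_sum]
    refine Finset.sum_congr rfl fun i hi => ?_
    have hij : i ≤ j := by simp only [Finset.mem_range] at hi; omega
    have hik : i ≤ k := by simp only [Finset.mem_range] at hi; omega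
    rw [if_pos hij, if_pos hik, smul_dotProduct, dotProduct_smul, smul_eq_mul, smul_eq_mul]
    ring
  -- each E_i vanishes
  have hEzero : ∀ i ∈ Finset.range (e + 1),
      (∑ j ∈ Finset.range (e + 1), (if i ≤ j then g' j • c (j - i) else 0)) = 0 := by
    have hsum0 : ∑ i ∈ Finset.range (e + 1),
        (∑ j ∈ Finset.range (e + 1), (if i ≤ j then g' j • c (j - i) else 0)) ⬝ᵥ
        (∑ k ∈ Finset.range (e + 1), (if i ≤ k then g' k • c (k - i) else 0)) = 0 := by
      have hswap : ∑ i ∈ Finset.range (e + 1),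
          (∑ j ∈ Finset.range (e + 1), (if i ≤ j then g' j • c (j - i) else 0)) ⬝ᵥ
          (∑ k ∈ Finset.range (e + 1), (if i ≤ k then g' k • c (k - i) else 0))
          = ∑ j ∈ Finset.range (e + 1), ∑ k ∈ Finset.range (e + 1), ∑ i ∈ Finset.range (e + 1),
            (if i ≤ j then g' j • c (j - i) else 0) ⬝ᵥ (if i ≤ k then g' k • c (k - i) else 0) := by
        calc ∑ i ∈ Finset.range (e + 1),
            (∑ j ∈ Finset.range (e + 1), (if i ≤ j then g' j • c (j - i) else 0)) ⬝ᵥ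
            (∑ k ∈ Finset.range (e + 1), (if i ≤ k then g' k • c (k - i) else 0))
            = ∑ i ∈ Finset.range (e + 1), ∑ j ∈ Finset.range (e + 1),
              ∑ k ∈ Finset.range (e + 1),
              (if i ≤ j then g' j • c (j - i) else 0) ⬝ᵥ (if i ≤ k then g' k • c (k - i) else 0) := by
              refine Finset.sum_congr rfl fun i _ => ?_
              rw [sumDot]
              exact Finset.sum_congr rfl fun j _ => dotSum _ _ _
        _ = ∑ j ∈ Finset.range (e + 1), ∑ i ∈ Finset.range (e + 1),
              ∑ k ∈ Finset.range (e + 1),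
              (if i ≤ j then g' j • c (j - i) else 0) ⬝ᵥ (if i ≤ k then g' k • c (k - i) else 0) :=
              Finset.sum_comm
        _ = ∑ j ∈ Finset.range (e + 1), ∑ k ∈ Finset.range (e + 1),
              ∑ i ∈ Finset.range (e + 1),
              (if i ≤ j then g' j • c (j - i) else 0) ⬝ᵥ (if i ≤ k then g' k • c (k - i) else 0) :=
              Finset.sum_congr rfl fun j _ => Finset.sum_comm
      rw [hswap]
      have hterm : ∀ j ∈ Finset.range (e + 1), ∀ k ∈ Finset.range (e + 1),
          ∑ i ∈ Finset.range (e + 1),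
            (if i ≤ j then g' j • c (j - i) else 0) ⬝ᵥ (if i ≤ k then g' k • c (k - i) else 0)
          = -((g' j * g' k) * (U j ⬝ᵥ (X *ᵥ U k))) := by
        intro j hj k hk
        rw [hkey j hj k hk, hclosed j k]
        ring
      calc ∑ j ∈ Finset.range (e + 1), ∑ k ∈ Finset.range (e + 1),
            ∑ i ∈ Finset.range (e + 1),
            (if i ≤ j then g' j • c (j - i) else 0) ⬝ᵥ (if i ≤ k then g' k • c (k - i) else 0)
          = ∑ j ∈ Finset.range (e + 1), ∑ k ∈ Finset.range (e + 1),
            -((g' j * g' k) * (U j ⬝ᵥ (X *ᵥ U k))) :=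
            Finset.sum_congr rfl fun j hj => Finset.sum_congr rfl fun k hk => hterm j hj k hk
      _ = -(∑ j ∈ Finset.range (e + 1), ∑ k ∈ Finset.range (e + 1),
            (g' j * g' k) * (U j ⬝ᵥ (X *ᵥ U k))) := by
            rw [← Finset.sum_neg_distrib]
            exact Finset.sum_congr rfl fun j _ => Finset.sum_neg_distrib _
      _ = 0 := by rw [hqsum, neg_zero]
    intro i hi
    have hz := (Finset.sum_eq_zero_iff_of_nonneg
      (fun i _ => dotSelfNonneg (∑ j ∈ Finset.range (e + 1),
        (if i ≤ j then g' j • c (j - i) else 0)))).mp hsum0 i hi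
    exact dotProduct_self_eq_zero.mp hz
  -- all the c's vanish
  have hcz : ∀ s, c s = 0 := by
    intro s
    induction s using Nat.strong_induction_on with
    | _ s ih =>
      by_cases hse : s ≤ e
      · have hmem : e - s ∈ Finset.range (e + 1) := Finset.mem_range.mpr (by omega)
        have hE := hEzero (e - s) hmem
        rw [Finset.sum_range_succ] at hE
        have hlow : ∑ j ∈ Finset.range e,
            (if e - s ≤ j then g' j • c (j - (e - s)) else 0) = 0 := by
          apply Finset.sum_eq_zero
          intro j hj
          by_cases hle : e - s ≤ j
          · rw [if_pos hle]
            have hlt : j - (e - s) < s := by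
              simp only [Finset.mem_range] at hj; omega
            rw [ih _ hlt, smul_zero]
          · rw [if_neg hle]
        rw [hlow, zero_add, if_pos (Nat.sub_le e s), Nat.sub_sub_self hse] at hE
        exact (smul_eq_zero.mp hE).resolve_left hg'e
      · push_neg at hse
        have hs : s = e + (s - e - 1) + 1 := by omega
        set q := s - e - 1 with hqdef
        have h0 : ∑ j ∈ Finset.range (e + 1), g' j • c (j + q + 1) = 0 := by
          have happ := congrArg (fun y => W *ᵥ y) (hrelshift q)
          simp only [mulVec_zero] at happ
          rw [mulVecSum] at happ
          rw [← happ]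
          refine Finset.sum_congr rfl fun j _ => ?_
          rw [hcs, mulVec_smul]
        rw [Finset.sum_range_succ] at h0
        have hlow : ∑ j ∈ Finset.range e, g' j • c (j + q + 1) = 0 := by
          apply Finset.sum_eq_zero
          intro j hj
          have hlt : j + q + 1 < s := by
            simp only [Finset.mem_range] at hj; omega
          rw [ih _ hlt, smul_zero]
        rw [hlow, zero_add] at h0
        rw [hs]
        exact (smul_eq_zero.mp h0).resolve_left hg'e
  -- conclude
  have hdv : dv = 0 := by rw [← hc0]; exact hcz 0
  have hWU : ∀ r, W *ᵥ U r = 0 := fun r => by rw [← hcs]; exact hcz (r + 1)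
  have hrecw : ∀ k, X *ᵥ U k = Tᵀ *ᵥ (X *ᵥ U (k + 1)) := by
    intro k
    conv_lhs => rw [hId]
    rw [add_mulVec, ← mulVec_mulVec (U k) Wᵀ W, hWU, mulVec_zero, add_zero,
      ← mulVec_mulVec, ← hUsucc, ← mulVec_mulVec]
  have hwk : ∀ k, X *ᵥ u = ((Tᵀ) ^ k) *ᵥ (X *ᵥ U k) := by
    intro k
    induction k with
    | zero => rw [pow_zero, one_mulVec, hU0]
    | succ k ihk =>
        rw [ihk, hrecw k, mulVec_mulVec, ← pow_succ]
  have h1' : Tᵀ *ᵥ (X *ᵥ u) = 0 := by rw [h1, hdv, mulVec_zero, neg_zero]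
  exact fitting Tᵀ (X *ᵥ u) h1' (fun k => ⟨X *ᵥ U k, hwk k⟩)
/-- pseudoinverse of a symmetric matrix is symmetric -/
lemma pinvSymm {m : ℕ} (M G : Matrix (Fin m) (Fin m) ℝ)
    (hM : Mᵀ = M)
    (p1 : M * G * M = M) (p2 : G * M * G = G)
    (p3 : (M * G)ᵀ = M * G) (p4 : (G * M)ᵀ = G * M) : Gᵀ = G := by
  set H := Gᵀ with hH
  have p1H : M * H * M = M := by
    calc M * H * M = (Mᵀ * G * Mᵀ)ᵀ := by simp [hH, transpose_mul, mul_assoc]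
    _ = (M * G * M)ᵀ := by rw [hM]
    _ = M := by rw [p1, hM]
  have p3H : M * H = G * M := by
    calc M * H = (G * Mᵀ)ᵀ := by simp [hH]
    _ = (G * M)ᵀ := by rw [hM]
    _ = G * M := p4
  have p4H : H * M = M * G := by
    calc H * M = (Mᵀ * G)ᵀ := by simp [hH]
    _ = (M * G)ᵀ := by rw [hM]
    _ = M * G := p3
  have hMHsym : (M * H)ᵀ = M * H := by rw [p3H, p4, ← p3H]
  have hHMsym : (H * M)ᵀ = H * M := by rw [p4H, p3, ← p4H]
  have key : (M * H) * (M * G) = M * G := by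
    rw [← mul_assoc (M * H) M G, p1H]
  have e1 : M * G = M * H := by
    calc M * G = (M * G)ᵀ := p3.symm
    _ = ((M * H) * (M * G))ᵀ := by rw [key]
    _ = (M * G)ᵀ * (M * H)ᵀ := transpose_mul _ _
    _ = (M * G) * (M * H) := by rw [p3, hMHsym]
    _ = ((M * G) * M) * H := (mul_assoc _ _ _).symm
    _ = M * H := by rw [p1]
  have key2 : (G * M) * (H * M) = G * M := by
    rw [mul_assoc, ← mul_assoc M H M, p1H]
  have e2 : G * M = H * M := by
    calc G * M = (G * M)ᵀ := p4.symm
    _ = ((G * M) * (H * M))ᵀ := by rw [key2]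
    _ = (H * M)ᵀ * (G * M)ᵀ := transpose_mul _ _
    _ = (H * M) * (G * M) := by rw [p4, hHMsym]
    _ = H * (M * G * M) := by rw [mul_assoc, ← mul_assoc M G M]
    _ = H * M := by rw [p1]
  have p2H : H * (M * H) = H := by
    have := congrArg transpose p2
    calc H * (M * H) = (G * M * G)ᵀ := by
          simp [hH, transpose_mul, hM, mul_assoc]
    _ = H := by rw [p2]
  symm
  calc G = G * M * G := p2.symm
  _ = (H * M) * G := by rw [e2]
  _ = H * (M * G) := mul_assoc _ _ _
  _ = H * (M * H) := by rw [e1]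
  _ = H := p2H


theorem stmt_14 (n m : ℕ)
    (A : Matrix (Fin n) (Fin n) ℝ) (B : Matrix (Fin n) (Fin m) ℝ)
    (Q : Matrix (Fin n) (Fin n) ℝ) (S : Matrix (Fin n) (Fin m) ℝ)
    (R : Matrix (Fin m) (Fin m) ℝ)
    (hQ : Qᵀ = Q) (hR : Rᵀ = R)
    (hPi : (Matrix.fromBlocks Q S Sᵀ R).PosSemidef)
    (X : Matrix (Fin n) (Fin n) ℝ) (hX : Xᵀ = X)
    (RXd : Matrix (Fin m) (Fin m) ℝ)
    (pen1 : (R + Bᵀ * X * B) * RXd * (R + Bᵀ * X * B) = R + Bᵀ * X * B)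
    (pen2 : RXd * (R + Bᵀ * X * B) * RXd = RXd)
    (pen3 : ((R + Bᵀ * X * B) * RXd)ᵀ = (R + Bᵀ * X * B) * RXd)
    (pen4 : (RXd * (R + Bᵀ * X * B))ᵀ = RXd * (R + Bᵀ * X * B))
    (hGDARE : X = Aᵀ * X * A - (Aᵀ * X * B + S) * RXd * (Aᵀ * X * B + S)ᵀ + Q)
    (hker : ∀ v : Fin m → ℝ, (R + Bᵀ * X * B).mulVec v = 0 → (Aᵀ * X * B + S).mulVec v = 0) :
    ∀ v : Fin m → ℝ,
      (R + Bᵀ * X * B).mulVec v = 0 ↔ ((X * B).mulVec v = 0 ∧ R.mulVec v = 0) := by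
  intro v
  constructor
  · intro hv
    set RX : Matrix (Fin m) (Fin m) ℝ := R + Bᵀ * X * B with hRX
    set SX : Matrix (Fin n) (Fin m) ℝ := Aᵀ * X * B + S with hSX
    have hSXv : SX *ᵥ v = 0 := hker v hv
    have hRXsym : RXᵀ = RX := by
      rw [hRX]
      simp [transpose_add, transpose_mul, transpose_transpose, hR, hX, Matrix.mul_assoc]
    have hRXdsym : RXdᵀ = RXd := pinvSymm RX RXd hRXsym pen1 pen2 pen3 pen4
    set K : Matrix (Fin m) (Fin n) ℝ := RXd * SXᵀ with hK
    set T : Matrix (Fin n) (Fin n) ℝ := A - B * K with hT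
    have hKt : Kᵀ = SX * RXd := by
      rw [hK, transpose_mul, transpose_transpose, hRXdsym]
    have hTt : Tᵀ = Aᵀ - Kᵀ * Bᵀ := by
      rw [hT, transpose_sub, transpose_mul]
    have h5 : Kᵀ * RX * K = SX * RXd * SXᵀ := by
      calc Kᵀ * RX * K = SX * RXd * RX * (RXd * SXᵀ) := by rw [hKt, hK]
      _ = SX * (RXd * RX * RXd) * SXᵀ := by simp only [Matrix.mul_assoc]
      _ = SX * RXd * SXᵀ := by rw [pen2]
    have h3 : SX * K = SX * RXd * SXᵀ := by rw [hK, ← Matrix.mul_assoc]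
    have h4 : Kᵀ * SXᵀ = SX * RXd * SXᵀ := by rw [hKt]
    have hI1 : X = Tᵀ * X * T + (Q - S * K - Kᵀ * Sᵀ + Kᵀ * R * K) := by
      calc X = Aᵀ * X * A - SX * RXd * SXᵀ + Q := hGDARE
      _ = Aᵀ * X * A + Q - (SX * K + Kᵀ * SXᵀ - Kᵀ * RX * K) := by
            rw [h3, h4, h5]; abel
      _ = Tᵀ * X * T + (Q - S * K - Kᵀ * Sᵀ + Kᵀ * R * K) := by
            rw [hTt, hT, hSX, hRX]
            simp only [transpose_add, transpose_mul, transpose_transpose, hX,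
              Matrix.add_mul, Matrix.mul_add, Matrix.sub_mul, Matrix.mul_sub,
              Matrix.mul_assoc]
            abel
    obtain ⟨L, hL⟩ : ∃ L : Matrix (Fin n ⊕ Fin m) (Fin n ⊕ Fin m) ℝ,
        Matrix.fromBlocks Q S Sᵀ R = Lᴴ * L := by
      open scoped MatrixOrder in
      obtain ⟨L, hL⟩ := CStarAlgebra.nonneg_iff_eq_star_mul_self.mp hPi.nonneg
      exact ⟨L, hL⟩
    rw [Matrix.conjTranspose_eq_transpose_of_trivial] at hL
    set Cm : Matrix (Fin n ⊕ Fin m) (Fin n) ℝ := L.submatrix id Sum.inl with hCm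
    set Dm : Matrix (Fin n ⊕ Fin m) (Fin m) ℝ := L.submatrix id Sum.inr with hDm
    have hQf : Q = Cmᵀ * Cm := by
      ext i j
      have h := congrArg
        (fun M : Matrix (Fin n ⊕ Fin m) (Fin n ⊕ Fin m) ℝ => M (Sum.inl i) (Sum.inl j)) hL
      simpa [Matrix.fromBlocks_apply₁₁, Matrix.mul_apply, Matrix.transpose_apply,
        hCm, Matrix.submatrix_apply] using h
    have hSf : S = Cmᵀ * Dm := by
      ext i j
      have h := congrArg
        (fun M : Matrix (Fin n ⊕ Fin m) (Fin n ⊕ Fin m) ℝ => M (Sum.inl i) (Sum.inr j)) hL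
      simpa [Matrix.fromBlocks_apply₁₂, Matrix.mul_apply, Matrix.transpose_apply,
        hCm, hDm, Matrix.submatrix_apply] using h
    have hRf : R = Dmᵀ * Dm := by
      ext i j
      have h := congrArg
        (fun M : Matrix (Fin n ⊕ Fin m) (Fin n ⊕ Fin m) ℝ => M (Sum.inr i) (Sum.inr j)) hL
      simpa [Matrix.fromBlocks_apply₂₂, Matrix.mul_apply, Matrix.transpose_apply,
        hDm, Matrix.submatrix_apply] using h
    have hSt : Sᵀ = Dmᵀ * Cm := by rw [hSf, transpose_mul, transpose_transpose]
    set Wm : Matrix (Fin n ⊕ Fin m) (Fin n) ℝ := Cm - Dm * K with hWm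
    have hWW : Wmᵀ * Wm = Q - S * K - Kᵀ * Sᵀ + Kᵀ * R * K := by
      rw [hWm, transpose_sub, transpose_mul, hQf, hSt, hSf, hRf]
      simp only [Matrix.add_mul, Matrix.mul_add, Matrix.sub_mul, Matrix.mul_sub,
        Matrix.mul_assoc]
      abel
    have hWId : X = Tᵀ * X * T + Wmᵀ * Wm := by rw [hWW]; exact hI1
    have hTXB : Tᵀ * X * B = SX - S - Kᵀ * RX + Kᵀ * R := by
      rw [hTt, hSX, hRX]
      simp only [Matrix.add_mul, Matrix.mul_add, Matrix.sub_mul, Matrix.mul_sub,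
        Matrix.mul_assoc]
      abel
    have hWD : Wmᵀ * Dm = S - Kᵀ * R := by
      rw [hWm, transpose_sub, transpose_mul, hSf, hRf]
      simp only [Matrix.add_mul, Matrix.mul_add, Matrix.sub_mul, Matrix.mul_sub,
        Matrix.mul_assoc]
      try abel
    have h1' : Tᵀ *ᵥ (X *ᵥ (B *ᵥ v)) = -(Wmᵀ *ᵥ (Dm *ᵥ v)) := by
      rw [mulVec_mulVec, mulVec_mulVec, mulVec_mulVec, hTXB, hWD]
      rw [add_mulVec, sub_mulVec, sub_mulVec, sub_mulVec]
      rw [hSXv, ← mulVec_mulVec v Kᵀ RX, hv, mulVec_zero]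
      abel
    have hBXB : Bᵀ * X * B = RX - R := by rw [hRX, add_sub_cancel_left]
    have h2' : (B *ᵥ v) ⬝ᵥ (X *ᵥ (B *ᵥ v)) = -((Dm *ᵥ v) ⬝ᵥ (Dm *ᵥ v)) := by
      rw [dotShift B v (X *ᵥ (B *ᵥ v)), mulVec_mulVec, mulVec_mulVec, hBXB]
      rw [dotShift Dm v (Dm *ᵥ v), mulVec_mulVec, ← hRf]
      rw [sub_mulVec, dotProduct_sub, hv, dotProduct_zero, zero_sub]
    have hXu : X *ᵥ (B *ᵥ v) = 0 := core T X Wm (B *ᵥ v) (Dm *ᵥ v) hX hWId h1' h2'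
    constructor
    · show (X * B) *ᵥ v = 0
      rw [← mulVec_mulVec]
      exact hXu
    · have hB0 : (Bᵀ * X * B) *ᵥ v = 0 := by
        rw [← mulVec_mulVec v (Bᵀ * X) B, ← mulVec_mulVec (B *ᵥ v) Bᵀ X, hXu, mulVec_zero]
      have hvv := hv
      rw [hRX, add_mulVec, hB0, add_zero] at hvv
      exact hvv
  · rintro ⟨hXB, hRv⟩
    show (R + Bᵀ * X * B) *ᵥ v = 0
    rw [add_mulVec, hRv, zero_add, Matrix.mul_assoc, ← mulVec_mulVec, hXB, mulVec_zero]
end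

section
/- Assume the Popov matrix Π = [[Q, S],[Sᵀ, R]] is positive semidefinite. If X₁ and X₂ are two symmetric solutions of CGDARE(Σ), then ker R_{X₁} = ker R_{X₂}; that is, for every v ∈ ℝ^m, (R + BᵀX₁B) v = 0 if and only if (R + BᵀX₂B) v = 0. -/
open Matrix Polynomial
open scoped ComplexOrder

noncomputable section

/-- real to complex matrix map -/
def cmap {k l : Type*} (M : Matrix k l ℝ) : Matrix k l ℂ :=
  M.map (Complex.ofRealHom : ℝ →+* ℂ)

lemma cmap_mul {a b c : Type*} [Fintype b] (M : Matrix a b ℝ) (N : Matrix b c ℝ) :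
    cmap (M * N) = cmap M * cmap N := Matrix.map_mul

lemma cmap_add {a b : Type*} (M N : Matrix a b ℝ) :
    cmap (M + N) = cmap M + cmap N := Matrix.map_add _ (by simp) _ _

lemma cmap_sub {a b : Type*} (M N : Matrix a b ℝ) :
    cmap (M - N) = cmap M - cmap N := Matrix.map_sub _ (by simp) _ _

lemma cmap_transpose {a b : Type*} (M : Matrix a b ℝ) :
    cmap Mᵀ = (cmap M)ᴴ := by
  ext i j
  simp [cmap, Matrix.conjTranspose_apply, Complex.conj_ofReal]

lemma cmap_mulVec {a b : Type*} [Fintype b] (M : Matrix a b ℝ) (v : b → ℝ) :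
    cmap M *ᵥ (fun i => (v i : ℂ)) = fun i => (((M *ᵥ v) i : ℝ) : ℂ) := by
  funext i
  exact (RingHom.map_mulVec Complex.ofRealHom M v i).symm

lemma cmap_psd {k : Type*} [Fintype k] {M : Matrix k k ℝ} (hM : M.PosSemidef) :
    (cmap M).PosSemidef := by
  obtain ⟨C, hC⟩ : ∃ C : Matrix k k ℝ, M = Cᴴ * C := by
    classical
    open scoped MatrixOrder in
    obtain ⟨C, hC⟩ := CStarAlgebra.nonneg_iff_eq_star_mul_self.mp hM.nonneg
    exact ⟨C, hC⟩
  have h2 : cmap Cᴴ = (cmap C)ᴴ := by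
    ext i j
    simp [cmap, Matrix.conjTranspose_apply, Complex.conj_ofReal]
  have : cmap M = (cmap C)ᴴ * cmap C := by rw [hC, cmap_mul, h2]
  rw [this]
  exact Matrix.posSemidef_conjTranspose_mul_self _



lemma quad_id {A X : Matrix (Fin n) (Fin n) ℂ} {K : Matrix (Fin m) (Fin n) ℂ} {B : Matrix (Fin n) (Fin m) ℂ}
    {QQ : Matrix (Fin n) (Fin n) ℂ} {SS : Matrix (Fin n) (Fin m) ℂ}
    {SSc : Matrix (Fin m) (Fin n) ℂ} {RR RX : Matrix (Fin m) (Fin m) ℂ}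
    (hQ : QQ = X - Aᴴ * X * A + Kᴴ * RX * K)
    (hS : SS = Kᴴ * RX - Aᴴ * X * B)
    (hS' : SSc = RX * K - Bᴴ * X * A)
    (hR : RR = RX - Bᴴ * X * B)
    (x : Fin n → ℂ) (u : Fin m → ℂ) :
    star (Sum.elim x u) ⬝ᵥ ((fromBlocks QQ SS SSc RR) *ᵥ Sum.elim x u)
      = star x ⬝ᵥ (X *ᵥ x) - star (A *ᵥ x + B *ᵥ u) ⬝ᵥ (X *ᵥ (A *ᵥ x + B *ᵥ u))
        + star (K *ᵥ x + u) ⬝ᵥ (RX *ᵥ (K *ᵥ x + u)) := by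
  subst hQ hS hS' hR
  simp only [Matrix.fromBlocks_mulVec, Function.star_sumElim, Sum.elim_comp_inl,
    Sum.elim_comp_inr, sumElim_dotProduct_sumElim, Matrix.add_mulVec,
    Matrix.sub_mulVec, Matrix.mulVec_add, Matrix.mulVec_sub, dotProduct_add, dotProduct_sub,
    add_dotProduct, sub_dotProduct, star_add, Matrix.star_mulVec, Matrix.dotProduct_mulVec,
    Matrix.vecMul_vecMul, Matrix.add_vecMul, Matrix.sub_vecMul, Matrix.conjTranspose_mul,
    Matrix.conjTranspose_conjTranspose, ← Matrix.vecMul_vecMul]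
  ring



lemma charmatrix_map_eval (M : Matrix (Fin n) (Fin n) ℂ) (z : ℂ) :
    (charmatrix M).map (eval z) = z • (1 : Matrix (Fin n) (Fin n) ℂ) - M := by
  ext i j
  by_cases h : i = j <;>
    simp [h, charmatrix_apply, Matrix.one_apply, Matrix.smul_apply, Matrix.sub_apply,
      Matrix.diagonal_apply]

lemma det_smul_one_sub (M : Matrix (Fin n) (Fin n) ℂ) (z : ℂ) :
    (z • (1 : Matrix (Fin n) (Fin n) ℂ) - M).det = eval z M.charpoly := by
  rw [Matrix.charpoly, ← charmatrix_map_eval M z]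
  exact (RingHom.map_det (evalRingHom z) (charmatrix M)).symm

lemma adjugate_map_eval (M : Matrix (Fin n) (Fin n) ℂ) (z : ℂ) :
    (adjugate (charmatrix M)).map (eval z)
      = adjugate (z • (1 : Matrix (Fin n) (Fin n) ℂ) - M) := by
  rw [← charmatrix_map_eval M z]
  exact RingHom.map_adjugate (evalRingHom z) (charmatrix M)

lemma natDegree_adjugate_charmatrix_lt (M : Matrix (Fin n) (Fin n) ℂ) (i j : Fin n) :
    (adjugate (charmatrix M) i j).natDegree < n := by
  have hpos : 0 < n := i.pos
  rw [Matrix.adjugate_apply, Matrix.det_apply']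
  refine lt_of_le_of_lt (natDegree_sum_le_of_forall_le _ _ fun σ _ => ?_) (Nat.sub_lt hpos one_pos)
  refine (natDegree_mul_le).trans ?_
  have hsign : (Equiv.Perm.sign σ : ℂ[X]).natDegree = 0 := by
    rcases Int.units_eq_one_or (Equiv.Perm.sign σ) with h | h <;> simp [h]
  rw [hsign, zero_add]
  -- bound the product
  set N := (charmatrix M).updateRow j (Pi.single i 1) with hN
  have hprod : (∏ k, N (σ k) k) = N (σ (σ⁻¹ j)) (σ⁻¹ j) * ∏ k ∈ Finset.univ.erase (σ⁻¹ j), N (σ k) k :=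
    (Finset.mul_prod_erase Finset.univ (fun k => N (σ k) k) (Finset.mem_univ (σ⁻¹ j))).symm
  rw [hprod]
  refine natDegree_mul_le.trans ?_
  have h1 : (N (σ (σ⁻¹ j)) (σ⁻¹ j)).natDegree = 0 := by
    rw [show σ (σ⁻¹ j) = j by simp, hN, Matrix.updateRow_self]
    by_cases h : σ⁻¹ j = i <;> simp only [Pi.single_apply, h] <;> simp
  rw [h1, zero_add]
  refine (natDegree_prod_le _ _).trans ?_
  have h2 : ∀ k ∈ Finset.univ.erase (σ⁻¹ j), (N (σ k) k).natDegree ≤ 1 := by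
    intro k hk
    have hkj : σ k ≠ j := by
      intro hc
      exact (Finset.mem_erase.mp hk).1 (by rw [← hc]; simp)
    rw [hN, Matrix.updateRow_ne hkj]
    by_cases h : σ k = k
    · rw [h, charmatrix_apply_eq]
      exact (natDegree_X_sub_C _).le
    · rw [charmatrix_apply_ne _ _ _ h]
      simp
  refine (Finset.sum_le_card_nsmul _ _ 1 h2).trans ?_
  simp [Finset.card_erase_of_mem]

lemma resolvent_vanish (M : Matrix (Fin n) (Fin n) ℂ) (N : Matrix (Fin m) (Fin n) ℂ)
    (w : Fin n → ℂ) (c : Fin m → ℂ) (T : Set ℂ) (hT : T.Infinite)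
    (h : ∀ z ∈ T, (z • (1 : Matrix (Fin n) (Fin n) ℂ) - M).det ≠ 0 ∧
      c = N *ᵥ ((z • (1 : Matrix (Fin n) (Fin n) ℂ) - M)⁻¹ *ᵥ w)) : c = 0 := by
  set Adj := adjugate (charmatrix M) with hAdj
  set p : Fin m → ℂ[X] := fun j => ∑ k, ∑ l, C (N j k) * Adj k l * C (w l) with hp
  have keyz : ∀ z ∈ T, ∀ j, eval z (C (c j) * M.charpoly - p j) = 0 := by
    intro z hz j
    obtain ⟨hdet, hc⟩ := h z hz
    -- c = N *ᵥ (det⁻¹ • (adjugate *ᵥ w))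
    have hinv : (z • (1 : Matrix (Fin n) (Fin n) ℂ) - M)⁻¹
        = ((z • (1 : Matrix (Fin n) (Fin n) ℂ) - M).det)⁻¹ •
            adjugate (z • (1 : Matrix (Fin n) (Fin n) ℂ) - M) := by
      rw [Matrix.inv_def, Ring.inverse_eq_inv]
    have hc2 : (z • (1 : Matrix (Fin n) (Fin n) ℂ) - M).det • c
        = N *ᵥ (adjugate (z • (1 : Matrix (Fin n) (Fin n) ℂ) - M) *ᵥ w) := by
      rw [hc, hinv, Matrix.smul_mulVec, Matrix.mulVec_smul, smul_smul,
        mul_inv_cancel₀ hdet, one_smul]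
    have hcj := congrFun hc2 j
    simp only [Pi.smul_apply, smul_eq_mul] at hcj
    have hev : eval z (p j) = (N *ᵥ (adjugate (z • (1 : Matrix (Fin n) (Fin n) ℂ) - M) *ᵥ w)) j := by
      rw [← adjugate_map_eval M z]
      simp only [hp, eval_finset_sum, eval_mul, eval_C, Matrix.mulVec, dotProduct,
        Matrix.map_apply, Finset.mul_sum, Finset.sum_mul]
      congr 1
      ext k
      congr 1
      ext l
      ring
    rw [eval_sub, eval_mul, eval_C, ← det_smul_one_sub, hev, ← hcj]
    ring
  have hzero : ∀ j, C (c j) * M.charpoly - p j = 0 := by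
    intro j
    refine Polynomial.eq_zero_of_infinite_isRoot _ (hT.mono ?_)
    intro z hz
    exact keyz z hz j
  funext j
  have hcoeff := congrArg (fun q => Polynomial.coeff q n) (hzero j)
  simp only [coeff_sub, coeff_zero] at hcoeff
  have hchar : (M.charpoly).coeff n = 1 := by
    have hmon := Matrix.charpoly_monic M
    have hdeg : (M.charpoly).natDegree = n := by
      rw [Matrix.charpoly_natDegree_eq_dim]; simp
    have := hmon.coeff_natDegree
    rwa [hdeg] at this
  have hpj : (p j).coeff n = 0 := by
    simp only [hp, finset_sum_coeff, coeff_mul_C, coeff_C_mul]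
    refine Finset.sum_eq_zero fun k _ => Finset.sum_eq_zero fun l _ => ?_
    rw [Polynomial.coeff_eq_zero_of_natDegree_lt (natDegree_adjugate_charmatrix_lt M k l)]
    ring
  rw [coeff_C_mul, hchar, mul_one, hpj, sub_zero] at hcoeff
  simpa using hcoeff

def mu (t : ℝ) : ℂ := (1 + t * Complex.I) / (1 - t * Complex.I)

lemma mu_denom_ne (t : ℝ) : (1 - (t : ℂ) * Complex.I) ≠ 0 := by
  intro h
  have := congrArg Complex.re h
  simp [Complex.sub_re, Complex.mul_re] at this

lemma mu_num_ne (t : ℝ) : (1 + (t : ℂ) * Complex.I) ≠ 0 := by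
  intro h
  have := congrArg Complex.re h
  simp [Complex.add_re, Complex.mul_re] at this

lemma mu_unit (t : ℝ) : star (mu t) * mu t = 1 := by
  have h1 := mu_num_ne t
  have h2 := mu_denom_ne t
  have hstar : star (mu t) = (1 - (t : ℂ) * Complex.I) / (1 + (t : ℂ) * Complex.I) := by
    simp [mu, Complex.star_def, map_div₀, _root_.map_add, _root_.map_sub, _root_.map_mul, Complex.conj_I,
      Complex.conj_ofReal]
    ring
  rw [hstar, mu]
  field_simp

lemma mu_inj : Function.Injective mu := by
  intro a b h
  rw [mu, mu, div_eq_div_iff (mu_denom_ne a) (mu_denom_ne b)] at h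
  have h3 : (2 * (a : ℂ) - 2 * b) * Complex.I = 0 := by linear_combination h
  rcases mul_eq_zero.mp h3 with h4 | h4
  · have : (a : ℂ) = b := by linear_combination h4 / 2
    exact_mod_cast this
  · exact absurd h4 Complex.I_ne_zero

lemma exists_good_mu (χ : Polynomial ℂ) (hχ : χ ≠ 0) :
    ∃ z : ℂ, star z * z = 1 ∧ ¬ χ.IsRoot z := by
  have hinf := Set.infinite_range_of_injective mu_inj
  have hfin := Polynomial.finite_setOf_isRoot hχ
  obtain ⟨z, hz⟩ := (hinf.diff hfin).nonempty
  obtain ⟨⟨t, rfl⟩, hnr⟩ := hz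
  exact ⟨mu t, mu_unit t, hnr⟩

lemma infinite_good_mu (χ : Polynomial ℂ) (hχ : χ ≠ 0) :
    ((Set.range mu) \ {z | χ.IsRoot z}).Infinite :=
  (Set.infinite_range_of_injective mu_inj).diff (Polynomial.finite_setOf_isRoot hχ)

variable {n m : ℕ}

lemma psd_of_quad {Pi : Matrix (Fin n ⊕ Fin m) (Fin n ⊕ Fin m) ℂ} (hPi : Pi.PosSemidef)
    {A X : Matrix (Fin n) (Fin n) ℂ} {K : Matrix (Fin m) (Fin n) ℂ}
    {B : Matrix (Fin n) (Fin m) ℂ} {RX : Matrix (Fin m) (Fin m) ℂ}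
    (hq : ∀ (x : Fin n → ℂ) (u : Fin m → ℂ),
      star (Sum.elim x u) ⬝ᵥ (Pi *ᵥ Sum.elim x u)
        = star x ⬝ᵥ (X *ᵥ x) - star (A *ᵥ x + B *ᵥ u) ⬝ᵥ (X *ᵥ (A *ᵥ x + B *ᵥ u))
          + star (K *ᵥ x + u) ⬝ᵥ (RX *ᵥ (K *ᵥ x + u)))
    (w : Fin m → ℂ) : 0 ≤ star w ⬝ᵥ (RX *ᵥ w) := by
  obtain ⟨z, hzu, hzr⟩ := exists_good_mu (A - B * K).charpoly (Matrix.charpoly_monic _).ne_zero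
  set M := z • (1 : Matrix (Fin n) (Fin n) ℂ) - (A - B * K) with hM
  have hdet : M.det ≠ 0 := by
    rw [hM, det_smul_one_sub]
    exact hzr
  have hdetu : IsUnit M.det := isUnit_iff_ne_zero.mpr hdet
  set x := M⁻¹ *ᵥ (B *ᵥ w) with hx
  set u := w - K *ᵥ x with hu
  have hMx : M *ᵥ x = B *ᵥ w := by
    rw [hx, Matrix.mulVec_mulVec, Matrix.mul_nonsing_inv _ hdetu, Matrix.one_mulVec]
  have hKxu : K *ᵥ x + u = w := by rw [hu]; abel
  have hAxu : A *ᵥ x + B *ᵥ u = z • x := by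
    have h1 : M *ᵥ x = z • x - (A *ᵥ x - (B * K) *ᵥ x) := by
      rw [hM, Matrix.sub_mulVec, Matrix.sub_mulVec, Matrix.smul_mulVec,
        Matrix.one_mulVec]
    have h2 : B *ᵥ u = B *ᵥ w - (B * K) *ᵥ x := by
      rw [hu, Matrix.mulVec_sub, Matrix.mulVec_mulVec]
    rw [h2, ← hMx, h1]
    abel
  have hpos := hPi.dotProduct_mulVec_nonneg (Sum.elim x u)
  rw [hq x u, hAxu, hKxu] at hpos
  have hsm : star (z • x) ⬝ᵥ (X *ᵥ (z • x)) = (star z * z) * (star x ⬝ᵥ (X *ᵥ x)) := by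
    rw [star_smul, Matrix.mulVec_smul, smul_dotProduct, dotProduct_smul, smul_eq_mul,
      smul_eq_mul]
    ring
  rw [hsm, hzu, one_mul] at hpos
  simpa using hpos

lemma ker_step {Pi : Matrix (Fin n ⊕ Fin m) (Fin n ⊕ Fin m) ℂ} (hPi : Pi.PosSemidef)
    {A X1 X2 : Matrix (Fin n) (Fin n) ℂ} {K1 K2 : Matrix (Fin m) (Fin n) ℂ}
    {B : Matrix (Fin n) (Fin m) ℂ} {R1 R2 : Matrix (Fin m) (Fin m) ℂ}
    (hq1 : ∀ (x : Fin n → ℂ) (u : Fin m → ℂ),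
      star (Sum.elim x u) ⬝ᵥ (Pi *ᵥ Sum.elim x u)
        = star x ⬝ᵥ (X1 *ᵥ x) - star (A *ᵥ x + B *ᵥ u) ⬝ᵥ (X1 *ᵥ (A *ᵥ x + B *ᵥ u))
          + star (K1 *ᵥ x + u) ⬝ᵥ (R1 *ᵥ (K1 *ᵥ x + u)))
    (hq2 : ∀ (x : Fin n → ℂ) (u : Fin m → ℂ),
      star (Sum.elim x u) ⬝ᵥ (Pi *ᵥ Sum.elim x u)
        = star x ⬝ᵥ (X2 *ᵥ x) - star (A *ᵥ x + B *ᵥ u) ⬝ᵥ (X2 *ᵥ (A *ᵥ x + B *ᵥ u))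
          + star (K2 *ᵥ x + u) ⬝ᵥ (R2 *ᵥ (K2 *ᵥ x + u)))
    (hpsd2 : R2.PosSemidef)
    (v : Fin m → ℂ) (hv : R1 *ᵥ v = 0) : R2 *ᵥ v = 0 := by
  set χ := (A - B * K1).charpoly with hχ
  set T := (Set.range mu) \ {z | χ.IsRoot z} with hT
  have hTinf : T.Infinite := infinite_good_mu χ (Matrix.charpoly_monic _).ne_zero
  -- first show: for each z in T, R2 *ᵥ v = (R2 * (K1 - K2)) *ᵥ ((z•1 - (A - B*K1))⁻¹ *ᵥ (B *ᵥ v))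
  have main : ∀ z ∈ T, (z • (1 : Matrix (Fin n) (Fin n) ℂ) - (A - B * K1)).det ≠ 0 ∧
      R2 *ᵥ v = (R2 * (K1 - K2)) *ᵥ
        ((z • (1 : Matrix (Fin n) (Fin n) ℂ) - (A - B * K1))⁻¹ *ᵥ (B *ᵥ v)) := by
    rintro z ⟨⟨t, rfl⟩, hzr⟩
    have hzu : star (mu t) * mu t = 1 := mu_unit t
    set z := mu t
    set M := z • (1 : Matrix (Fin n) (Fin n) ℂ) - (A - B * K1) with hM
    have hdet : M.det ≠ 0 := by
      rw [hM, det_smul_one_sub]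
      exact hzr
    refine ⟨hdet, ?_⟩
    have hdetu : IsUnit M.det := isUnit_iff_ne_zero.mpr hdet
    set x := M⁻¹ *ᵥ (B *ᵥ v) with hx
    set u := v - K1 *ᵥ x with hu
    have hMx : M *ᵥ x = B *ᵥ v := by
      rw [hx, Matrix.mulVec_mulVec, Matrix.mul_nonsing_inv _ hdetu, Matrix.one_mulVec]
    have hKxu : K1 *ᵥ x + u = v := by rw [hu]; abel
    have hAxu : A *ᵥ x + B *ᵥ u = z • x := by
      have h1 : M *ᵥ x = z • x - (A *ᵥ x - (B * K1) *ᵥ x) := by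
        rw [hM, Matrix.sub_mulVec, Matrix.sub_mulVec, Matrix.smul_mulVec,
          Matrix.one_mulVec]
      have h2 : B *ᵥ u = B *ᵥ v - (B * K1) *ᵥ x := by
        rw [hu, Matrix.mulVec_sub, Matrix.mulVec_mulVec]
      rw [h2, ← hMx, h1]
      abel
    have hsm : ∀ (Y : Matrix (Fin n) (Fin n) ℂ),
        star (z • x) ⬝ᵥ (Y *ᵥ (z • x)) = star x ⬝ᵥ (Y *ᵥ x) := by
      intro Y
      rw [star_smul, Matrix.mulVec_smul, smul_dotProduct, dotProduct_smul, smul_eq_mul,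
        smul_eq_mul, ← mul_assoc, hzu, one_mul]
    -- form value is 0 using solution 1
    have h01 := hq1 x u
    rw [hAxu, hKxu, hsm X1, hv, dotProduct_zero, sub_self, add_zero] at h01
    -- so the R2-term vanishes
    have h02 := hq2 x u
    rw [hAxu, hsm X2, h01, sub_self, zero_add] at h02
    have hy : R2 *ᵥ (K2 *ᵥ x + u) = 0 :=
      (hpsd2.dotProduct_mulVec_zero_iff _).mp h02.symm
    have hyv : K2 *ᵥ x + u = v - (K1 - K2) *ᵥ x := by
      rw [hu, Matrix.sub_mulVec]
      abel
    rw [hyv, Matrix.mulVec_sub] at hy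
    have : R2 *ᵥ v = R2 *ᵥ ((K1 - K2) *ᵥ x) := by
      rwa [sub_eq_zero] at hy
    rw [this, Matrix.mulVec_mulVec, hx]
  exact resolvent_vanish (A - B * K1) (R2 * (K1 - K2)) (B *ᵥ v) (R2 *ᵥ v) T hTinf main

lemma real_blocks (A : Matrix (Fin n) (Fin n) ℝ) (B : Matrix (Fin n) (Fin m) ℝ)
    (Q : Matrix (Fin n) (Fin n) ℝ) (S : Matrix (Fin n) (Fin m) ℝ)
    (R : Matrix (Fin m) (Fin m) ℝ) (X : Matrix (Fin n) (Fin n) ℝ)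
    (RXd : Matrix (Fin m) (Fin m) ℝ)
    (hR : Rᵀ = R) (hX : Xᵀ = X)
    (pen1 : (R + Bᵀ * X * B) * RXd * (R + Bᵀ * X * B) = R + Bᵀ * X * B)
    (hG : X = Aᵀ * X * A - (Aᵀ * X * B + S) * RXd * (Aᵀ * X * B + S)ᵀ + Q)
    (hker : ∀ v : Fin m → ℝ, (R + Bᵀ * X * B).mulVec v = 0 → (Aᵀ * X * B + S).mulVec v = 0) :
    ∃ K : Matrix (Fin m) (Fin n) ℝ,
      Q = X - Aᵀ * X * A + Kᵀ * (R + Bᵀ * X * B) * K ∧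
      S = Kᵀ * (R + Bᵀ * X * B) - Aᵀ * X * B ∧
      Sᵀ = (R + Bᵀ * X * B) * K - Bᵀ * X * A ∧
      R = (R + Bᵀ * X * B) - Bᵀ * X * B := by
  set RX := R + Bᵀ * X * B with hRX
  set SX := Aᵀ * X * B + S with hSX
  have hRXt : RXᵀ = RX := by
    rw [hRX, Matrix.transpose_add, hR, Matrix.transpose_mul, Matrix.transpose_mul,
      Matrix.transpose_transpose, hX, Matrix.mul_assoc]
  -- key : SX * RXd * RX = SX
  have hz : SX * (1 - RXd * RX) = 0 := by
    have hcol : ∀ v : Fin m → ℝ, (SX * (1 - RXd * RX)) *ᵥ v = 0 := by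
      intro v
      have hmz : RX * (1 - RXd * RX) = 0 := by
        rw [Matrix.mul_sub, Matrix.mul_one, ← Matrix.mul_assoc, pen1, sub_self]
      have h0 : RX *ᵥ ((1 - RXd * RX) *ᵥ v) = 0 := by
        rw [Matrix.mulVec_mulVec, hmz, Matrix.zero_mulVec]
      have h1 := hker _ h0
      rwa [Matrix.mulVec_mulVec] at h1
    ext i j
    have h2 := congrFun (hcol (Pi.single j 1)) i
    simp only [Matrix.mulVec_single, mul_one, Pi.zero_apply] at h2
    simpa using h2
  have key1 : SX * RXd * RX = SX := by
    rw [Matrix.mul_sub, Matrix.mul_one, sub_eq_zero] at hz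
    rw [Matrix.mul_assoc, ← hz]
  refine ⟨RXdᵀ * SXᵀ, ?_, ?_, ?_, ?_⟩
  · -- Q block
    have hRK : RX * (RXdᵀ * SXᵀ) = SXᵀ := by
      have : RX * (RXdᵀ * SXᵀ) = (SX * RXd * RX)ᵀ := by
        rw [Matrix.transpose_mul, Matrix.transpose_mul, hRXt]
      rw [this, key1]
    have hKRK : (RXdᵀ * SXᵀ)ᵀ * RX * (RXdᵀ * SXᵀ) = SX * RXd * SXᵀ := by
      rw [Matrix.mul_assoc, hRK, Matrix.transpose_mul, Matrix.transpose_transpose,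
        Matrix.transpose_transpose, Matrix.mul_assoc]
    rw [hKRK]
    nth_rewrite 1 [hG]
    abel
  · -- S block
    have hRK : RX * (RXdᵀ * SXᵀ) = SXᵀ := by
      have : RX * (RXdᵀ * SXᵀ) = (SX * RXd * RX)ᵀ := by
        rw [Matrix.transpose_mul, Matrix.transpose_mul, hRXt]
      rw [this, key1]
    have hKR : (RXdᵀ * SXᵀ)ᵀ * RX = SX := by
      have := congrArg Matrix.transpose hRK
      rwa [Matrix.transpose_mul, hRXt, Matrix.transpose_transpose] at this
    rw [hKR, hSX]
    abel
  · -- Sᵀ block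
    have hRK : RX * (RXdᵀ * SXᵀ) = SXᵀ := by
      have : RX * (RXdᵀ * SXᵀ) = (SX * RXd * RX)ᵀ := by
        rw [Matrix.transpose_mul, Matrix.transpose_mul, hRXt]
      rw [this, key1]
    rw [hRK, hSX, Matrix.transpose_add, Matrix.transpose_mul, Matrix.transpose_mul,
      Matrix.transpose_transpose, hX, ← Matrix.mul_assoc]
    abel
  · rw [hRX]
    abel

lemma dir (A : Matrix (Fin n) (Fin n) ℝ) (B : Matrix (Fin n) (Fin m) ℝ)
    (Q : Matrix (Fin n) (Fin n) ℝ) (S : Matrix (Fin n) (Fin m) ℝ)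
    (R : Matrix (Fin m) (Fin m) ℝ)
    (hQ : Qᵀ = Q) (hR : Rᵀ = R)
    (hPi : (Matrix.fromBlocks Q S Sᵀ R).PosSemidef)
    (Xa Xb : Matrix (Fin n) (Fin n) ℝ) (hXa : Xaᵀ = Xa) (hXb : Xbᵀ = Xb)
    (RXad RXbd : Matrix (Fin m) (Fin m) ℝ)
    (pena : (R + Bᵀ * Xa * B) * RXad * (R + Bᵀ * Xa * B) = R + Bᵀ * Xa * B)
    (penb : (R + Bᵀ * Xb * B) * RXbd * (R + Bᵀ * Xb * B) = R + Bᵀ * Xb * B)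
    (hGa : Xa = Aᵀ * Xa * A - (Aᵀ * Xa * B + S) * RXad * (Aᵀ * Xa * B + S)ᵀ + Q)
    (hGb : Xb = Aᵀ * Xb * A - (Aᵀ * Xb * B + S) * RXbd * (Aᵀ * Xb * B + S)ᵀ + Q)
    (hkera : ∀ v : Fin m → ℝ, (R + Bᵀ * Xa * B).mulVec v = 0 → (Aᵀ * Xa * B + S).mulVec v = 0)
    (hkerb : ∀ v : Fin m → ℝ, (R + Bᵀ * Xb * B).mulVec v = 0 → (Aᵀ * Xb * B + S).mulVec v = 0)
    (v : Fin m → ℝ) (hv : (R + Bᵀ * Xa * B).mulVec v = 0) :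
    (R + Bᵀ * Xb * B).mulVec v = 0 := by
  obtain ⟨Ka, bQa, bSa, bSa', bRa⟩ := real_blocks A B Q S R Xa RXad hR hXa pena hGa hkera
  obtain ⟨Kb, bQb, bSb, bSb', bRb⟩ := real_blocks A B Q S R Xb RXbd hR hXb penb hGb hkerb
  -- complexify
  have hPi' : (Matrix.fromBlocks (cmap Q) (cmap S) ((cmap S)ᴴ) (cmap R)).PosSemidef := by
    have h0 := cmap_psd hPi
    have h1 : cmap (Matrix.fromBlocks Q S Sᵀ R)
        = Matrix.fromBlocks (cmap Q) (cmap S) ((cmap S)ᴴ) (cmap R) := by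
      rw [show cmap (Matrix.fromBlocks Q S Sᵀ R)
          = Matrix.fromBlocks (cmap Q) (cmap S) (cmap Sᵀ) (cmap R) from
          Matrix.fromBlocks_map Q S Sᵀ R _, cmap_transpose]
    rwa [h1] at h0
  have cQa : cmap Q = cmap Xa - (cmap A)ᴴ * cmap Xa * cmap A
      + (cmap Ka)ᴴ * (cmap R + (cmap B)ᴴ * cmap Xa * cmap B) * cmap Ka := by
    have := congrArg cmap bQa
    simpa only [cmap_add, cmap_sub, cmap_mul, cmap_transpose] using this
  have cSa : cmap S = (cmap Ka)ᴴ * (cmap R + (cmap B)ᴴ * cmap Xa * cmap B)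
      - (cmap A)ᴴ * cmap Xa * cmap B := by
    have := congrArg cmap bSa
    simpa only [cmap_add, cmap_sub, cmap_mul, cmap_transpose] using this
  have cSa' : (cmap S)ᴴ = (cmap R + (cmap B)ᴴ * cmap Xa * cmap B) * cmap Ka
      - (cmap B)ᴴ * cmap Xa * cmap A := by
    have := congrArg cmap bSa'
    simpa only [cmap_add, cmap_sub, cmap_mul, cmap_transpose] using this
  have cRa : cmap R = (cmap R + (cmap B)ᴴ * cmap Xa * cmap B) - (cmap B)ᴴ * cmap Xa * cmap B := by
    have := congrArg cmap bRa
    simpa only [cmap_add, cmap_sub, cmap_mul, cmap_transpose] using this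
  have cQb : cmap Q = cmap Xb - (cmap A)ᴴ * cmap Xb * cmap A
      + (cmap Kb)ᴴ * (cmap R + (cmap B)ᴴ * cmap Xb * cmap B) * cmap Kb := by
    have := congrArg cmap bQb
    simpa only [cmap_add, cmap_sub, cmap_mul, cmap_transpose] using this
  have cSb : cmap S = (cmap Kb)ᴴ * (cmap R + (cmap B)ᴴ * cmap Xb * cmap B)
      - (cmap A)ᴴ * cmap Xb * cmap B := by
    have := congrArg cmap bSb
    simpa only [cmap_add, cmap_sub, cmap_mul, cmap_transpose] using this
  have cSb' : (cmap S)ᴴ = (cmap R + (cmap B)ᴴ * cmap Xb * cmap B) * cmap Kb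
      - (cmap B)ᴴ * cmap Xb * cmap A := by
    have := congrArg cmap bSb'
    simpa only [cmap_add, cmap_sub, cmap_mul, cmap_transpose] using this
  have cRb : cmap R = (cmap R + (cmap B)ᴴ * cmap Xb * cmap B) - (cmap B)ᴴ * cmap Xb * cmap B := by
    have := congrArg cmap bRb
    simpa only [cmap_add, cmap_sub, cmap_mul, cmap_transpose] using this
  have hqa := fun x u => quad_id cQa cSa cSa' cRa x u
  have hqb := fun x u => quad_id cQb cSb cSb' cRb x u
  -- positive semidefiniteness of complexified R_{Xb}
  have hherm : (cmap R + (cmap B)ᴴ * cmap Xb * cmap B).IsHermitian := by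
    have h1 : (R + Bᵀ * Xb * B)ᵀ = R + Bᵀ * Xb * B := by
      rw [Matrix.transpose_add, hR, Matrix.transpose_mul, Matrix.transpose_mul,
        Matrix.transpose_transpose, hXb, Matrix.mul_assoc]
    have h2 := congrArg cmap h1
    simpa only [cmap_add, cmap_sub, cmap_mul, cmap_transpose, Matrix.IsHermitian] using h2
  have hpsdb : (cmap R + (cmap B)ᴴ * cmap Xb * cmap B).PosSemidef :=
    Matrix.PosSemidef.of_dotProduct_mulVec_nonneg hherm fun w => psd_of_quad hPi' hqb w
  -- complexified kernel vector
  have hva : (cmap R + (cmap B)ᴴ * cmap Xa * cmap B) *ᵥ (fun i => (v i : ℂ)) = 0 := by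
    have h1 : cmap (R + Bᵀ * Xa * B) *ᵥ (fun i => (v i : ℂ)) = 0 := by
      rw [cmap_mulVec]
      funext i
      rw [congrFun hv i]
      simp
    simpa only [cmap_add, cmap_mul, cmap_transpose] using h1
  have hres := ker_step hPi' hqa hqb hpsdb (fun i => (v i : ℂ)) hva
  have h2 : cmap (R + Bᵀ * Xb * B) *ᵥ (fun i => (v i : ℂ)) = 0 := by
    simpa only [cmap_add, cmap_mul, cmap_transpose] using hres
  rw [cmap_mulVec] at h2
  funext i
  have := congrFun h2 i
  simpa using this

end

theorem stmt_15 (n m : ℕ)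
    (A : Matrix (Fin n) (Fin n) ℝ) (B : Matrix (Fin n) (Fin m) ℝ)
    (Q : Matrix (Fin n) (Fin n) ℝ) (S : Matrix (Fin n) (Fin m) ℝ)
    (R : Matrix (Fin m) (Fin m) ℝ)
    (hQ : Qᵀ = Q) (hR : Rᵀ = R)
    (hPi : (Matrix.fromBlocks Q S Sᵀ R).PosSemidef)
    (X1 X2 : Matrix (Fin n) (Fin n) ℝ) (hX1 : X1ᵀ = X1) (hX2 : X2ᵀ = X2)
    (RX1d RX2d : Matrix (Fin m) (Fin m) ℝ)
    (pen11 : (R + Bᵀ * X1 * B) * RX1d * (R + Bᵀ * X1 * B) = R + Bᵀ * X1 * B)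
    (pen12 : RX1d * (R + Bᵀ * X1 * B) * RX1d = RX1d)
    (pen13 : ((R + Bᵀ * X1 * B) * RX1d)ᵀ = (R + Bᵀ * X1 * B) * RX1d)
    (pen14 : (RX1d * (R + Bᵀ * X1 * B))ᵀ = RX1d * (R + Bᵀ * X1 * B))
    (pen21 : (R + Bᵀ * X2 * B) * RX2d * (R + Bᵀ * X2 * B) = R + Bᵀ * X2 * B)
    (pen22 : RX2d * (R + Bᵀ * X2 * B) * RX2d = RX2d)
    (pen23 : ((R + Bᵀ * X2 * B) * RX2d)ᵀ = (R + Bᵀ * X2 * B) * RX2d)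
    (pen24 : (RX2d * (R + Bᵀ * X2 * B))ᵀ = RX2d * (R + Bᵀ * X2 * B))
    (hGDARE1 : X1 = Aᵀ * X1 * A - (Aᵀ * X1 * B + S) * RX1d * (Aᵀ * X1 * B + S)ᵀ + Q)
    (hGDARE2 : X2 = Aᵀ * X2 * A - (Aᵀ * X2 * B + S) * RX2d * (Aᵀ * X2 * B + S)ᵀ + Q)
    (hker1 : ∀ v : Fin m → ℝ, (R + Bᵀ * X1 * B).mulVec v = 0 → (Aᵀ * X1 * B + S).mulVec v = 0)
    (hker2 : ∀ v : Fin m → ℝ, (R + Bᵀ * X2 * B).mulVec v = 0 → (Aᵀ * X2 * B + S).mulVec v = 0) :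
    ∀ v : Fin m → ℝ,
      (R + Bᵀ * X1 * B).mulVec v = 0 ↔ (R + Bᵀ * X2 * B).mulVec v = 0 := by
  intro v
  constructor
  · exact fun h =>
      dir A B Q S R hQ hR hPi X1 X2 hX1 hX2 RX1d RX2d pen11 pen21 hGDARE1 hGDARE2 hker1 hker2 v h
  · exact fun h =>
      dir A B Q S R hQ hR hPi X2 X1 hX2 hX1 RX2d RX1d pen21 pen11 hGDARE2 hGDARE1 hker2 hker1 v h
end
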